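/- arXiv:1012.1531 — 6 statements merged into one kernel-verified Lean document; each statement's English description precedes it below -/
import Mathlib

section
/- A finitely generated group G with finite generating set A is automatic if and only if there exist a rational (regular) language L over the alphabet à = A ∪ A⁻¹ whose image under the evaluation map π : Ã* → G is all of G, and a constant k, such that for any two words u, v ∈ L with d(π(u), π(v)) ≤ 1 in the word metric, the paths u and v k-fellow-travel. -/
/-!
Automatic groups: geometric characterization (fellow-traveller property).
-/

/-- Evaluation of a word over the alphabet `S` in the group `G`, via `e : S → G`. -/
def wordEval {G : Type*} [Group G] {S : Type*} (e : S → G) (w : List S) : G :=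
  (w.map e).prod

/-- The word metric on `G` with respect to the (symmetric) generating map `e : S → G`. -/
noncomputable def wordDist {G : Type*} [Group G] {S : Type*} (e : S → G) (g h : G) : ℕ :=
  sInf {n : ℕ | ∃ w : List S, w.length = n ∧ wordEval e w = g⁻¹ * h}

/-- The point reached after `j` steps along the path traced by the word `u`. -/
def pathAt {G : Type*} [Group G] {S : Type*} (e : S → G) (u : List S) (j : ℕ) : G :=
  wordEval e (u.take j)

/-- Two words `k`-fellow-travel if the corresponding paths stay at word-metric
distance at most `k` at each time. -/
def FellowTravel {G : Type*} [Group G] {S : Type*} (e : S → G) (k : ℕ) (u v : List S) : Prop :=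
  ∀ j : ℕ, wordDist e (pathAt e u j) (pathAt e v j) ≤ k

/-- Evaluation of a padded letter (`none` is the padding symbol, evaluating to `1`). -/
def padEval {G : Type*} [Group G] {S : Type*} (e : S → G) : Option S → G
  | none => 1
  | some a => e a

/-- The padded pair-word associated to two words `u`, `v`: the shorter one is
padded at its end with the padding symbol `none`. -/
def padWord {S : Type*} (u v : List S) : List (Option S × Option S) :=
  List.zip (u.map some ++ List.replicate (max u.length v.length - u.length) none)
           (v.map some ++ List.replicate (max u.length v.length - v.length) none)

/-- An automatic structure on the group `G` with (symmetric) generating alphabet `S`,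
`e : S → G` being the evaluation of letters: a finite-state word acceptor `L` whose
language surjects onto `G`, and, for each padded letter `s`, a finite-state
multiplication automaton `M s` recognizing exactly the padded pairs `(u,v)` of accepted
words with `π u = π v · π s`. -/
structure AutomaticStructure (G : Type*) [Group G] (S : Type*) (e : S → G) where
  σL : Type
  instFinL : Fintype σL
  L : DFA S σL
  σM : Option S → Type
  instFinM : ∀ s, Fintype (σM s)
  M : ∀ s : Option S, DFA (Option S × Option S) (σM s)
  surjective : ∀ g : G, ∃ u ∈ L.accepts, wordEval e u = g
  mult : ∀ (s : Option S) (u v : List S), u ∈ L.accepts → v ∈ L.accepts →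
    (padWord u v ∈ (M s).accepts ↔ wordEval e u = wordEval e v * padEval e s)


namespace AutoAux

variable {G : Type*} [Group G] {S : Type*}

/-! ### Basic word evaluation lemmas -/

@[simp] theorem wordEval_nil (e : S → G) : wordEval e ([] : List S) = 1 := rfl

theorem wordEval_append (e : S → G) (x y : List S) :
    wordEval e (x ++ y) = wordEval e x * wordEval e y := by
  simp [wordEval]

@[simp] theorem wordEval_cons (e : S → G) (a : S) (x : List S) :
    wordEval e (a :: x) = e a * wordEval e x := by
  simp [wordEval]

theorem wordEval_concat (e : S → G) (x : List S) (a : S) :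
    wordEval e (x ++ [a]) = wordEval e x * e a := by
  simp [wordEval_append, wordEval]

theorem wordDist_le (e : S → G) {g h : G} {w : List S} (hw : wordEval e w = g⁻¹ * h) {n : ℕ}
    (hn : w.length ≤ n) : wordDist e g h ≤ n :=
  le_trans (Nat.sInf_le ⟨w, rfl, hw⟩) hn

section gen

variable (e : S → G) (hsym : ∀ a : S, ∃ b : S, e b = (e a)⁻¹)
    (hgen : Subgroup.closure (Set.range e) = ⊤)

/-- inverse letter -/
noncomputable def ei (a : S) : S := Classical.choose (hsym a)

theorem ei_spec (a : S) : e (ei e hsym a) = (e a)⁻¹ := Classical.choose_spec (hsym a)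

/-- inverse word -/
noncomputable def invWord (w : List S) : List S := (w.map (ei e hsym)).reverse

@[simp] theorem length_invWord (w : List S) : (invWord e hsym w).length = w.length := by
  simp [invWord]

theorem wordEval_invWord (w : List S) :
    wordEval e (invWord e hsym w) = (wordEval e w)⁻¹ := by
  induction w with
  | nil => simp [invWord]
  | cons a w ih =>
    have : invWord e hsym (a :: w) = invWord e hsym w ++ [ei e hsym a] := by
      simp [invWord]
    rw [this, wordEval_concat, ih, ei_spec e hsym a, wordEval_cons, mul_inv_rev]

include hsym hgen in
theorem exists_word (g : G) : ∃ w : List S, wordEval e w = g := by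
  have hg : g ∈ Subgroup.closure (Set.range e) := by rw [hgen]; trivial
  induction hg using Subgroup.closure_induction with
  | mem x hx => obtain ⟨a, rfl⟩ := hx; exact ⟨[a], by simp⟩
  | one => exact ⟨[], rfl⟩
  | mul x y _ _ hx hy =>
    obtain ⟨w1, rfl⟩ := hx; obtain ⟨w2, rfl⟩ := hy
    exact ⟨w1 ++ w2, (wordEval_append e w1 w2)⟩
  | inv x _ hx =>
    obtain ⟨w, rfl⟩ := hx
    exact ⟨invWord e hsym w, wordEval_invWord e hsym w⟩

include hsym hgen in
theorem exists_word_of_dist_le {g h : G} {n : ℕ} (hd : wordDist e g h ≤ n) :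
    ∃ w : List S, w.length ≤ n ∧ wordEval e w = g⁻¹ * h := by
  have hne : {m : ℕ | ∃ w : List S, w.length = m ∧ wordEval e w = g⁻¹ * h}.Nonempty := by
    obtain ⟨w, hw⟩ := exists_word e hsym hgen (g⁻¹ * h)
    exact ⟨w.length, w, rfl, hw⟩
  obtain ⟨w, hw1, hw2⟩ := Nat.sInf_mem hne
  exact ⟨w, by rw [hw1]; exact hd, hw2⟩

end gen

/-! ### padWord lemmas -/

def pad1 (u v : List S) : List (Option S) :=
  u.map some ++ List.replicate (max u.length v.length - u.length) none

def pad2 (u v : List S) : List (Option S) :=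
  v.map some ++ List.replicate (max u.length v.length - v.length) none

theorem padWord_eq (u v : List S) : padWord u v = (pad1 u v).zip (pad2 u v) := rfl

@[simp] theorem length_pad1 (u v : List S) : (pad1 u v).length = max u.length v.length := by
  simp [pad1]; try omega

@[simp] theorem length_pad2 (u v : List S) : (pad2 u v).length = max u.length v.length := by
  simp [pad2]; try omega

@[simp] theorem length_padWord (u v : List S) :
    (padWord u v).length = max u.length v.length := by
  simp [padWord_eq]

theorem map_fst_padWord (u v : List S) : (padWord u v).map Prod.fst = pad1 u v := by
  rw [padWord_eq]
  exact List.map_fst_zip (by simp)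

theorem map_snd_padWord (u v : List S) : (padWord u v).map Prod.snd = pad2 u v := by
  rw [padWord_eq]
  exact List.map_snd_zip (by simp)

def ext1 (x : List (Option S × Option S)) : List S := (x.map Prod.fst).reduceOption

def ext2 (x : List (Option S × Option S)) : List S := (x.map Prod.snd).reduceOption

theorem ext1_append (x y : List (Option S × Option S)) :
    ext1 (x ++ y) = ext1 x ++ ext1 y := by
  simp [ext1, List.reduceOption_append]

theorem ext2_append (x y : List (Option S × Option S)) :
    ext2 (x ++ y) = ext2 x ++ ext2 y := by
  simp [ext2, List.reduceOption_append]

@[simp] theorem reduceOption_map_some (u : List S) : (u.map some).reduceOption = u := by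
  induction u with
  | nil => rfl
  | cons a u ih => simp [ih]

@[simp] theorem reduceOption_replicate_none (n : ℕ) :
    (List.replicate n (none : Option S)).reduceOption = [] := by
  induction n with
  | zero => rfl
  | succ n ih => simp [List.replicate_succ, ih]

@[simp] theorem reduceOption_pad1 (u v : List S) : (pad1 u v).reduceOption = u := by
  simp [pad1, List.reduceOption_append]

@[simp] theorem reduceOption_pad2 (u v : List S) : (pad2 u v).reduceOption = v := by
  simp [pad2, List.reduceOption_append]

@[simp] theorem ext1_padWord (u v : List S) : ext1 (padWord u v) = u := by
  rw [ext1, map_fst_padWord]; simp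

@[simp] theorem ext2_padWord (u v : List S) : ext2 (padWord u v) = v := by
  rw [ext2, map_snd_padWord]; simp

theorem length_ext1_le (x : List (Option S × Option S)) : (ext1 x).length ≤ x.length := by
  simpa [ext1] using (List.reduceOption_length_le (x.map Prod.fst))

theorem length_ext2_le (x : List (Option S × Option S)) : (ext2 x).length ≤ x.length := by
  simpa [ext2] using (List.reduceOption_length_le (x.map Prod.snd))

theorem take_pad1 (u v : List S) (j : ℕ) :
    ((pad1 u v).take j).reduceOption = u.take j := by
  rw [pad1, List.take_append]
  simp [List.reduceOption_append, List.take_replicate, ← List.map_take]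

theorem take_pad2 (u v : List S) (j : ℕ) :
    ((pad2 u v).take j).reduceOption = v.take j := by
  rw [pad2, List.take_append]
  simp [List.reduceOption_append, List.take_replicate, ← List.map_take]

theorem ext1_take_padWord (u v : List S) (j : ℕ) :
    ext1 ((padWord u v).take j) = u.take j := by
  rw [padWord_eq, ext1, List.zip_eq_zipWith, List.take_zipWith, ← List.zip_eq_zipWith,
    List.map_fst_zip (by simp), take_pad1]

theorem ext2_take_padWord (u v : List S) (j : ℕ) :
    ext2 ((padWord u v).take j) = v.take j := by
  rw [padWord_eq, ext2, List.zip_eq_zipWith, List.take_zipWith, ← List.zip_eq_zipWith,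
    List.map_snd_zip (by simp), take_pad2]

theorem wordEval_padEval_pad1 (e : S → G) (u v : List S) :
    wordEval (padEval e) (pad1 u v) = wordEval e u := by
  rw [pad1, wordEval_append]
  simp [wordEval, padEval, List.map_replicate, Function.comp_def]

theorem wordEval_padEval_pad2 (e : S → G) (u v : List S) :
    wordEval (padEval e) (pad2 u v) = wordEval e v := by
  rw [pad2, wordEval_append]
  simp [wordEval, padEval, List.map_replicate, Function.comp_def]

/-! ### padWord decomposition lemmas -/

theorem padWord_concat_both {u v : List S} (h : u.length = v.length) (a b : S) :
    padWord (u ++ [a]) (v ++ [b]) = padWord u v ++ [(some a, some b)] := by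
  have h1 : pad1 (u ++ [a]) (v ++ [b]) = u.map some ++ [some a] := by
    simp [pad1, h]
  have h2 : pad2 (u ++ [a]) (v ++ [b]) = v.map some ++ [some b] := by
    simp [pad2, h]
  have h3 : pad1 u v = u.map some := by simp [pad1, h]
  have h4 : pad2 u v = v.map some := by simp [pad2, h]
  rw [padWord_eq, padWord_eq, h1, h2, h3, h4, List.zip_append (by simp [h])]
  rfl

theorem padWord_concat_left {u v : List S} (h : v.length ≤ u.length) (a : S) :
    padWord (u ++ [a]) v = padWord u v ++ [(some a, none)] := by
  have h1 : pad1 (u ++ [a]) v = u.map some ++ [some a] := by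
    simp [pad1]
    omega
  have h3 : pad1 u v = u.map some := by simp [pad1]; omega
  have h2 : pad2 (u ++ [a]) v = pad2 u v ++ [none] := by
    simp only [pad2]
    rw [List.append_assoc]
    congr 1
    have : max (u.length + 1) v.length - v.length = (max u.length v.length - v.length) + 1 := by
      omega
    simp only [List.length_append, List.length_singleton, this, List.replicate_succ']
  rw [padWord_eq, padWord_eq, h1, h2, h3,
    List.zip_append (by simp; omega)]
  rfl

theorem padWord_concat_right {u v : List S} (h : u.length ≤ v.length) (b : S) :
    padWord u (v ++ [b]) = padWord u v ++ [(none, some b)] := by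
  have h2 : pad2 u (v ++ [b]) = v.map some ++ [some b] := by
    simp [pad2]; omega
  have h4 : pad2 u v = v.map some := by simp [pad2]; omega
  have h1 : pad1 u (v ++ [b]) = pad1 u v ++ [none] := by
    simp only [pad1]
    rw [List.append_assoc]
    congr 1
    have : max u.length (v.length + 1) - u.length = (max u.length v.length - u.length) + 1 := by
      omega
    simp only [List.length_append, List.length_singleton, this, List.replicate_succ']
  rw [padWord_eq, padWord_eq, h1, h2, h4,
    List.zip_append (by simp; omega)]
  rfl

end AutoAux

namespace AutoAux

open scoped Classical

variable {G : Type*} [Group G] {S : Type*}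

theorem pathAt_of_length_le (e : S → G) {u : List S} {j : ℕ} (h : u.length ≤ j) :
    pathAt e u j = wordEval e u := by
  rw [pathAt, List.take_of_length_le h]

theorem pathAt_append_of_le (e : S → G) {u w : List S} {j : ℕ} (h : j ≤ u.length) :
    pathAt e (u ++ w) j = pathAt e u j := by
  rw [pathAt, pathAt, List.take_append_of_le_length h]

/-! ### The multiplier automaton for the backward direction -/

noncomputable def diffDFA (e : S → G) (D : Set G) (s : Option S) :
    DFA (Option S × Option S) (Option D) where
  step q c := match q with
    | none => none
    | some g =>
      if h : ((padEval e c.1)⁻¹ * (g : G) * padEval e c.2) ∈ D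
      then some ⟨_, h⟩ else none
  start := if h : (1 : G) ∈ D then some ⟨1, h⟩ else none
  accept := {q | ∃ hg : D, q = some hg ∧ (hg : G) = (padEval e s)⁻¹}

theorem diffDFA_step_none (e : S → G) (D : Set G) (s : Option S) (c : Option S × Option S) :
    (diffDFA e D s).step none c = none := rfl

theorem diffDFA_step_some (e : S → G) (D : Set G) (s : Option S) (g : D)
    (c : Option S × Option S) :
    (diffDFA e D s).step (some g) c =
      if h : ((padEval e c.1)⁻¹ * (g : G) * padEval e c.2) ∈ D
      then some ⟨_, h⟩ else none := rfl

theorem diffDFA_start (e : S → G) (D : Set G) (s : Option S) :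
    (diffDFA e D s).start = if h : (1 : G) ∈ D then some ⟨1, h⟩ else none := rfl

theorem diffDFA_sound (e : S → G) (D : Set G) (s : Option S) (x : List (Option S × Option S))
    (q : D) (hq : (diffDFA e D s).evalFrom (diffDFA e D s).start x = some q) :
    (q : G) = (wordEval (padEval e) (x.map Prod.fst))⁻¹ *
      wordEval (padEval e) (x.map Prod.snd) := by
  induction x using List.reverseRecOn generalizing q with
  | nil =>
    rw [DFA.evalFrom_nil, diffDFA_start] at hq
    by_cases h1 : (1 : G) ∈ D
    · rw [dif_pos h1] at hq
      obtain rfl : (⟨1, h1⟩ : D) = q := Option.some_injective _ hq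
      simp
    · rw [dif_neg h1] at hq; exact absurd hq (by simp)
  | append_singleton x c ih =>
    rw [DFA.evalFrom_append_singleton] at hq
    cases hx : (diffDFA e D s).evalFrom (diffDFA e D s).start x with
    | none => rw [hx, diffDFA_step_none] at hq; exact absurd hq (by simp)
    | some g =>
      rw [hx, diffDFA_step_some] at hq
      by_cases h : ((padEval e c.1)⁻¹ * (g : G) * padEval e c.2) ∈ D
      · rw [dif_pos h] at hq
        obtain rfl : (⟨_, h⟩ : D) = q := Option.some_injective _ hq
        have := ih g hx
        simp only [List.map_append, List.map_cons, List.map_nil]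
        rw [wordEval_concat, wordEval_concat, this]
        group
      · rw [dif_neg h] at hq; exact absurd hq (by simp)

theorem diffDFA_complete (e : S → G) (D : Set G) (s : Option S) :
    ∀ (n : ℕ) (u v : List S), max u.length v.length = n →
    (∀ j, j ≤ n → (pathAt e u j)⁻¹ * pathAt e v j ∈ D) →
    ∃ h : (wordEval e u)⁻¹ * wordEval e v ∈ D,
      (diffDFA e D s).evalFrom (diffDFA e D s).start (padWord u v) = some ⟨_, h⟩ := by
  intro n
  induction n with
  | zero =>
    intro u v hn hdiff
    obtain rfl : u = [] := List.length_eq_zero_iff.mp (by omega)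
    obtain rfl : v = [] := List.length_eq_zero_iff.mp (by omega)
    have h1 : (1 : G) ∈ D := by simpa [pathAt] using hdiff 0 le_rfl
    refine ⟨by simpa using h1, ?_⟩
    have hpw : padWord ([] : List S) [] = [] := rfl
    rw [hpw, DFA.evalFrom_nil, diffDFA_start, dif_pos h1]
    congr 1
    exact Subtype.ext (by simp)
  | succ n ih =>
    intro u v hn hdiff
    rcases (by omega : (u.length = n + 1 ∧ v.length ≤ n + 1) ∨ (v.length = n + 1 ∧ u.length ≤ n + 1)) with ⟨hu, hv⟩ | ⟨hv, hu⟩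
    · -- u has length n+1
      obtain ⟨u₀, a, rfl⟩ : ∃ u₀ a, u = u₀ ++ [a] :=
        ⟨u.dropLast, u.getLast (by intro h; simp [h] at hu),
          (List.dropLast_append_getLast _).symm⟩
      have hu₀ : u₀.length = n := by simpa using hu
      by_cases hvn : v.length = n + 1
      · -- both have length n+1
        obtain ⟨v₀, b, rfl⟩ : ∃ v₀ b, v = v₀ ++ [b] :=
          ⟨v.dropLast, v.getLast (by intro h; simp [h] at hvn),
            (List.dropLast_append_getLast _).symm⟩
        have hv₀ : v₀.length = n := by simpa using hvn
        obtain ⟨h₀, hrun⟩ := ih u₀ v₀ (by omega) (fun j hj => by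
          have h1 := pathAt_append_of_le e (u := u₀) (w := [a]) (j := j) (by omega)
          have h2 := pathAt_append_of_le e (u := v₀) (w := [b]) (j := j) (by omega)
          rw [← h1, ← h2]; exact hdiff j (by omega))
        rw [padWord_concat_both (by omega) a b, DFA.evalFrom_append_singleton, hrun,
          diffDFA_step_some]
        have hmem : ((padEval e (some a, some b).1)⁻¹ *
            (((⟨_, h₀⟩ : D) : G)) * padEval e (some a, some b).2) ∈ D := by
          have := hdiff (n + 1) le_rfl
          rw [pathAt_of_length_le e (by simp; omega), pathAt_of_length_le e (by simp; omega)]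
            at this
          simpa [padEval, wordEval_concat, mul_assoc, mul_inv_rev] using this
        rw [dif_pos hmem]
        refine ⟨by simpa [padEval, wordEval_concat, mul_assoc, mul_inv_rev] using hmem, ?_⟩
        congr 1
        refine Subtype.ext ?_
        simp [padEval, wordEval_concat, mul_assoc, mul_inv_rev]
      · -- v is shorter
        have hvn' : v.length ≤ n := by omega
        obtain ⟨h₀, hrun⟩ := ih u₀ v (by omega) (fun j hj => by
          have h1 := pathAt_append_of_le e (u := u₀) (w := [a]) (j := j) (by omega)
          rw [← h1]; exact hdiff j (by omega))
        rw [padWord_concat_left (by omega) a, DFA.evalFrom_append_singleton, hrun,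
          diffDFA_step_some]
        have hmem : ((padEval e (some a, (none : Option S)).1)⁻¹ *
            (((⟨_, h₀⟩ : D) : G)) * padEval e (some a, (none : Option S)).2) ∈ D := by
          have := hdiff (n + 1) le_rfl
          rw [pathAt_of_length_le e (by simp; omega), pathAt_of_length_le e (by omega)] at this
          simpa [padEval, wordEval_concat, mul_assoc, mul_inv_rev] using this
        rw [dif_pos hmem]
        refine ⟨by simpa [padEval, wordEval_concat, mul_assoc, mul_inv_rev] using hmem, ?_⟩
        congr 1
        refine Subtype.ext ?_
        simp [padEval, wordEval_concat, mul_assoc, mul_inv_rev]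
    · -- v has length n+1, u shorter or equal... handle u shorter strictly
      obtain ⟨v₀, b, rfl⟩ : ∃ v₀ b, v = v₀ ++ [b] :=
        ⟨v.dropLast, v.getLast (by intro h; simp [h] at hv),
          (List.dropLast_append_getLast _).symm⟩
      have hv₀ : v₀.length = n := by simpa using hv
      by_cases hun : u.length = n + 1
      · -- both length n+1: same as before
        obtain ⟨u₀, a, rfl⟩ : ∃ u₀ a, u = u₀ ++ [a] :=
          ⟨u.dropLast, u.getLast (by intro h; simp [h] at hun),
            (List.dropLast_append_getLast _).symm⟩
        have hu₀ : u₀.length = n := by simpa using hun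
        obtain ⟨h₀, hrun⟩ := ih u₀ v₀ (by omega) (fun j hj => by
          have h1 := pathAt_append_of_le e (u := u₀) (w := [a]) (j := j) (by omega)
          have h2 := pathAt_append_of_le e (u := v₀) (w := [b]) (j := j) (by omega)
          rw [← h1, ← h2]; exact hdiff j (by omega))
        rw [padWord_concat_both (by omega) a b, DFA.evalFrom_append_singleton, hrun,
          diffDFA_step_some]
        have hmem : ((padEval e (some a, some b).1)⁻¹ *
            (((⟨_, h₀⟩ : D) : G)) * padEval e (some a, some b).2) ∈ D := by
          have := hdiff (n + 1) le_rfl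
          rw [pathAt_of_length_le e (by simp; omega), pathAt_of_length_le e (by simp; omega)]
            at this
          simpa [padEval, wordEval_concat, mul_assoc, mul_inv_rev] using this
        rw [dif_pos hmem]
        refine ⟨by simpa [padEval, wordEval_concat, mul_assoc, mul_inv_rev] using hmem, ?_⟩
        congr 1
        refine Subtype.ext ?_
        simp [padEval, wordEval_concat, mul_assoc, mul_inv_rev]
      · have hun' : u.length ≤ n := by omega
        obtain ⟨h₀, hrun⟩ := ih u v₀ (by omega) (fun j hj => by
          have h2 := pathAt_append_of_le e (u := v₀) (w := [b]) (j := j) (by omega)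
          rw [← h2]; exact hdiff j (by omega))
        rw [padWord_concat_right (by omega) b, DFA.evalFrom_append_singleton, hrun,
          diffDFA_step_some]
        have hmem : ((padEval e ((none : Option S), some b).1)⁻¹ *
            (((⟨_, h₀⟩ : D) : G)) * padEval e ((none : Option S), some b).2) ∈ D := by
          have := hdiff (n + 1) le_rfl
          rw [pathAt_of_length_le e (by omega), pathAt_of_length_le e (by simp; omega)] at this
          simpa [padEval, wordEval_concat, mul_assoc, mul_inv_rev] using this
        rw [dif_pos hmem]
        refine ⟨by simpa [padEval, wordEval_concat, mul_assoc, mul_inv_rev] using hmem, ?_⟩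
        congr 1
        refine Subtype.ext ?_
        simp [padEval, wordEval_concat, mul_assoc, mul_inv_rev]

end AutoAux

namespace AutoAux

variable {G : Type*} [Group G] {S : Type*}

/-! ### Product automaton for the forward direction -/

/-- Step of one component: run `L` on the unpadded part, track whether padding started. -/
def compStep {σ : Type*} (L : DFA S σ) : σ × Bool → Option S → Option (σ × Bool)
  | (p, false), some a => some (L.step p a, false)
  | (p, false), none => some (p, true)
  | (p, true), none => some (p, true)
  | (_, true), some _ => none

theorem compStep_some_false {σ : Type*} (L : DFA S σ) (p : σ) (a : S) :
    compStep L (p, false) (some a) = some (L.step p a, false) := rfl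

theorem compStep_some_true {σ : Type*} (L : DFA S σ) (p : σ) (a : S) :
    compStep L (p, true) (some a) = none := rfl

theorem compStep_none {σ : Type*} (L : DFA S σ) (p : σ) (b : Bool) :
    compStep L (p, b) none = some (p, true) := by cases b <;> rfl

def prodDFA {σ τ : Type*} (L : DFA S σ) (M : DFA (Option S × Option S) τ) :
    DFA (Option S × Option S) (Option ((σ × Bool) × (σ × Bool) × τ)) where
  step q c := match q with
    | none => none
    | some (x, y, m) =>
      if c.1.isNone && c.2.isNone then none
      else match compStep L x c.1, compStep L y c.2 with
        | some x', some y' => some (x', y', M.step m c)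
        | _, _ => none
  start := some ((L.start, false), (L.start, false), M.start)
  accept := {q | ∃ p₁ b₁ p₂ b₂ m, q = some ((p₁, b₁), (p₂, b₂), m) ∧
      p₁ ∈ L.accept ∧ p₂ ∈ L.accept ∧ m ∈ M.accept}

variable {σ τ : Type*} (L : DFA S σ) (M : DFA (Option S × Option S) τ)

theorem prodDFA_step_none (c : Option S × Option S) : (prodDFA L M).step none c = none := rfl

theorem prodDFA_step_some (x y : σ × Bool) (m : τ) (c : Option S × Option S) :
    (prodDFA L M).step (some (x, y, m)) c =
      if c.1.isNone && c.2.isNone then none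
      else match compStep L x c.1, compStep L y c.2 with
        | some x', some y' => some (x', y', M.step m c)
        | _, _ => none := rfl

theorem prodDFA_sound : ∀ (x : List (Option S × Option S))
    (r : (σ × Bool) × (σ × Bool) × τ),
    (prodDFA L M).evalFrom (prodDFA L M).start x = some r →
    x = padWord (ext1 x) (ext2 x) ∧
    r = ((L.eval (ext1 x), decide ((ext1 x).length < x.length)),
         (L.eval (ext2 x), decide ((ext2 x).length < x.length)),
         M.eval x) := by
  intro x
  induction x using List.reverseRecOn with
  | nil =>
    intro r hr
    rw [DFA.evalFrom_nil] at hr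
    obtain rfl : ((L.start, false), (L.start, false), M.start) = r :=
      Option.some_injective _ hr
    exact ⟨rfl, rfl⟩
  | append_singleton x c ih =>
    intro r hr
    rw [DFA.evalFrom_append_singleton] at hr
    cases hx : (prodDFA L M).evalFrom (prodDFA L M).start x with
    | none => rw [hx, prodDFA_step_none] at hr; exact absurd hr (by simp)
    | some r₀ =>
      rw [hx] at hr
      obtain ⟨x1, x2, m⟩ := r₀
      obtain ⟨hpad, hr₀⟩ := ih _ hx
      obtain ⟨rfl, hr₂⟩ := Prod.mk.inj hr₀
      obtain ⟨rfl, rfl⟩ := Prod.mk.inj hr₂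
      have hl1 : (ext1 x).length ≤ x.length := length_ext1_le x
      have hl2 : (ext2 x).length ≤ x.length := length_ext2_le x
      obtain ⟨c1, c2⟩ := c
      rw [prodDFA_step_some] at hr
      cases c1 with
      | none =>
        cases c2 with
        | none => exact absurd hr (by simp)
        | some b =>
          -- second component reads a letter; needs no padding yet in comp 2
          simp only [Option.isNone_some, Option.isNone_none, Bool.true_and, Bool.and_false,
            Bool.false_and, if_neg, Bool.not_eq_true] at hr
          by_cases hb2 : (ext2 x).length < x.length
          · rw [show (decide ((ext2 x).length < x.length)) = true by simpa using hb2] at hr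
            rw [compStep_some_true] at hr
            rw [compStep_none L] at hr
            exact absurd hr (by simp)
          · have hb2' : (ext2 x).length = x.length := by omega
            rw [show (decide ((ext2 x).length < x.length)) = false by simpa using hb2] at hr
            rw [compStep_some_false, compStep_none L] at hr
            obtain rfl := Option.some_injective _ hr
            have he1 : ext1 (x ++ [((none : Option S), some b)]) = ext1 x := by
              rw [ext1_append]; simp [ext1]
            have he2 : ext2 (x ++ [((none : Option S), some b)]) = ext2 x ++ [b] := by
              rw [ext2_append]; simp [ext2]
            have hpad' : x ++ [((none : Option S), some b)] =
                padWord (ext1 x) (ext2 x ++ [b]) := by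
              rw [padWord_concat_right (by omega) b, ← hpad]
            constructor
            · rw [he1, he2, ← hpad']
            · rw [he1, he2]
              simp only [DFA.eval_append_singleton, List.length_append, List.length_singleton]
              congr 3 <;> simp <;> omega
      | some a =>
        -- first component reads a letter; needs no padding yet in comp 1
        by_cases hb1 : (ext1 x).length < x.length
        · rw [show (decide ((ext1 x).length < x.length)) = true by simpa using hb1] at hr
          simp only [Option.isNone_some, Bool.false_and, if_neg, Bool.not_eq_true,
            compStep_some_true] at hr
          exact absurd hr (by simp)
        · have hb1' : (ext1 x).length = x.length := by omega
          rw [show (decide ((ext1 x).length < x.length)) = false by simpa using hb1] at hr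
          simp only [Option.isNone_some, Bool.false_and, if_neg, Bool.not_eq_true,
            compStep_some_false] at hr
          cases c2 with
          | none =>
            rw [compStep_none L] at hr
            obtain rfl := Option.some_injective _ hr
            have he1 : ext1 (x ++ [(some a, (none : Option S))]) = ext1 x ++ [a] := by
              rw [ext1_append]; simp [ext1]
            have he2 : ext2 (x ++ [(some a, (none : Option S))]) = ext2 x := by
              rw [ext2_append]; simp [ext2]
            have hpad' : x ++ [(some a, (none : Option S))] =
                padWord (ext1 x ++ [a]) (ext2 x) := by
              rw [padWord_concat_left (by omega) a, ← hpad]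
            constructor
            · rw [he1, he2, ← hpad']
            · rw [he1, he2]
              simp only [DFA.eval_append_singleton, List.length_append, List.length_singleton]
              congr 3 <;> simp <;> omega
          | some b =>
            by_cases hb2 : (ext2 x).length < x.length
            · rw [show (decide ((ext2 x).length < x.length)) = true by simpa using hb2,
                compStep_some_true] at hr
              exact absurd hr (by simp)
            · have hb2' : (ext2 x).length = x.length := by omega
              rw [show (decide ((ext2 x).length < x.length)) = false by simpa using hb2,
                compStep_some_false] at hr
              obtain rfl := Option.some_injective _ hr
              have he1 : ext1 (x ++ [(some a, some b)]) = ext1 x ++ [a] := by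
                rw [ext1_append]; simp [ext1]
              have he2 : ext2 (x ++ [(some a, some b)]) = ext2 x ++ [b] := by
                rw [ext2_append]; simp [ext2]
              have hpad' : x ++ [(some a, some b)] =
                  padWord (ext1 x ++ [a]) (ext2 x ++ [b]) := by
                rw [padWord_concat_both (by omega) a b, ← hpad]
              constructor
              · rw [he1, he2, ← hpad']
              · rw [he1, he2]
                simp only [DFA.eval_append_singleton, List.length_append, List.length_singleton]
                congr 3 <;> simp <;> omega

end AutoAux

namespace AutoAux

variable {G : Type*} [Group G] {S : Type*}
variable {σ τ : Type*} (L : DFA S σ) (M : DFA (Option S × Option S) τ)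

theorem prodDFA_complete : ∀ (n : ℕ) (u v : List S), max u.length v.length = n →
    (prodDFA L M).evalFrom (prodDFA L M).start (padWord u v) =
      some ((L.eval u, decide (u.length < n)), (L.eval v, decide (v.length < n)),
        M.eval (padWord u v)) := by
  intro n
  induction n with
  | zero =>
    intro u v hn
    obtain rfl : u = [] := List.length_eq_zero_iff.mp (by omega)
    obtain rfl : v = [] := List.length_eq_zero_iff.mp (by omega)
    rfl
  | succ n ih =>
    intro u v hn
    rcases (by omega : (u.length = n + 1 ∧ v.length ≤ n + 1) ∨
        (v.length = n + 1 ∧ u.length ≤ n + 1)) with ⟨hu, hv⟩ | ⟨hv, hu⟩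
    · obtain ⟨u₀, a, rfl⟩ : ∃ u₀ a, u = u₀ ++ [a] :=
        ⟨u.dropLast, u.getLast (by intro h; simp [h] at hu),
          (List.dropLast_append_getLast _).symm⟩
      have hu₀ : u₀.length = n := by simpa using hu
      by_cases hvn : v.length = n + 1
      · obtain ⟨v₀, b, rfl⟩ : ∃ v₀ b, v = v₀ ++ [b] :=
          ⟨v.dropLast, v.getLast (by intro h; simp [h] at hvn),
            (List.dropLast_append_getLast _).symm⟩
        have hv₀ : v₀.length = n := by simpa using hvn
        rw [padWord_concat_both (by omega) a b, DFA.evalFrom_append_singleton,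
          ih u₀ v₀ (by omega), prodDFA_step_some]
        rw [show (decide (u₀.length < n)) = false by simp; omega,
          show (decide (v₀.length < n)) = false by simp; omega]
        simp only [Option.isNone_some, Bool.false_and, Bool.and_false, if_neg,
          Bool.false_eq_true, not_false_eq_true, compStep_some_false]
        rw [show (decide ((u₀ ++ [a]).length < n + 1)) = false by simp; omega,
          show (decide ((v₀ ++ [b]).length < n + 1)) = false by simp; omega]
        simp [padWord_concat_both (show u₀.length = v₀.length by omega) a b]
      · have hvn' : v.length ≤ n := by omega
        rw [padWord_concat_left (by omega) a, DFA.evalFrom_append_singleton,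
          ih u₀ v (by omega), prodDFA_step_some]
        rw [show (decide (u₀.length < n)) = false by simp; omega]
        simp only [Option.isNone_some, Bool.false_and, if_neg, Bool.false_eq_true,
          not_false_eq_true, compStep_some_false, compStep_none]
        rw [show (decide ((u₀ ++ [a]).length < n + 1)) = false by simp; omega,
          show (decide (v.length < n + 1)) = true by simp; omega]
        simp [padWord_concat_left (show v.length ≤ u₀.length by omega) a]
    · by_cases hun : u.length = n + 1
      · obtain ⟨u₀, a, rfl⟩ : ∃ u₀ a, u = u₀ ++ [a] :=
          ⟨u.dropLast, u.getLast (by intro h; simp [h] at hun),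
            (List.dropLast_append_getLast _).symm⟩
        have hu₀ : u₀.length = n := by simpa using hun
        obtain ⟨v₀, b, rfl⟩ : ∃ v₀ b, v = v₀ ++ [b] :=
          ⟨v.dropLast, v.getLast (by intro h; simp [h] at hv),
            (List.dropLast_append_getLast _).symm⟩
        have hv₀ : v₀.length = n := by simpa using hv
        rw [padWord_concat_both (by omega) a b, DFA.evalFrom_append_singleton,
          ih u₀ v₀ (by omega), prodDFA_step_some]
        rw [show (decide (u₀.length < n)) = false by simp; omega,
          show (decide (v₀.length < n)) = false by simp; omega]
        simp only [Option.isNone_some, Bool.false_and, Bool.and_false, if_neg,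
          Bool.false_eq_true, not_false_eq_true, compStep_some_false]
        rw [show (decide ((u₀ ++ [a]).length < n + 1)) = false by simp; omega,
          show (decide ((v₀ ++ [b]).length < n + 1)) = false by simp; omega]
        simp [padWord_concat_both (show u₀.length = v₀.length by omega) a b]
      · have hun' : u.length ≤ n := by omega
        obtain ⟨v₀, b, rfl⟩ : ∃ v₀ b, v = v₀ ++ [b] :=
          ⟨v.dropLast, v.getLast (by intro h; simp [h] at hv),
            (List.dropLast_append_getLast _).symm⟩
        have hv₀ : v₀.length = n := by simpa using hv
        rw [padWord_concat_right (by omega) b, DFA.evalFrom_append_singleton,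
          ih u v₀ (by omega), prodDFA_step_some]
        rw [show (decide (v₀.length < n)) = false by simp; omega]
        simp only [Option.isNone_some, Option.isNone_none, Bool.true_and, Bool.and_false,
          Bool.false_and, if_neg, Bool.false_eq_true, not_false_eq_true,
          compStep_some_false, compStep_none]
        rw [show (decide ((v₀ ++ [b]).length < n + 1)) = false by simp; omega,
          show (decide (u.length < n + 1)) = true by simp; omega]
        simp [padWord_concat_right (show u.length ≤ v₀.length by omega) b]

/-! ### Short accepted continuation from any state on an accepting path -/

theorem exists_short_witness {α σ' : Type*} [Fintype σ'] (P : DFA α σ') (q : σ')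
    (h : ∃ y, P.evalFrom q y ∈ P.accept) :
    ∃ y, y.length < Fintype.card σ' ∧ P.evalFrom q y ∈ P.accept := by
  set T := {m : ℕ | ∃ y : List α, y.length = m ∧ P.evalFrom q y ∈ P.accept} with hT
  have hne : T.Nonempty := by obtain ⟨y, hy⟩ := h; exact ⟨y.length, y, rfl, hy⟩
  obtain ⟨y, hylen, hacc⟩ := Nat.sInf_mem hne
  by_cases hlen : Fintype.card σ' ≤ y.length
  · exfalso
    obtain ⟨qq, a, b, c, hy, hab, hbne, ha, hb, hc⟩ :=
      P.evalFrom_split (s := q) (t := P.evalFrom q y) hlen rfl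
    have hacc' : P.evalFrom q (a ++ c) ∈ P.accept := by
      rw [DFA.evalFrom_of_append, ha, hc]; exact hacc
    have hshort : (a ++ c).length < y.length := by
      have : y.length = a.length + b.length + c.length := by
        rw [hy]; simp [add_assoc]
      have hb0 : 0 < b.length := List.length_pos_iff.mpr hbne
      simp only [List.length_append]; omega
    have := Nat.sInf_le (show (a ++ c).length ∈ T from ⟨a ++ c, rfl, hacc'⟩)
    omega
  · exact ⟨y, by omega, hacc⟩

end AutoAux

namespace AutoAux

variable {G : Type*} [Group G] {S : Type*}

noncomputable def sInv (e : S → G) (hsym : ∀ a : S, ∃ b : S, e b = (e a)⁻¹) :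
    Option S → List S
  | none => []
  | some a => [ei e hsym a]

theorem length_sInv (e : S → G) (hsym : ∀ a : S, ∃ b : S, e b = (e a)⁻¹) (s : Option S) :
    (sInv e hsym s).length ≤ 1 := by cases s <;> simp [sInv]

theorem wordEval_sInv (e : S → G) (hsym : ∀ a : S, ∃ b : S, e b = (e a)⁻¹) (s : Option S) :
    wordEval e (sInv e hsym s) = (padEval e s)⁻¹ := by
  cases s with
  | none => simp [sInv, padEval]
  | some a => simp [sInv, padEval, ei_spec e hsym a]

end AutoAux

open AutoAux in
/-- A finitely generated group `G`, with finite symmetric generating alphabet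
`Ã = S`, is automatic if and only if there exist a regular language `L ⊆ Ã*`
mapping onto `G` and a constant `k` such that any two words `u, v ∈ L` whose
images are at word-metric distance at most `1` `k`-fellow-travel. -/
theorem automatic_iff_regular_fellowTravel
    {G : Type*} [Group G] {S : Type*} [Fintype S] (e : S → G)
    (hsym : ∀ a : S, ∃ b : S, e b = (e a)⁻¹)
    (hgen : Subgroup.closure (Set.range e) = ⊤) :
    Nonempty (AutomaticStructure G S e) ↔
      ∃ L : Language S, L.IsRegular ∧
        (∀ g : G, ∃ u ∈ L, wordEval e u = g) ∧
        ∃ k : ℕ, ∀ u ∈ L, ∀ v ∈ L,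
          wordDist e (wordEval e u) (wordEval e v) ≤ 1 → FellowTravel e k u v := by
  classical
  constructor
  · -- forward: automatic structure gives fellow traveller property
    rintro ⟨A⟩
    haveI := A.instFinL
    letI : ∀ s : Option S, Fintype (A.σM s) := A.instFinM
    refine ⟨A.L.accepts, ⟨A.σL, A.instFinL, A.L, rfl⟩, A.surjective, ?_⟩
    set N : ℕ := Finset.univ.sup
      (fun s : Option S =>
        Fintype.card (Option ((A.σL × Bool) × (A.σL × Bool) × A.σM s))) with hN
    refine ⟨2 * N, ?_⟩
    intro u hu v hv hd
    -- find the padded letter s with π u = π v · π s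
    obtain ⟨w₀, hw₀len, hw₀⟩ := exists_word_of_dist_le e hsym hgen hd
    obtain ⟨s, hs⟩ : ∃ s : Option S, wordEval e u = wordEval e v * padEval e s := by
      match w₀, hw₀len, hw₀ with
      | [], _, hw₀ =>
        refine ⟨none, ?_⟩
        rw [show padEval e none = (1 : G) from rfl, mul_one]
        exact inv_mul_eq_one.mp (hw₀.symm.trans (wordEval_nil e))
      | [a], _, hw₀ =>
        refine ⟨some (ei e hsym a), ?_⟩
        have h1 : (wordEval e u)⁻¹ * wordEval e v = e a := by
          rw [← hw₀]; simp [wordEval]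
        rw [show padEval e (some (ei e hsym a)) = e (ei e hsym a) from rfl, ei_spec e hsym a,
          inv_mul_eq_iff_eq_mul.mp h1]
        group
      | (a :: b :: t), hlen, _ => exact absurd hlen (by simp)
    have hacc : padWord u v ∈ (A.M s).accepts := (A.mult s u v hu hv).mpr hs
    intro j
    set P := prodDFA A.L (A.M s) with hP
    have hfull : P.eval (padWord u v) ∈ P.accept := by
      rw [DFA.eval, prodDFA_complete A.L (A.M s) (max u.length v.length) u v rfl]
      exact ⟨_, _, _, _, _, rfl, hu, hv, hacc⟩
    set x := (padWord u v).take j with hx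
    have hsplit : P.evalFrom (P.evalFrom P.start x) ((padWord u v).drop j) ∈ P.accept := by
      rw [← DFA.evalFrom_of_append, List.take_append_drop]; exact hfull
    obtain ⟨y, hylen, hyacc⟩ := exists_short_witness P (P.evalFrom P.start x) ⟨_, hsplit⟩
    have hxy : P.eval (x ++ y) ∈ P.accept := by
      rw [DFA.eval, DFA.evalFrom_of_append]; exact hyacc
    obtain ⟨p₁, b₁, p₂, b₂, m, hsome, hp₁, hp₂, hm⟩ := hxy
    obtain ⟨hpadxy, hrval⟩ := prodDFA_sound A.L (A.M s) (x ++ y) _ hsome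
    obtain ⟨he₁, he₂⟩ := Prod.mk.inj hrval
    obtain ⟨he₂, he₃⟩ := Prod.mk.inj he₂
    obtain ⟨he₁, -⟩ := Prod.mk.inj he₁
    obtain ⟨he₂, -⟩ := Prod.mk.inj he₂
    set U := ext1 (x ++ y) with hU
    set V := ext2 (x ++ y) with hV
    have hUacc : U ∈ A.L.accepts := by rw [DFA.mem_accepts, ← he₁]; exact hp₁
    have hVacc : V ∈ A.L.accepts := by rw [DFA.mem_accepts, ← he₂]; exact hp₂
    have hMacc : padWord U V ∈ (A.M s).accepts := by
      rw [DFA.mem_accepts, ← hpadxy, ← he₃]; exact hm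
    have hrel2 : wordEval e U = wordEval e V * padEval e s :=
      (A.mult s U V hUacc hVacc).mp hMacc
    have hU' : U = u.take j ++ ext1 y := by
      rw [hU, ext1_append, hx, ext1_take_padWord]
    have hV' : V = v.take j ++ ext2 y := by
      rw [hV, ext2_append, hx, ext2_take_padWord]
    set t₁ := ext1 y
    set t₂ := ext2 y
    have key : pathAt e u j * wordEval e t₁ = pathAt e v j * wordEval e t₂ * padEval e s := by
      have h1 : wordEval e U = pathAt e u j * wordEval e t₁ := by
        rw [hU', wordEval_append]; rfl
      have h2 : wordEval e V = pathAt e v j * wordEval e t₂ := by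
        rw [hV', wordEval_append]; rfl
      rw [← h1, ← h2]; exact hrel2
    have heq : (pathAt e u j)⁻¹ * pathAt e v j
        = wordEval e t₁ * (padEval e s)⁻¹ * (wordEval e t₂)⁻¹ := by
      have hB : pathAt e v j = pathAt e u j * wordEval e t₁ * (padEval e s)⁻¹
          * (wordEval e t₂)⁻¹ := by
        calc pathAt e v j
            = pathAt e v j * wordEval e t₂ * padEval e s * (padEval e s)⁻¹
              * (wordEval e t₂)⁻¹ := by group
          _ = pathAt e u j * wordEval e t₁ * (padEval e s)⁻¹ * (wordEval e t₂)⁻¹ := by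
              rw [← key]
      rw [hB]; group
    have hWeval : wordEval e (t₁ ++ sInv e hsym s ++ invWord e hsym t₂)
        = (pathAt e u j)⁻¹ * pathAt e v j := by
      rw [wordEval_append, wordEval_append, wordEval_sInv, wordEval_invWord, heq]
    apply wordDist_le e hWeval
    have hcard : Fintype.card (Option ((A.σL × Bool) × (A.σL × Bool) × A.σM s)) ≤ N := by
      rw [hN]
      exact Finset.le_sup (f := fun s : Option S =>
        Fintype.card (Option ((A.σL × Bool) × (A.σL × Bool) × A.σM s))) (Finset.mem_univ s)
    have hl₁ : t₁.length ≤ y.length := length_ext1_le y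
    have hl₂ : t₂.length ≤ y.length := length_ext2_le y
    have hsl : (sInv e hsym s).length ≤ 1 := length_sInv e hsym s
    have hNpos : 1 ≤ Fintype.card (Option ((A.σL × Bool) × (A.σL × Bool) × A.σM s)) :=
      Fintype.card_pos
    simp only [List.length_append, length_invWord]
    omega
  · -- backward: regular language with fellow traveller property gives automatic structure
    rintro ⟨L, ⟨σ, hσfin, ML, hML⟩, hsurj, k, hFT⟩
    haveI := hσfin
    set D : Set G := {g | ∃ w : List S, w.length ≤ k ∧ wordEval e w = g} with hD
    have hDfin : D.Finite := by
      apply Set.Finite.subset (Set.Finite.image (fun w : List S => wordEval e w)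
        (List.finite_length_le S k))
      rintro g ⟨w, hw1, hw2⟩
      exact ⟨w, hw1, hw2⟩
    haveI : Fintype ↥D := hDfin.fintype
    let eqv : Option ↥D ≃ Option (Fin (Fintype.card ↥D)) :=
      Equiv.optionCongr (Fintype.equivFin ↥D)
    refine ⟨⟨σ, hσfin, ML, fun _ => Option (Fin (Fintype.card ↥D)), fun _ => inferInstance,
      fun s => DFA.reindex eqv (diffDFA e D s), ?_, ?_⟩⟩
    · intro g
      obtain ⟨u, huL, hue⟩ := hsurj g
      exact ⟨u, by rw [hML]; exact huL, hue⟩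
    · intro s u v hu hv
      have huL : u ∈ L := by rw [← hML]; exact hu
      have hvL : v ∈ L := by rw [← hML]; exact hv
      rw [DFA.accepts_reindex]
      constructor
      · intro hacc
        obtain ⟨hg, hsome, hval⟩ := (DFA.mem_accepts _).mp hacc
        have := diffDFA_sound e D s (padWord u v) hg hsome
        rw [map_fst_padWord, map_snd_padWord, wordEval_padEval_pad1,
          wordEval_padEval_pad2] at this
        have h2 : (wordEval e u)⁻¹ * wordEval e v = (padEval e s)⁻¹ := by
          rw [← this, hval]
        have h3 : wordEval e v * padEval e s = wordEval e u := by
          rw [inv_mul_eq_iff_eq_mul.mp h2]; group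
        exact h3.symm
      · intro hrel
        have hdist1 : wordDist e (wordEval e u) (wordEval e v) ≤ 1 := by
          refine wordDist_le e (w := sInv e hsym s) ?_ (length_sInv e hsym s)
          rw [wordEval_sInv, hrel]; group
        have hft := hFT u huL v hvL hdist1
        obtain ⟨hmem, hrun⟩ := diffDFA_complete e D s (max u.length v.length) u v rfl
          (fun j _ => exists_word_of_dist_le e hsym hgen (hft j))
        refine (DFA.mem_accepts _).mpr ?_
        refine ⟨⟨_, hmem⟩, hrun, ?_⟩
        show (wordEval e u)⁻¹ * wordEval e v = (padEval e s)⁻¹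
        rw [hrel]; group
end

section
/- Every automatic group admits an automatic structure with uniqueness: if G is automatic with generating set A, then there is an automatic structure (L, M) for G such that the evaluation map from the accepted language L(L) to G is a bijection (L(L) is a rational cross-section of G). -/
namespace AutoAux

instance : Fintype Ordering := ⟨⟨{.lt, .eq, .gt}, by decide⟩, by intro x; cases x <;> decide⟩

/-- left-to-right lexicographic comparison of equal-length lists. -/
def lcmp {S : Type*} [LinearOrder S] : List S → List S → Ordering
  | b :: v, a :: u => (compare b a).then (lcmp v u)
  | _, _ => .eq

variable {S : Type*} [LinearOrder S]

@[simp] lemma eq_then (x : Ordering) : Ordering.eq.then x = x := rfl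
@[simp] lemma lt_then (x : Ordering) : Ordering.lt.then x = .lt := rfl
@[simp] lemma gt_then (x : Ordering) : Ordering.gt.then x = .gt := rfl

lemma then_eq_right (x : Ordering) : x.then .eq = x := by cases x <;> rfl

lemma compare_swap' (a b : S) : (compare b a).swap = compare a b := by
  rcases lt_trichotomy a b with h | h | h
  · rw [compare_lt_iff_lt.mpr h, compare_gt_iff_gt.mpr h]; rfl
  · subst h; rw [compare_eq_iff_eq.mpr rfl]; rfl
  · rw [compare_gt_iff_gt.mpr h, compare_lt_iff_lt.mpr h]; rfl

lemma then_assoc (x y z : Ordering) : (x.then y).then z = x.then (y.then z) := by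
  cases x <;> cases y <;> rfl

lemma lcmp_append : ∀ (v u : List S), v.length = u.length → ∀ b a,
    lcmp (v ++ [b]) (u ++ [a]) = (lcmp v u).then (compare b a)
  | [], [], _, b, a => by simp [lcmp, then_eq_right]
  | b' :: v, a' :: u, h, b, a => by
    simp only [List.length_cons, Nat.add_right_cancel_iff] at h
    show (compare b' a').then (lcmp (v ++ [b]) (u ++ [a]))
        = ((compare b' a').then (lcmp v u)).then (compare b a)
    rw [lcmp_append v u h b a, then_assoc]
  | [], a' :: u, h, _, _ => by simp at h
  | b' :: v, [], h, _, _ => by simp at h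

lemma lcmp_lt_iff_lex : ∀ {v u : List S}, v.length = u.length →
    (lcmp v u = .lt ↔ List.Lex (· < ·) v u)
  | [], [], _ => by
    simp only [lcmp]
    exact ⟨fun h => by simp at h, fun h => absurd h (List.not_lex_nil)⟩
  | b :: v, a :: u, h => by
    simp only [List.length_cons, Nat.add_right_cancel_iff] at h
    simp only [lcmp]
    rcases lt_trichotomy b a with hba | hba | hba
    · rw [(compare_lt_iff_lt).mpr hba]
      exact ⟨fun _ => List.Lex.rel hba, fun _ => rfl⟩
    · subst hba
      rw [(compare_eq_iff_eq).mpr rfl]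
      exact (lcmp_lt_iff_lex h).trans (List.lex_cons_iff (r := (· < ·))).symm
    · rw [(compare_gt_iff_gt).mpr hba]
      constructor
      · intro h'; simp at h'
      · intro h'
        exfalso
        cases h' with
        | rel h'' => exact absurd hba (asymm h'')
        | cons _ => exact absurd rfl (ne_of_gt hba)
  | [], a :: u, h => by simp at h
  | b :: v, [], h => by simp at h

lemma lcmp_eq_iff : ∀ {v u : List S}, v.length = u.length → (lcmp v u = .eq ↔ v = u)
  | [], [], _ => by simp [lcmp]
  | b :: v, a :: u, h => by
    simp only [List.length_cons, Nat.add_right_cancel_iff] at h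
    simp only [lcmp]
    rcases lt_trichotomy b a with hba | hba | hba
    · rw [compare_lt_iff_lt.mpr hba]
      simp [ne_of_lt hba]
    · subst hba; rw [compare_eq_iff_eq.mpr rfl]
      simp [lcmp_eq_iff h]
    · rw [compare_gt_iff_gt.mpr hba]
      simp [(ne_of_gt hba)]
  | [], a :: u, h => by simp at h
  | b :: v, [], h => by simp at h

lemma lcmp_swap : ∀ {v u : List S}, v.length = u.length → lcmp u v = (lcmp v u).swap
  | [], [], _ => rfl
  | b :: v, a :: u, h => by
    simp only [List.length_cons, Nat.add_right_cancel_iff] at h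
    simp only [lcmp, Ordering.swap_then, lcmp_swap h, compare_swap']
  | [], a :: u, h => by simp at h
  | b :: v, [], h => by simp at h

/-- shortlex strict order. -/
def slt (v u : List S) : Prop :=
  v.length < u.length ∨ (v.length = u.length ∧ lcmp v u = .lt)

lemma slt_total {u v : List S} (h : u ≠ v) : slt u v ∨ slt v u := by
  rcases Nat.lt_trichotomy u.length v.length with hl | hl | hl
  · exact Or.inl (Or.inl hl)
  · cases hc : lcmp u v with
    | lt => exact Or.inl (Or.inr ⟨hl, hc⟩)
    | eq => exact absurd ((lcmp_eq_iff hl).mp hc) h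
    | gt => exact Or.inr (Or.inr ⟨hl.symm, by rw [lcmp_swap hl, hc]; rfl⟩)
  · exact Or.inr (Or.inl hl)

lemma exists_slt_minimal [Fintype S] (T : Set (List S)) (hne : T.Nonempty) :
    ∃ m ∈ T, ∀ v ∈ T, ¬ slt v m := by
  obtain ⟨w0, hw0⟩ := hne
  have hP : ∃ n, ∃ w ∈ T, w.length = n := ⟨w0.length, w0, hw0, rfl⟩
  classical
  set n₀ := Nat.find hP with hn₀
  obtain ⟨w1, hw1, hw1l⟩ := Nat.find_spec hP
  have hfin : {w : List S | w ∈ T ∧ w.length = n₀}.Finite :=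
    (List.finite_length_eq S n₀).subset (fun w hw => hw.2)
  obtain ⟨m, hm, hmin⟩ := Set.exists_min_image _ id hfin ⟨w1, hw1, hw1l⟩
  refine ⟨m, hm.1, fun v hv hslt => ?_⟩
  rcases hslt with hlen | ⟨hlen, hlt⟩
  · rw [hm.2] at hlen
    exact Nat.find_min hP hlen ⟨v, hv, rfl⟩
  · have : List.Lex (· < ·) v m := (lcmp_lt_iff_lex hlen).mp hlt
    have hvm : v < m := this
    have : v ∈ {w : List S | w ∈ T ∧ w.length = n₀} := ⟨hv, hlen.trans hm.2⟩
    exact absurd hvm (not_lt.mpr (hmin v this))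


/-- the padded pair-word, for `|v| ≤ |u|`, defined by recursion. -/
def pairWord {S : Type*} : List S → List S → List (Option S × Option S)
  | b :: v, a :: u => (some b, some a) :: pairWord v u
  | [], a :: u => (none, some a) :: pairWord [] u
  | _, [] => []

lemma pairWord_nil {S : Type*} : ∀ u : List S, pairWord [] u = u.map (fun a => (none, some a))
  | [] => rfl
  | a :: u => by rw [pairWord, pairWord_nil u]; rfl

lemma pairWord_append_letter {S : Type*} : ∀ (v u : List S), v.length = u.length → ∀ (b a : S),
    pairWord (v ++ [b]) (u ++ [a]) = pairWord v u ++ [(some b, some a)]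
  | [], [], _, b, a => rfl
  | b' :: v, a' :: u, h, b, a => by
    simp only [List.length_cons, Nat.add_right_cancel_iff] at h
    show (some b', some a') :: pairWord (v ++ [b]) (u ++ [a]) = _
    rw [pairWord_append_letter v u h b a]; rfl
  | [], a' :: u, h, _, _ => by simp at h
  | b' :: v, [], h, _, _ => by simp at h

lemma pairWord_append_pad {S : Type*} : ∀ (v u : List S), v.length ≤ u.length → ∀ (a : S),
    pairWord v (u ++ [a]) = pairWord v u ++ [(none, some a)]
  | [], u, _, a => by simp [pairWord_nil]
  | b' :: v, a' :: u, h, a => by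
    simp only [List.length_cons, Nat.add_le_add_iff_right] at h
    show (some b', some a') :: pairWord v (u ++ [a]) = _
    rw [pairWord_append_pad v u h a]; rfl
  | b' :: v, [], h, _ => by simp at h

lemma padWord_eq_pairWord {S : Type*} : ∀ (v u : List S), v.length ≤ u.length →
    padWord v u = pairWord v u
  | [], u, _ => by
    simp only [padWord, pairWord_nil, List.length_nil, List.map_nil, List.nil_append,
      Nat.max_eq_right (Nat.zero_le _), Nat.sub_zero, Nat.sub_self, List.replicate_zero,
      List.append_nil]
    induction u with
    | nil => rfl
    | cons a u ih => simp [List.replicate_succ, List.zip_cons_cons, ih]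
  | b :: v, a :: u, h => by
    simp only [List.length_cons, Nat.add_le_add_iff_right] at h
    have hmax : max (v.length + 1) (u.length + 1) = u.length + 1 := by omega
    have hmax' : max v.length u.length = u.length := by omega
    simp only [padWord, List.length_cons, hmax, List.map_cons, Nat.add_sub_add_right,
      List.cons_append, List.zip_cons_cons]
    rw [pairWord]
    congr 1
    have := padWord_eq_pairWord v u h
    simpa only [padWord, hmax'] using this

section NFA

variable {G : Type*} [Group G] {S : Type*} (e : S → G) [LinearOrder S]
variable (AS : AutomaticStructure G S e)

/-- States: (acceptor state on v, multiplier state on pair word, padding started?, lex status). -/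
abbrev BadState := AS.σL × AS.σM none × Bool × Ordering

/-- NFA accepting the words `u` such that some `v` with `v ∈ L`, `v <_shortlex u`,
`padWord v u ∈ M none` exists: it guesses `v` while reading `u`. -/
def badNFA : NFA S (BadState e AS) where
  step := fun s a =>
    {t | (s.2.2.1 = false ∧ ∃ b : S,
            t = (AS.L.step s.1 b, (AS.M none).step s.2.1 (some b, some a), false,
                 (s.2.2.2).then (compare b a)))
       ∨ t = (s.1, (AS.M none).step s.2.1 (none, some a), true, s.2.2.2)}
  start := {(AS.L.start, (AS.M none).start, false, .eq)}
  accept := {s | s.1 ∈ AS.L.accept ∧ s.2.1 ∈ (AS.M none).accept ∧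
                 (s.2.2.1 = true ∨ s.2.2.2 = .lt)}

/-- the state reached by guessing `v` while reading `u`. -/
def charState (v u : List S) : BadState e AS :=
  (AS.L.evalFrom AS.L.start v,
   (AS.M none).evalFrom (AS.M none).start (pairWord v u),
   decide (v.length < u.length),
   lcmp v (u.take v.length))

lemma badNFA_eval (u : List S) :
    (badNFA e AS).eval u = {s | ∃ v : List S, v.length ≤ u.length ∧ s = charState e AS v u} := by
  induction u using List.reverseRecOn with
  | nil =>
    ext s
    simp only [NFA.eval_nil, badNFA, Set.mem_singleton_iff, Set.mem_setOf_eq]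
    constructor
    · rintro rfl
      exact ⟨[], le_refl _, by simp [charState, pairWord, lcmp]⟩
    · rintro ⟨v, hv, rfl⟩
      rw [List.length_nil, Nat.le_zero, List.length_eq_zero_iff] at hv
      subst hv
      simp [charState, pairWord, lcmp]
  | append_singleton u a ih =>
    ext s
    rw [NFA.eval_append_singleton, NFA.mem_stepSet]
    simp only [ih, Set.mem_setOf_eq]
    constructor
    · rintro ⟨t, ⟨v, hv, rfl⟩, hstep⟩
      simp only [badNFA, charState, Set.mem_setOf_eq] at hstep
      rcases hstep with ⟨hp, b, rfl⟩ | rfl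
      · -- letter step : v' = v ++ [b]
        rw [decide_eq_false_iff_not, not_lt] at hp
        have hlen : v.length = u.length := le_antisymm hv hp
        refine ⟨v ++ [b], by simpa using hv, ?_⟩
        have h1 : u.take v.length = u := by rw [hlen, List.take_length]
        have h2 : (u ++ [a]).take (v.length + 1) = u ++ [a] :=
          List.take_of_length_le (by simp [hlen])
        simp only [charState, List.length_append, List.length_singleton, Prod.mk.injEq]
        refine ⟨?_, ?_, ?_, ?_⟩
        · rw [DFA.evalFrom_append_singleton]
        · rw [pairWord_append_letter v u hlen b a, DFA.evalFrom_append_singleton]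
        · simp [hlen]
        · rw [h1, h2, lcmp_append v u hlen b a]
      · -- padding step
        refine ⟨v, by simpa using Nat.le_succ_of_le hv, ?_⟩
        simp only [charState, List.length_append, List.length_singleton, Prod.mk.injEq,
          true_and]
        refine ⟨?_, ?_, ?_⟩
        · rw [pairWord_append_pad v u hv a, DFA.evalFrom_append_singleton]
        · exact (decide_eq_true (by omega)).symm
        · rw [List.take_append_of_le_length hv]
    · rintro ⟨w, hw, rfl⟩
      rw [List.length_append, List.length_singleton] at hw
      rcases Nat.lt_or_ge w.length (u.length + 1) with hlt | hge
      · -- padding predecessor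
        have hle : w.length ≤ u.length := by omega
        refine ⟨charState e AS w u, ⟨w, hle, rfl⟩, Or.inr ?_⟩
        simp only [charState, List.length_append, List.length_singleton, Prod.mk.injEq,
          true_and]
        refine ⟨?_, ?_, ?_⟩
        · rw [pairWord_append_pad w u hle a, DFA.evalFrom_append_singleton]
        · exact decide_eq_true (by omega)
        · rw [List.take_append_of_le_length hle]
      · -- letter predecessor
        have hlen : w.length = u.length + 1 := by omega
        have hne : w ≠ [] := by intro h; rw [h] at hlen; simp at hlen
        obtain ⟨v, b, rfl⟩ : ∃ v b, w = v ++ [b] :=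
          ⟨w.dropLast, w.getLast hne, (List.dropLast_append_getLast hne).symm⟩
        rw [List.length_append, List.length_singleton] at hlen
        have hlen' : v.length = u.length := by omega
        have h1 : u.take v.length = u := by rw [hlen', List.take_length]
        have h2 : (u ++ [a]).take (v.length + 1) = u ++ [a] :=
          List.take_of_length_le (by simp [hlen'])
        refine ⟨charState e AS v u, ⟨v, le_of_eq hlen', rfl⟩, ?_⟩
        · simp only [badNFA, charState, Set.mem_setOf_eq]
          refine Or.inl ⟨by simp [hlen'], b, ?_⟩
          simp only [List.length_append, List.length_singleton, Prod.mk.injEq]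
          refine ⟨?_, ?_, ?_, ?_⟩
          · rw [DFA.evalFrom_append_singleton]
          · rw [pairWord_append_letter v u hlen' b a, DFA.evalFrom_append_singleton]
          · simp [hlen']
          · rw [h1, h2, lcmp_append v u hlen' b a]


lemma badNFA_accepts_iff (u : List S) :
    u ∈ (badNFA e AS).accepts ↔
      ∃ v, v ∈ AS.L.accepts ∧ slt v u ∧ padWord v u ∈ (AS.M none).accepts := by
  rw [NFA.mem_accepts]
  have heval : (badNFA e AS).evalFrom (badNFA e AS).start u = (badNFA e AS).eval u := rfl
  rw [heval, badNFA_eval e AS u]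
  constructor
  · rintro ⟨s, hacc, v, hlen, rfl⟩
    simp only [badNFA, charState, Set.mem_setOf_eq] at hacc
    obtain ⟨h1, h2, h3⟩ := hacc
    have hslt : slt v u := by
      rcases Nat.lt_or_ge v.length u.length with hl | hl
      · exact Or.inl hl
      · have hl' : v.length = u.length := le_antisymm hlen hl
        rcases h3 with h3 | h3
        · rw [decide_eq_true_eq] at h3; omega
        · rw [hl', List.take_length] at h3
          exact Or.inr ⟨hl', h3⟩
    refine ⟨v, h1, hslt, ?_⟩
    rw [padWord_eq_pairWord v u hlen]
    exact h2
  · rintro ⟨v, hvL, hslt, hpad⟩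
    have hlen : v.length ≤ u.length := by
      rcases hslt with h | ⟨h, _⟩; exacts [le_of_lt h, le_of_eq h]
    refine ⟨charState e AS v u, ?_, v, hlen, rfl⟩
    simp only [badNFA, charState, Set.mem_setOf_eq]
    refine ⟨hvL, ?_, ?_⟩
    · rw [← padWord_eq_pairWord v u hlen]; exact hpad
    · rcases hslt with h | ⟨h, h'⟩
      · exact Or.inl (decide_eq_true h)
      · refine Or.inr ?_
        rw [h, List.take_length]
        exact h'

/-- the acceptor of the shortlex-minimal sublanguage. -/
def goodDFA : DFA S (AS.σL × Set (BadState e AS)) where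
  step := fun p a => (AS.L.step p.1 a, (badNFA e AS).toDFA.step p.2 a)
  start := (AS.L.start, (badNFA e AS).toDFA.start)
  accept := {p | p.1 ∈ AS.L.accept ∧ p.2 ∉ (badNFA e AS).toDFA.accept}

lemma goodDFA_evalFrom (x : List S) : ∀ p,
    (goodDFA e AS).evalFrom p x
      = (AS.L.evalFrom p.1 x, (badNFA e AS).toDFA.evalFrom p.2 x) := by
  induction x with
  | nil => intro p; rfl
  | cons a x ih =>
    intro p
    show (goodDFA e AS).evalFrom ((goodDFA e AS).step p a) x = _
    rw [ih]
    rfl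

lemma goodDFA_accepts (u : List S) :
    u ∈ (goodDFA e AS).accepts ↔
      u ∈ AS.L.accepts ∧ ¬ (∃ v, v ∈ AS.L.accepts ∧ slt v u ∧
        padWord v u ∈ (AS.M none).accepts) := by
  rw [← badNFA_accepts_iff e AS u, ← NFA.toDFA_correct (M := badNFA e AS)]
  rw [DFA.mem_accepts, DFA.mem_accepts, DFA.mem_accepts]
  show (goodDFA e AS).evalFrom (goodDFA e AS).start u ∈ _ ↔ _
  rw [goodDFA_evalFrom]
  exact Iff.rfl

end NFA
end AutoAux

/-- Every automatic group admits an automatic structure with uniqueness: if `G` is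
automatic (with finite symmetric generating alphabet `S`), then there is an automatic
structure whose language of normal forms maps *bijectively* onto `G` (a rational
cross-section); surjectivity being part of the definition, this amounts to injectivity
of the evaluation map on the accepted language. -/
theorem exists_automaticStructure_with_uniqueness
    {G : Type*} [Group G] {S : Type*} [Fintype S] (e : S → G)
    (hsym : ∀ a : S, ∃ b : S, e b = (e a)⁻¹)
    (hgen : Subgroup.closure (Set.range e) = ⊤)
    (h : Nonempty (AutomaticStructure G S e)) :
    ∃ AS : AutomaticStructure G S e,
      ∀ u ∈ AS.L.accepts, ∀ v ∈ AS.L.accepts, wordEval e u = wordEval e v → u = v := by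
  obtain ⟨AS⟩ := h
  letI : LinearOrder S := LinearOrder.lift' (Fintype.equivFin S) (Fintype.equivFin S).injective
  haveI := AS.instFinL
  haveI := AS.instFinM none
  classical
  refine ⟨{
      σL := AS.σL × Set (AutoAux.BadState e AS)
      instFinL := inferInstance
      L := AutoAux.goodDFA e AS
      σM := AS.σM
      instFinM := AS.instFinM
      M := AS.M
      surjective := ?_
      mult := ?_ }, ?_⟩
  · -- surjectivity: pick the shortlex-minimal representative
    intro g
    obtain ⟨u0, hu0, hu0e⟩ := AS.surjective g
    obtain ⟨m, hm, hmin⟩ := AutoAux.exists_slt_minimal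
      {w : List S | w ∈ AS.L.accepts ∧ wordEval e w = g} ⟨u0, hu0, hu0e⟩
    refine ⟨m, ?_, hm.2⟩
    rw [AutoAux.goodDFA_accepts]
    refine ⟨hm.1, ?_⟩
    rintro ⟨v, hvL, hslt, hpad⟩
    have hvm : wordEval e v = wordEval e m := by
      have := (AS.mult none v m hvL hm.1).mp hpad
      simpa [padEval] using this
    exact hmin v ⟨hvL, hvm.trans hm.2⟩ hslt
  · -- multiplication automata: inherited from the original structure
    intro s u v hu hv
    have hu' : u ∈ AS.L.accepts ∧ _ := (AutoAux.goodDFA_accepts e AS u).mp hu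
    have hv' : v ∈ AS.L.accepts ∧ _ := (AutoAux.goodDFA_accepts e AS v).mp hv
    exact AS.mult s u v hu'.1 hv'.1
  · -- injectivity on the accepted language
    intro u hu v hv heq
    have hu' := (AutoAux.goodDFA_accepts e AS u).mp hu
    have hv' := (AutoAux.goodDFA_accepts e AS v).mp hv
    by_contra hne
    rcases AutoAux.slt_total hne with hs | hs
    · refine hv'.2 ⟨u, hu'.1, hs, ?_⟩
      rw [AS.mult none u v hu'.1 hv'.1]
      simpa [padEval] using heq
    · refine hu'.2 ⟨v, hv'.1, hs, ?_⟩
      rw [AS.mult none v u hv'.1 hu'.1]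
      simpa [padEval] using heq.symm
end

section
/- If a finitely generated group G admits a combing, then G is finitely presented; that is, there is a finite subset R of the free group F_A such that G ≅ F_A / ⟨⟨R⟩⟩, the quotient by the normal closure of R. -/
namespace CombingAux

variable {G : Type*} [Group G] {S : Type*}

/-- The tautological word in the free group. -/
def rho (w : List S) : FreeGroup S := (w.map FreeGroup.of).prod

lemma rho_nil : rho ([] : List S) = 1 := rfl

lemma rho_append (u v : List S) : rho (u ++ v) = rho u * rho v := by
  simp [rho]

lemma rho_singleton (a : S) : rho [a] = FreeGroup.of a := by
  simp [rho]

lemma wordEval_nil (e : S → G) : wordEval e [] = 1 := rfl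

lemma wordEval_append (e : S → G) (u v : List S) :
    wordEval e (u ++ v) = wordEval e u * wordEval e v := by
  simp [wordEval]

lemma wordEval_singleton (e : S → G) (a : S) : wordEval e [a] = e a := by
  simp [wordEval]

lemma lift_rho (e : S → G) (u : List S) : FreeGroup.lift e (rho u) = wordEval e u := by
  simp only [rho, wordEval, map_list_prod, List.map_map]
  congr 1
  exact List.map_congr_left fun a _ => by simp

lemma wordEval_reverse_map (e : S → G) (σ : S → S) (hσ : ∀ a, e (σ a) = (e a)⁻¹)
    (u : List S) : wordEval e (u.reverse.map σ) = (wordEval e u)⁻¹ := by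
  induction u with
  | nil => simp [wordEval]
  | cons a u ih =>
    rw [List.reverse_cons, List.map_append]
    rw [wordEval_append, ih]
    simp [wordEval, hσ]

lemma exists_word (e : S → G) (σ : S → S) (hσ : ∀ a, e (σ a) = (e a)⁻¹)
    (hgen : Subgroup.closure (Set.range e) = ⊤) (g : G) :
    ∃ u : List S, wordEval e u = g := by
  have hg : g ∈ Subgroup.closure (Set.range e) := by rw [hgen]; trivial
  induction hg using Subgroup.closure_induction with
  | mem x hx => obtain ⟨a, rfl⟩ := hx; exact ⟨[a], wordEval_singleton e a⟩
  | one => exact ⟨[], rfl⟩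
  | mul x y _ _ hx hy =>
    obtain ⟨u, hu⟩ := hx; obtain ⟨v, hv⟩ := hy
    exact ⟨u ++ v, by rw [wordEval_append, hu, hv]⟩
  | inv x _ hx =>
    obtain ⟨u, hu⟩ := hx
    exact ⟨u.reverse.map σ, by rw [wordEval_reverse_map e σ hσ, hu]⟩

lemma exists_rung (e : S → G) (k : ℕ)
    (hne : ∀ g : G, ∃ u : List S, wordEval e u = g) {g h : G}
    (hk : wordDist e g h ≤ k) :
    ∃ c : List S, c.length ≤ k ∧ wordEval e c = g⁻¹ * h := by
  have hset : {n : ℕ | ∃ w : List S, w.length = n ∧ wordEval e w = g⁻¹ * h}.Nonempty := by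
    obtain ⟨u, hu⟩ := hne (g⁻¹ * h); exact ⟨u.length, u, rfl, hu⟩
  obtain ⟨c, hc1, hc2⟩ := Nat.sInf_mem hset
  exact ⟨c, hc1 ▸ hk, hc2⟩

end CombingAux

open CombingAux

/-- If a finitely generated group `G` (with finite symmetric generating alphabet `S`,
letters evaluating via `e : S → G`) admits a combing — a choice of word `w g`
representing each `g ∈ G` such that `w g` and `w (g·s)` `k`-fellow-travel for every
generator `s` — then `G` is finitely presented: there is a finite set `R ⊆ F_S` of
relators such that the kernel of the evaluation map `F_S → G` is the normal closure
of `R`, i.e. `G ≅ F_S / ⟨⟨R⟩⟩`. -/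
theorem combable_implies_finitely_presented
    {G : Type*} [Group G] {S : Type*} [Fintype S] (e : S → G)
    (hsym : ∀ a : S, ∃ b : S, e b = (e a)⁻¹)
    (hgen : Subgroup.closure (Set.range e) = ⊤)
    (w : G → List S) (hw : ∀ g : G, wordEval e (w g) = g)
    (k : ℕ) (hcomb : ∀ (g : G) (s : S), FellowTravel e k (w g) (w (g * e s))) :
    ∃ R : Set (FreeGroup S), R.Finite ∧
      (FreeGroup.lift e).ker = Subgroup.normalClosure R := by
  classical
  choose σ hσ using hsym
  set φ : FreeGroup S →* G := FreeGroup.lift e with hφ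
  have hword : ∀ g : G, ∃ u : List S, wordEval e u = g := exists_word e σ hσ hgen
  -- the finite set of relators
  set R : Set (FreeGroup S) :=
    {r | φ r = 1 ∧ ∃ x y : List S, x.length + y.length ≤ 2 * k + 2 ∧ rho x * (rho y)⁻¹ = r}
    with hRdef
  refine ⟨R, ?_, ?_⟩
  · -- finiteness
    have hsub : R ⊆ (fun p : List S × List S => rho p.1 * (rho p.2)⁻¹) ''
        ({l : List S | l.length ≤ 2 * k + 2} ×ˢ {l : List S | l.length ≤ 2 * k + 2}) := by
      rintro r ⟨-, x, y, hl, rfl⟩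
      exact ⟨(x, y), ⟨le_trans (Nat.le_add_right _ _) hl,
        le_trans (Nat.le_add_left _ _) hl⟩, rfl⟩
    exact Set.Finite.subset (Set.Finite.image _
      ((List.finite_length_le S (2 * k + 2)).prod (List.finite_length_le S (2 * k + 2)))) hsub
  · -- kernel = normal closure
    set N : Subgroup (FreeGroup S) := Subgroup.normalClosure R with hN
    set q : FreeGroup S →* FreeGroup S ⧸ N := QuotientGroup.mk' N with hq
    have hq1 : ∀ r ∈ R, q r = 1 := fun r hr =>
      (QuotientGroup.eq_one_iff r).mpr (Subgroup.subset_normalClosure hr)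
    -- key: two short words with the same evaluation are equal in the quotient
    have key : ∀ x y : List S, x.length + y.length ≤ 2 * k + 2 →
        wordEval e x = wordEval e y → q (rho x) = q (rho y) := by
      intro x y hl hev
      have hmem : rho x * (rho y)⁻¹ ∈ R := by
        refine ⟨?_, x, y, hl, rfl⟩
        rw [map_mul, map_inv, hφ, lift_rho, lift_rho, hev, mul_inv_cancel]
      have := hq1 _ hmem
      rw [map_mul, map_inv] at this
      exact (mul_inv_eq_one.mp this)
    -- the strip lemma
    have strip : ∀ (g : G) (s : S),
        q (rho (w g)) * q (FreeGroup.of s) = q (rho (w (g * e s))) := by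
      intro g s
      set u := w g with hu
      set v := w (g * e s) with hv
      have hrung : ∀ j : ℕ, ∃ c : List S, c.length ≤ k ∧
          wordEval e c = (pathAt e u j)⁻¹ * pathAt e v j :=
        fun j => exists_rung e k hword (hcomb g s j)
      choose c hc1 hc2 using hrung
      set c' : ℕ → List S := fun j => if j = 0 then [] else c j with hc'
      have hc'1 : ∀ j, (c' j).length ≤ k := by
        intro j; by_cases h : j = 0 <;> simp [hc', h, hc1]
      have hc'2 : ∀ j, wordEval e (c' j) = (pathAt e u j)⁻¹ * pathAt e v j := by
        intro j; by_cases h : j = 0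
        · subst h; simp [hc', pathAt, wordEval]
        · simp [hc', h, hc2]
      have main : ∀ t : ℕ, q (rho (u.take t)) * q (rho (c' t)) = q (rho (v.take t)) := by
        intro t
        induction t with
        | zero => simp [hc', rho_nil]
        | succ t ih =>
          have htu : u.take (t + 1) = u.take t ++ u[t]?.toList := List.take_succ
          have htv : v.take (t + 1) = v.take t ++ v[t]?.toList := List.take_succ
          have hlen1 : (u[t]?.toList).length ≤ 1 := by cases u[t]? <;> simp
          have hlen2 : (v[t]?.toList).length ≤ 1 := by cases v[t]? <;> simp
          have hrel : q (rho (u[t]?.toList ++ c' (t + 1))) =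
              q (rho (c' t ++ v[t]?.toList)) := by
            apply key
            · rw [List.length_append, List.length_append]
              have := hc'1 (t + 1); have := hc'1 t
              omega
            · rw [wordEval_append, wordEval_append, hc'2, hc'2]
              have hpu : pathAt e u (t + 1) = pathAt e u t * wordEval e u[t]?.toList := by
                rw [pathAt, pathAt, htu, wordEval_append]
              have hpv : pathAt e v (t + 1) = pathAt e v t * wordEval e v[t]?.toList := by
                rw [pathAt, pathAt, htv, wordEval_append]
              rw [hpu, hpv]
              group
          rw [htu, htv, rho_append, rho_append, map_mul, map_mul]
          calc q (rho (u.take t)) * q (rho u[t]?.toList) * q (rho (c' (t + 1)))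
              = q (rho (u.take t)) * (q (rho (u[t]?.toList ++ c' (t + 1)))) := by
                rw [rho_append, map_mul, mul_assoc]
            _ = q (rho (u.take t)) * (q (rho (c' t)) * q (rho v[t]?.toList)) := by
                rw [hrel, rho_append, map_mul]
            _ = (q (rho (u.take t)) * q (rho (c' t))) * q (rho v[t]?.toList) := by
                rw [mul_assoc]
            _ = q (rho (v.take t)) * q (rho v[t]?.toList) := by rw [ih]
      -- evaluate at T = max of the lengths
      set T : ℕ := max u.length v.length with hT
      have hTu : u.take T = u := List.take_of_length_le (le_max_left _ _)
      have hTv : v.take T = v := List.take_of_length_le (le_max_right _ _)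
      have hmain := main T
      rw [hTu, hTv] at hmain
      -- the last triangle
      have hlast : q (FreeGroup.of s) = q (rho (c' T)) := by
        rw [← rho_singleton]
        apply key
        · have := hc'1 T
          rw [List.length_singleton]
          omega
        · rw [wordEval_singleton, hc'2]
          have h1 : pathAt e u T = g := by rw [pathAt, hTu, hu, hw]
          have h2 : pathAt e v T = g * e s := by rw [pathAt, hTv, hv, hw]
          rw [h1, h2]
          group
      rw [hlast, hmain]
    -- pushing a word to the combing representative
    have comb1 : ∀ u : List S,
        q (rho (w 1)) * q (rho u) = q (rho (w (wordEval e u))) := by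
      intro u
      induction u using List.reverseRecOn with
      | nil => simp [rho_nil, wordEval_nil]
      | append_singleton u s ih =>
        rw [rho_append, map_mul, rho_singleton, ← mul_assoc, ih, strip,
          wordEval_append, wordEval_singleton]
    -- every free group element is congruent to a positive word with the same evaluation
    have letters : ∀ x : FreeGroup S, ∃ u : List S,
        q x = q (rho u) ∧ wordEval e u = φ x := by
      intro x
      induction x using FreeGroup.induction_on with
      | C1 => exact ⟨[], by simp [rho_nil], by simp [wordEval_nil]⟩
      | of a =>
        exact ⟨[a], by rw [rho_singleton],
          by rw [wordEval_singleton, hφ]; exact (FreeGroup.lift_apply_of).symm⟩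
      | inv_of a _ =>
        refine ⟨[σ a], ?_, ?_⟩
        · have h2 : q (rho [σ a, a]) = q (rho []) := by
            apply key
            · simp
            · show wordEval e [σ a, a] = wordEval e []
              simp [wordEval, hσ]
          have : rho [σ a, a] = FreeGroup.of (σ a) * FreeGroup.of a := by
            simp [rho]
          rw [this, rho_nil, map_one, map_mul] at h2
          rw [rho_singleton, map_inv]
          rw [mul_eq_one_iff_eq_inv] at h2
          show (q (FreeGroup.of a))⁻¹ = q (FreeGroup.of (σ a))
          rw [h2]
        · rw [wordEval_singleton, hσ, map_inv]
          show (e a)⁻¹ = (φ (FreeGroup.of a))⁻¹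
          rw [hφ, FreeGroup.lift_apply_of]
      | mul x y hx hy =>
        obtain ⟨ux, hux1, hux2⟩ := hx
        obtain ⟨uy, huy1, huy2⟩ := hy
        exact ⟨ux ++ uy, by rw [map_mul, hux1, huy1, rho_append, map_mul],
          by rw [wordEval_append, hux2, huy2, map_mul]⟩
    -- conclude
    apply le_antisymm
    · intro x hx
      have hx1 : φ x = 1 := hx
      obtain ⟨u, hqu, heu⟩ := letters x
      have heu1 : wordEval e u = 1 := by rw [heu, hx1]
      have := comb1 u
      rw [heu1] at this
      have hu1 : q (rho u) = 1 := by
        exact mul_left_cancel (a := q (rho (w 1))) (by rw [this, mul_one])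
      have : q x = 1 := by rw [hqu, hu1]
      exact (QuotientGroup.eq_one_iff x).mp this
    · exact Subgroup.normalClosure_le_normal fun r hr => MonoidHom.mem_ker.mpr hr.1
end

section
/- Every word-hyperbolic group G is biautomatic; moreover the automatic structure may be chosen so that the language of normal forms consists of geodesic words (words u with |u| = d(1, π(u)) in the word metric). -/
/-- A biautomatic structure: an automatic structure together with, for each padded
letter `s`, a finite-state automaton `N s` recognizing exactly the padded pairs
`(u,v)` of accepted words with `π u = π s · π v` (left multiplication). -/
structure BiautomaticStructure (G : Type*) [Group G] (S : Type*) (e : S → G)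
    extends AutomaticStructure G S e where
  σN : Option S → Type
  instFinN : ∀ s, Fintype (σN s)
  N : ∀ s : Option S, DFA (Option S × Option S) (σN s)
  multLeft : ∀ (s : Option S) (u v : List S),
    u ∈ toAutomaticStructure.L.accepts → v ∈ toAutomaticStructure.L.accepts →
    (padWord u v ∈ (N s).accepts ↔ wordEval e u = padEval e s * wordEval e v)


/-- A word is geodesic if its length equals the word-metric distance from `1` to the
element it represents. -/
def IsGeodesicWord {G : Type*} [Group G] {S : Type*} (e : S → G) (u : List S) : Prop :=
  u.length = wordDist e 1 (wordEval e u)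

/-- `G` is word-hyperbolic (w.r.t. the symmetric generating alphabet `S`): there is
`δ` such that every geodesic triangle in the Cayley graph — given by geodesic words
`u, v, w` with `π u · π v · π w = 1`, with sides the path of `u` from `1`, the path of
`v` from `π u`, and the path of `w` from `π u · π v` — is `δ`-slim: every point of the
first side is at word-metric distance at most `δ` from the union of the two others. -/
def WordHyperbolic {G : Type*} [Group G] {S : Type*} (e : S → G) : Prop :=
  ∃ δ : ℕ, ∀ u v w : List S,
    IsGeodesicWord e u → IsGeodesicWord e v → IsGeodesicWord e w →
    wordEval e u * wordEval e v * wordEval e w = 1 →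
    ∀ i : ℕ, ∃ j : ℕ,
      wordDist e (pathAt e u i) (wordEval e u * pathAt e v j) ≤ δ ∨
      wordDist e (pathAt e u i) (wordEval e u * wordEval e v * pathAt e w j) ≤ δ

namespace WHB

variable {G : Type*} [Group G] {S : Type*}

lemma wordEval_append (e : S → G) (u v : List S) :
    wordEval e (u ++ v) = wordEval e u * wordEval e v := by
  simp [wordEval]

lemma wordEval_nil (e : S → G) : wordEval e ([] : List S) = 1 := rfl

lemma wordEval_singleton (e : S → G) (a : S) : wordEval e [a] = e a := by
  simp [wordEval]

lemma wordEval_cons (e : S → G) (a : S) (w : List S) :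
    wordEval e (a :: w) = e a * wordEval e w := by
  simp [wordEval]

lemma wordDist_le (e : S → G) {g h : G} {w : List S} (hw : wordEval e w = g⁻¹ * h) :
    wordDist e g h ≤ w.length :=
  Nat.sInf_le ⟨w, rfl, hw⟩

lemma wordDist_left_inv (e : S → G) (x g h : G) :
    wordDist e (x * g) (x * h) = wordDist e g h := by
  have hx : (x*g)⁻¹ * (x*h) = g⁻¹ * h := by group
  unfold wordDist; rw [hx]

lemma wordDist_one (e : S → G) (g h : G) :
    wordDist e g h = wordDist e 1 (g⁻¹ * h) := by
  have := wordDist_left_inv e g⁻¹ g h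
  simp at this
  rw [← this]

lemma wordDist_self (e : S → G) (g : G) : wordDist e g g = 0 :=
  Nat.le_zero.mp (wordDist_le e (w := []) (by simp [wordEval]))

section Inv
variable (e : S → G) (hsym : ∀ a : S, ∃ b : S, e b = (e a)⁻¹)

include hsym

noncomputable def invLetter (a : S) : S := Classical.choose (hsym a)

lemma invLetter_spec (a : S) : e (invLetter e hsym a) = (e a)⁻¹ :=
  Classical.choose_spec (hsym a)

noncomputable def invWord (w : List S) : List S := (w.map (invLetter e hsym)).reverse

@[simp] lemma invWord_length (w : List S) : (invWord e hsym w).length = w.length := by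
  simp [invWord]

lemma wordEval_invWord (w : List S) :
    wordEval e (invWord e hsym w) = (wordEval e w)⁻¹ := by
  induction w with
  | nil => simp [invWord, wordEval]
  | cons a w ih =>
      have : invWord e hsym (a :: w) = invWord e hsym w ++ [invLetter e hsym a] := by
        simp [invWord]
      rw [this, wordEval_append, ih, wordEval_singleton, invLetter_spec e hsym, wordEval_cons]
      group

variable (hgen : Subgroup.closure (Set.range e) = ⊤)
include hgen

lemma exists_word (g : G) : ∃ w : List S, wordEval e w = g := by
  have hg : g ∈ Subgroup.closure (Set.range e) := by rw [hgen]; trivial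
  induction hg using Subgroup.closure_induction with
  | mem x hx => obtain ⟨a, rfl⟩ := hx; exact ⟨[a], wordEval_singleton e a⟩
  | one => exact ⟨[], rfl⟩
  | mul x y _ _ hx hy =>
      obtain ⟨w1, rfl⟩ := hx; obtain ⟨w2, rfl⟩ := hy
      exact ⟨w1 ++ w2, wordEval_append e w1 w2⟩
  | inv x _ hx =>
      obtain ⟨w, rfl⟩ := hx
      exact ⟨invWord e hsym w, wordEval_invWord e hsym w⟩

lemma wordDist_spec (g h : G) :
    ∃ w : List S, w.length = wordDist e g h ∧ wordEval e w = g⁻¹ * h := by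
  have hne : {n : ℕ | ∃ w : List S, w.length = n ∧ wordEval e w = g⁻¹ * h}.Nonempty := by
    obtain ⟨w, hw⟩ := exists_word e hsym hgen (g⁻¹ * h)
    exact ⟨w.length, w, rfl, hw⟩
  exact Nat.sInf_mem hne

lemma wordDist_triangle (a b c : G) :
    wordDist e a c ≤ wordDist e a b + wordDist e b c := by
  obtain ⟨w1, h1, e1⟩ := wordDist_spec e hsym hgen a b
  obtain ⟨w2, h2, e2⟩ := wordDist_spec e hsym hgen b c
  calc wordDist e a c ≤ (w1 ++ w2).length :=
        wordDist_le e (by rw [wordEval_append, e1, e2]; group)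
    _ = _ := by simp [h1, h2]

lemma wordDist_comm (a b : G) : wordDist e a b = wordDist e b a := by
  have key : ∀ x y : G, wordDist e x y ≤ wordDist e y x := by
    intro x y
    obtain ⟨w, hl, he⟩ := wordDist_spec e hsym hgen y x
    refine le_trans (wordDist_le e (w := invWord e hsym w) ?_) (by simp [hl])
    rw [wordEval_invWord, he]; group
  exact le_antisymm (key a b) (key b a)

omit hsym hgen in
lemma wordDist_eval_le (g : G) (w : List S) :
    wordDist e g (g * wordEval e w) ≤ w.length := by
  exact wordDist_le e (by group)

lemma wordDist_one_inv (g : G) : wordDist e 1 g⁻¹ = wordDist e 1 g := by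
  have h1 : wordDist e 1 g⁻¹ = wordDist e g 1 := by
    have := wordDist_left_inv e g 1 g⁻¹
    simpa using this.symm
  rw [h1, wordDist_comm e hsym hgen]

end Inv

section Path

variable (e : S → G) (hsym : ∀ a : S, ∃ b : S, e b = (e a)⁻¹)
  (hgen : Subgroup.closure (Set.range e) = ⊤)

lemma pathAt_zero (u : List S) : pathAt e u 0 = 1 := rfl

lemma pathAt_of_le {u : List S} {j : ℕ} (h : u.length ≤ j) :
    pathAt e u j = wordEval e u := by
  simp [pathAt, List.take_of_length_le h]

lemma pathAt_min (u : List S) (j : ℕ) :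
    pathAt e u j = pathAt e u (min j u.length) := by
  rcases le_total j u.length with h | h
  · simp [min_eq_left h]
  · rw [min_eq_right h, pathAt_of_le e h, pathAt_of_le e le_rfl]

lemma pathAt_segment (u : List S) {i j : ℕ} (hij : i ≤ j) :
    pathAt e u j = pathAt e u i * wordEval e ((u.drop i).take (j - i)) := by
  unfold pathAt
  rw [← wordEval_append]
  congr 1
  rw [← List.take_add, Nat.add_sub_cancel' hij]

lemma wordDist_pathAt_le {u : List S} {i j : ℕ} (hij : i ≤ j) :
    wordDist e (pathAt e u i) (pathAt e u j) ≤ j - i := by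
  refine le_trans (wordDist_le e (w := (u.drop i).take (j - i)) ?_) (by simp)
  rw [pathAt_segment e u hij]; group

include hsym hgen in
lemma wordDist_pathAt_dist (u : List S) (i j : ℕ) :
    wordDist e (pathAt e u i) (pathAt e u j) ≤ Nat.dist i j := by
  rcases le_total i j with h | h
  · exact le_trans (wordDist_pathAt_le e h) (by simp [Nat.dist, Nat.sub_eq_zero_of_le h])
  · rw [wordDist_comm e hsym hgen]
    exact le_trans (wordDist_pathAt_le e h) (by simp [Nat.dist, Nat.sub_eq_zero_of_le h])

lemma wordDist_one_pathAt_le (u : List S) (j : ℕ) :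
    wordDist e 1 (pathAt e u j) ≤ min j u.length := by
  refine le_trans (wordDist_le e (w := u.take j) (by simp [pathAt])) ?_
  simp

include hsym hgen in
lemma dist_one_sub_le (a b : G) :
    wordDist e 1 b ≤ wordDist e 1 a + wordDist e a b :=
  wordDist_triangle e hsym hgen 1 a b

include hsym hgen in
/-- prefixes of geodesic words are geodesic. -/
lemma geodesic_pathAt {u : List S} (hu : IsGeodesicWord e u) (j : ℕ) :
    wordDist e 1 (pathAt e u j) = min j u.length := by
  refine le_antisymm (wordDist_one_pathAt_le e u j) ?_
  rcases le_total u.length j with h | h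
  · rw [pathAt_of_le e h, min_eq_right h]; exact hu.le
  · rw [min_eq_left h]
    by_contra hlt
    push_neg at hlt
    have h2 : wordDist e (pathAt e u j) (wordEval e u) ≤ u.length - j := by
      have := wordDist_pathAt_le e (u := u) h
      rwa [pathAt_of_le e le_rfl] at this
    have h3 : wordDist e 1 (wordEval e u) ≤ wordDist e 1 (pathAt e u j) +
        wordDist e (pathAt e u j) (wordEval e u) := wordDist_triangle e hsym hgen _ _ _
    have h4 : wordDist e 1 (wordEval e u) = u.length := hu.symm
    omega

lemma geodesic_length {u : List S} (hu : IsGeodesicWord e u) :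
    wordDist e 1 (wordEval e u) = u.length := hu.symm

include hsym hgen in
lemma exists_geodesic_word (g : G) :
    ∃ u : List S, IsGeodesicWord e u ∧ wordEval e u = g := by
  obtain ⟨w, hl, he⟩ := wordDist_spec e hsym hgen 1 g
  simp only [inv_one, one_mul] at he
  exact ⟨w, by rw [IsGeodesicWord, he, hl], he⟩

include hsym hgen in
lemma invWord_geodesic {u : List S} (hu : IsGeodesicWord e u) :
    IsGeodesicWord e (invWord e hsym u) := by
  rw [IsGeodesicWord, wordEval_invWord, invWord_length, wordDist_one_inv e hsym hgen]
  exact hu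

lemma pathAt_invWord (u : List S) {j : ℕ} (hj : j ≤ u.length) :
    pathAt e (invWord e hsym u) j = (wordEval e u)⁻¹ * pathAt e u (u.length - j) := by
  unfold pathAt invWord
  rw [List.take_reverse]
  have h1 : (u.map (invLetter e hsym)).length - j = u.length - j := by simp
  rw [h1, ← List.map_drop]
  have h2 : ((u.drop (u.length - j)).map (invLetter e hsym)).reverse
      = invWord e hsym (u.drop (u.length - j)) := rfl
  rw [h2, wordEval_invWord]
  have h3 : wordEval e u = wordEval e (u.take (u.length - j)) * wordEval e (u.drop (u.length - j)) := by
    rw [← wordEval_append]; simp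
  rw [h3]; group

lemma pathAt_invWord' (u : List S) (j : ℕ) :
    ∃ j' : ℕ, pathAt e (invWord e hsym u) j = (wordEval e u)⁻¹ * pathAt e u j' := by
  rcases le_total j u.length with h | h
  · exact ⟨u.length - j, pathAt_invWord e hsym u h⟩
  · refine ⟨0, ?_⟩
    have : (invWord e hsym u).length ≤ j := by simpa using h
    rw [pathAt_of_le e this, wordEval_invWord, pathAt_zero]
    simp

end Path

section Fellow

variable (e : S → G) (hsym : ∀ a : S, ∃ b : S, e b = (e a)⁻¹)
  (hgen : Subgroup.closure (Set.range e) = ⊤)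

variable {δ : ℕ}
  (hδ : ∀ u v w : List S,
    IsGeodesicWord e u → IsGeodesicWord e v → IsGeodesicWord e w →
    wordEval e u * wordEval e v * wordEval e w = 1 →
    ∀ i : ℕ, ∃ j : ℕ,
      wordDist e (pathAt e u i) (wordEval e u * pathAt e v j) ≤ δ ∨
      wordDist e (pathAt e u i) (wordEval e u * wordEval e v * pathAt e w j) ≤ δ)

include hsym hgen hδ

/-- Fellow travelling of geodesics starting at `1` with endpoints at distance ≤ 1. -/
lemma fellowA {u v : List S} (hu : IsGeodesicWord e u) (hv : IsGeodesicWord e v)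
    (hclose : wordDist e (wordEval e u) (wordEval e v) ≤ 1) (i : ℕ) :
    wordDist e (pathAt e u i) (pathAt e v i) ≤ 2 * δ + 4 := by
  obtain ⟨t, ht, hte⟩ := exists_geodesic_word e hsym hgen ((wordEval e u)⁻¹ * wordEval e v)
  have htlen : t.length ≤ 1 := by
    rw [ht, hte, ← wordDist_one]; exact hclose
  have hw : IsGeodesicWord e (invWord e hsym v) := invWord_geodesic e hsym hgen hv
  have hprod : wordEval e u * wordEval e t * wordEval e (invWord e hsym v) = 1 := by
    rw [hte, wordEval_invWord]; group
  obtain ⟨j, hcase⟩ := hδ u t (invWord e hsym v) hu ht hw hprod i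
  have hdp : wordDist e 1 (pathAt e u i) = min i u.length :=
    geodesic_pathAt e hsym hgen hu i
  have hdu : wordDist e 1 (wordEval e u) = u.length := hu.symm
  have hdv : wordDist e 1 (wordEval e v) = v.length := hv.symm
  have hvu : v.length ≤ u.length + 1 := by
    have := wordDist_triangle e hsym hgen 1 (wordEval e u) (wordEval e v)
    omega
  rcases hcase with hc | hc
  · -- near the endpoint wordEval e u
    have h1 : wordDist e (wordEval e u) (wordEval e u * pathAt e t j)
        = wordDist e 1 (pathAt e t j) := by
      have := wordDist_left_inv e (wordEval e u) 1 (pathAt e t j); simpa using this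
    have h2 : wordDist e 1 (pathAt e t j) ≤ 1 :=
      le_trans (wordDist_one_pathAt_le e t j) (by omega)
    have hpg : wordDist e (pathAt e u i) (wordEval e u) ≤ δ + 1 := by
      have t1 := wordDist_triangle e hsym hgen (pathAt e u i)
        (wordEval e u * pathAt e t j) (wordEval e u)
      have t2 : wordDist e (wordEval e u * pathAt e t j) (wordEval e u)
          = wordDist e (wordEval e u) (wordEval e u * pathAt e t j) :=
        wordDist_comm e hsym hgen _ _
      omega
    have h4 : wordDist e (wordEval e v) (pathAt e v i) ≤ v.length - min i v.length := by
      rw [wordDist_comm e hsym hgen]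
      have h5 : pathAt e v i = pathAt e v (min i v.length) := pathAt_min e v i
      have h6 : wordEval e v = pathAt e v v.length := (pathAt_of_le e le_rfl).symm
      rw [h5, h6]
      exact wordDist_pathAt_le e (min_le_right i v.length)
    have hmin : u.length ≤ min i u.length + (δ + 1) := by
      have := wordDist_triangle e hsym hgen 1 (pathAt e u i) (wordEval e u)
      omega
    have t1 := wordDist_triangle e hsym hgen (pathAt e u i) (wordEval e u) (pathAt e v i)
    have t2 := wordDist_triangle e hsym hgen (wordEval e u) (wordEval e v) (pathAt e v i)
    omega
  · -- near a point of v
    have hrw : wordEval e u * wordEval e t = wordEval e v := by rw [hte]; group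
    rw [hrw] at hc
    obtain ⟨j', hj'⟩ := pathAt_invWord' e hsym v j
    rw [hj'] at hc
    have hq : wordEval e v * ((wordEval e v)⁻¹ * pathAt e v j') = pathAt e v j' := by group
    rw [hq] at hc
    have hdq : wordDist e 1 (pathAt e v j') = min j' v.length :=
      geodesic_pathAt e hsym hgen hv j'
    have hb1 := wordDist_triangle e hsym hgen 1 (pathAt e u i) (pathAt e v j')
    have hb2 := wordDist_triangle e hsym hgen 1 (pathAt e v j') (pathAt e u i)
    have hcomm : wordDist e (pathAt e v j') (pathAt e u i)
        = wordDist e (pathAt e u i) (pathAt e v j') := wordDist_comm e hsym hgen _ _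
    have hstep : wordDist e (pathAt e v j') (pathAt e v i) ≤
        Nat.dist (min j' v.length) (min i v.length) := by
      rw [pathAt_min e v j', pathAt_min e v i]
      exact wordDist_pathAt_dist e hsym hgen v _ _
    have hdist : Nat.dist (min j' v.length) (min i v.length) ≤ δ + 1 := by
      simp only [Nat.dist]
      omega
    have htri := wordDist_triangle e hsym hgen (pathAt e u i) (pathAt e v j') (pathAt e v i)
    omega

/-- Fellow travelling of a geodesic and a left-translate (by an element of length ≤ 1)
of a geodesic, with the same endpoint. -/
lemma fellowB {u v : List S} (hu : IsGeodesicWord e u) (hv : IsGeodesicWord e v)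
    {x : G} (hx : wordDist e 1 x ≤ 1) (heq : wordEval e u = x * wordEval e v) (i : ℕ) :
    wordDist e (pathAt e u i) (x * pathAt e v i) ≤ 2 * δ + 4 := by
  obtain ⟨w2, hw2, hw2e⟩ := exists_geodesic_word e hsym hgen x⁻¹
  have hw2len : w2.length ≤ 1 := by
    rw [hw2, hw2e, wordDist_one_inv e hsym hgen]; exact hx
  have hw1 : IsGeodesicWord e (invWord e hsym v) := invWord_geodesic e hsym hgen hv
  have hprod : wordEval e u * wordEval e (invWord e hsym v) * wordEval e w2 = 1 := by
    rw [wordEval_invWord, hw2e, heq]; group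
  obtain ⟨j, hcase⟩ := hδ u (invWord e hsym v) w2 hu hw1 hw2 hprod i
  have hdp : wordDist e 1 (pathAt e u i) = min i u.length :=
    geodesic_pathAt e hsym hgen hu i
  have hdu : wordDist e 1 (wordEval e u) = u.length := hu.symm
  have hdv : wordDist e 1 (wordEval e v) = v.length := hv.symm
  have hxg : wordDist e x (wordEval e u) = v.length := by
    have h0 : wordDist e x (wordEval e u) = wordDist e 1 (wordEval e v) := by
      rw [heq]
      have := wordDist_left_inv e x 1 (wordEval e v)
      simpa using this
    omega
  have hx1 : wordDist e x 1 = wordDist e 1 x := wordDist_comm e hsym hgen _ _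
  have hvu : v.length ≤ u.length + 1 := by
    have t1 := wordDist_triangle e hsym hgen x 1 (wordEval e u)
    omega
  have huv : u.length ≤ v.length + 1 := by
    have t1 := wordDist_triangle e hsym hgen 1 x (wordEval e u)
    omega
  have hrw : wordEval e u * wordEval e (invWord e hsym v) = x := by
    rw [wordEval_invWord, heq]; group
  rcases hcase with hc | hc
  · -- near a point of x • v
    obtain ⟨j', hj'⟩ := pathAt_invWord' e hsym v j
    rw [hj'] at hc
    have hq : wordEval e u * ((wordEval e v)⁻¹ * pathAt e v j') = x * pathAt e v j' := by
      rw [heq]; group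
    rw [hq] at hc
    have hdq : wordDist e x (x * pathAt e v j') = min j' v.length := by
      have h1 : wordDist e x (x * pathAt e v j') = wordDist e 1 (pathAt e v j') := by
        have := wordDist_left_inv e x 1 (pathAt e v j'); simpa using this
      rw [h1]; exact geodesic_pathAt e hsym hgen hv j'
    have hq1 := wordDist_triangle e hsym hgen 1 x (x * pathAt e v j')
    have hq2 := wordDist_triangle e hsym hgen x 1 (x * pathAt e v j')
    have hb1 := wordDist_triangle e hsym hgen 1 (pathAt e u i) (x * pathAt e v j')
    have hb2 := wordDist_triangle e hsym hgen 1 (x * pathAt e v j') (pathAt e u i)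
    have hcomm : wordDist e (x * pathAt e v j') (pathAt e u i)
        = wordDist e (pathAt e u i) (x * pathAt e v j') := wordDist_comm e hsym hgen _ _
    have hstep : wordDist e (x * pathAt e v j') (x * pathAt e v i) ≤
        Nat.dist (min j' v.length) (min i v.length) := by
      rw [wordDist_left_inv e x, pathAt_min e v j', pathAt_min e v i]
      exact wordDist_pathAt_dist e hsym hgen v _ _
    have hdist : Nat.dist (min j' v.length) (min i v.length) ≤ δ + 2 := by
      simp only [Nat.dist]
      omega
    have htri := wordDist_triangle e hsym hgen (pathAt e u i) (x * pathAt e v j')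
      (x * pathAt e v i)
    omega
  · -- near the corner x
    rw [hrw] at hc
    have h2 : wordDist e x (x * pathAt e w2 j) = wordDist e 1 (pathAt e w2 j) := by
      have := wordDist_left_inv e x 1 (pathAt e w2 j); simpa using this
    have h3 : wordDist e 1 (pathAt e w2 j) ≤ 1 :=
      le_trans (wordDist_one_pathAt_le e w2 j) (by omega)
    have hpx : wordDist e (pathAt e u i) x ≤ δ + 1 := by
      have t1 := wordDist_triangle e hsym hgen (pathAt e u i) (x * pathAt e w2 j) x
      have t2 : wordDist e (x * pathAt e w2 j) x = wordDist e x (x * pathAt e w2 j) :=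
        wordDist_comm e hsym hgen _ _
      omega
    have hsmall : min i u.length ≤ δ + 2 := by
      have t1 := wordDist_triangle e hsym hgen 1 x (pathAt e u i)
      have t2 : wordDist e x (pathAt e u i) = wordDist e (pathAt e u i) x :=
        wordDist_comm e hsym hgen _ _
      omega
    have h4 : wordDist e x (x * pathAt e v i) = wordDist e 1 (pathAt e v i) := by
      have := wordDist_left_inv e x 1 (pathAt e v i); simpa using this
    have h5 : wordDist e 1 (pathAt e v i) ≤ min i v.length := wordDist_one_pathAt_le e v i
    have htri := wordDist_triangle e hsym hgen (pathAt e u i) x (x * pathAt e v i)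
    omega

/-- General synchronous fellow travelling for geodesics whose two pairs of
corresponding endpoints are at distance ≤ 1. -/
lemma fellowC {u v : List S} (hu : IsGeodesicWord e u) (hv : IsGeodesicWord e v)
    {x y : G} (hx : wordDist e 1 x ≤ 1) (hy : wordDist e 1 y ≤ 1)
    (heq : wordEval e u = x * wordEval e v * y) (i : ℕ) :
    wordDist e (pathAt e u i) (x * pathAt e v i) ≤ 4 * δ + 8 := by
  obtain ⟨w, hw, hwe⟩ := exists_geodesic_word e hsym hgen (x * wordEval e v)
  have h1 : wordDist e (wordEval e u) (wordEval e w) ≤ 1 := by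
    rw [heq, hwe]
    have h2 : wordDist e (x * wordEval e v * y) (x * wordEval e v) =
        wordDist e y 1 := by
      have := wordDist_left_inv e (x * wordEval e v) y 1
      simpa using this
    rw [h2, wordDist_comm e hsym hgen]
    exact hy
  have hA := fellowA e hsym hgen hδ hu hw h1 i
  have hB := fellowB e hsym hgen hδ hw hv hx hwe i
  have htri := wordDist_triangle e hsym hgen (pathAt e u i) (pathAt e w i)
    (x * pathAt e v i)
  omega

end Fellow

section Cone

variable (e : S → G) (hsym : ∀ a : S, ∃ b : S, e b = (e a)⁻¹)
  (hgen : Subgroup.closure (Set.range e) = ⊤)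
  {δ : ℕ}
  (hδ : ∀ u v w : List S,
    IsGeodesicWord e u → IsGeodesicWord e v → IsGeodesicWord e w →
    wordEval e u * wordEval e v * wordEval e w = 1 →
    ∀ i : ℕ, ∃ j : ℕ,
      wordDist e (pathAt e u i) (wordEval e u * pathAt e v j) ≤ δ ∨
      wordDist e (pathAt e u i) (wordEval e u * wordEval e v * pathAt e w j) ≤ δ)

/-- The cone type of `g`: words which extend geodesics through `g` geodesically. -/
def coneType (g : G) : Set (List S) :=
  {w : List S | wordDist e 1 (g * wordEval e w) = wordDist e 1 g + w.length}

lemma dist_one_letter (a : S) : wordDist e 1 (e a) ≤ 1 :=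
  wordDist_le e (w := [a]) (by rw [wordEval_singleton]; group)

lemma dist_pad_letter (s : Option S) : wordDist e 1 (padEval e s) ≤ 1 := by
  cases s with
  | none => simp [padEval, wordDist_self]
  | some a => exact dist_one_letter e a

lemma cone_extend {g : G} {a : S} (ha : [a] ∈ coneType e g) (w : List S) :
    w ∈ coneType e (g * e a) ↔ (a :: w) ∈ coneType e g := by
  have h1 : wordDist e 1 (g * e a) = wordDist e 1 g + 1 := by
    simpa [coneType, wordEval_singleton] using ha
  simp only [coneType, Set.mem_setOf_eq, wordEval_cons, List.length_cons, ← mul_assoc, h1]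
  omega

include hsym hgen in
lemma cone_mem_iff {g : G} {w : List S} :
    w ∈ coneType e g ↔ wordDist e 1 (g * wordEval e w) = wordDist e 1 g + w.length :=
  Iff.rfl

include hsym hgen in
lemma cone_upper (g : G) (w : List S) :
    wordDist e 1 (g * wordEval e w) ≤ wordDist e 1 g + w.length := by
  have t1 := wordDist_triangle e hsym hgen 1 g (g * wordEval e w)
  have t2 := wordDist_eval_le e g w
  omega

include hsym hgen hδ in
lemma coneType_subset_of_pattern {g h : G}
    (hpat : ∀ z : G, wordDist e 1 z ≤ 2 * δ + 4 →
      (wordDist e 1 (g * z) : ℤ) - (wordDist e 1 g : ℤ)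
        = (wordDist e 1 (h * z) : ℤ) - (wordDist e 1 h : ℤ)) :
    coneType e g ⊆ coneType e h := by
  intro w
  induction w using List.reverseRecOn with
  | nil => intro _; simp [coneType, wordEval_nil]
  | append_singleton w' a ih =>
    intro hwa
    have hwa' : wordDist e 1 (g * wordEval e w' * e a)
        = wordDist e 1 g + w'.length + 1 := by
      have := hwa
      simp only [coneType, Set.mem_setOf_eq, wordEval_append, wordEval_singleton,
        List.length_append, List.length_singleton, ← mul_assoc] at this
      omega
    have hg1 : wordDist e 1 (g * wordEval e w') = wordDist e 1 g + w'.length := by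
      have hup := cone_upper e hsym hgen g w'
      have hlo : wordDist e 1 (g * wordEval e w' * e a)
          ≤ wordDist e 1 (g * wordEval e w') + 1 := by
        have t1 := wordDist_triangle e hsym hgen 1 (g * wordEval e w')
          (g * wordEval e w' * e a)
        have t2 : wordDist e (g * wordEval e w') (g * wordEval e w' * e a)
            = wordDist e 1 (e a) := by
          have := wordDist_left_inv e (g * wordEval e w') 1 (e a); simpa using this
        have t3 := dist_one_letter e a
        omega
      omega
    have ihh : wordDist e 1 (h * wordEval e w') = wordDist e 1 h + w'.length :=
      ih hg1
    -- goal: w' ++ [a] ∈ coneType e h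
    have hupper : wordDist e 1 (h * wordEval e w' * e a)
        ≤ wordDist e 1 h + w'.length + 1 := by
      have t1 := wordDist_triangle e hsym hgen 1 (h * wordEval e w')
        (h * wordEval e w' * e a)
      have t2 : wordDist e (h * wordEval e w') (h * wordEval e w' * e a)
          = wordDist e 1 (e a) := by
        have := wordDist_left_inv e (h * wordEval e w') 1 (e a); simpa using this
      have t3 := dist_one_letter e a
      omega
    suffices hsuf : wordDist e 1 (h * wordEval e w' * e a)
        = wordDist e 1 h + w'.length + 1 by
      simp only [coneType, Set.mem_setOf_eq, wordEval_append, wordEval_singleton,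
        List.length_append, List.length_singleton, ← mul_assoc]
      omega
    by_contra hne
    have hle : wordDist e 1 (h * wordEval e w' * e a)
        ≤ wordDist e 1 h + w'.length := by omega
    set m := wordDist e 1 h with hm
    set n := w'.length with hn
    obtain ⟨α, hα, hαe⟩ := exists_geodesic_word e hsym hgen (h * wordEval e w' * e a)
    have hαlen : α.length = wordDist e 1 (h * wordEval e w' * e a) := by
      rw [hα, hαe]
    obtain ⟨wh, hwh, hwhe⟩ := exists_geodesic_word e hsym hgen h
    have hwhlen : wh.length = m := by rw [hwh, hwhe, hm]
    have hβe : wordEval e (wh ++ w') = h * wordEval e w' := by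
      rw [wordEval_append, hwhe]
    have hβ : IsGeodesicWord e (wh ++ w') := by
      rw [IsGeodesicWord, hβe, ihh]
      simp [hwhlen, hn]
    have hclose : wordDist e (wordEval e (wh ++ w')) (wordEval e α) ≤ 1 := by
      rw [hβe, hαe]
      have t2 : wordDist e (h * wordEval e w') (h * wordEval e w' * e a)
          = wordDist e 1 (e a) := by
        have := wordDist_left_inv e (h * wordEval e w') 1 (e a); simpa using this
      have t3 := dist_one_letter e a
      omega
    have hFT := fellowA e hsym hgen hδ hβ hα hclose m
    have hpathβ : pathAt e (wh ++ w') m = h := by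
      rw [pathAt, ← hwhlen, List.take_left, hwhe]
    rw [hpathβ] at hFT
    have hz : wordDist e 1 (h⁻¹ * pathAt e α m) ≤ 2 * δ + 4 := by
      rw [wordDist_one] at hFT
      exact hFT
    have hhz : h * (h⁻¹ * pathAt e α m) = pathAt e α m := by group
    rcases le_or_gt m α.length with hcase | hcase
    · -- middle of α
      have hm1 : wordDist e 1 (pathAt e α m) = m := by
        rw [geodesic_pathAt e hsym hgen hα m, min_eq_left hcase]
      have hp := hpat (h⁻¹ * pathAt e α m) hz
      rw [hhz, hm1] at hp
      have hgz : wordDist e 1 (g * (h⁻¹ * pathAt e α m)) = wordDist e 1 g := by omega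
      have hrest : wordDist e (pathAt e α m) (wordEval e α) ≤ α.length - m := by
        have := wordDist_pathAt_le e (u := α) hcase
        rwa [pathAt_of_le e le_rfl] at this
      have hrest1 : wordDist e 1 ((h⁻¹ * pathAt e α m)⁻¹ * (wordEval e w' * e a))
          ≤ α.length - m := by
        rw [wordDist_one] at hrest
        have hre : (pathAt e α m)⁻¹ * wordEval e α
            = (h⁻¹ * pathAt e α m)⁻¹ * (wordEval e w' * e a) := by
          rw [hαe]; group
        rwa [hre] at hrest
      have hfin : wordDist e 1 (g * wordEval e w' * e a)
          ≤ wordDist e 1 g + (α.length - m) := by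
        have t1 := wordDist_triangle e hsym hgen 1 (g * (h⁻¹ * pathAt e α m))
          (g * wordEval e w' * e a)
        have t2 : wordDist e (g * (h⁻¹ * pathAt e α m)) (g * wordEval e w' * e a)
            = wordDist e 1 ((h⁻¹ * pathAt e α m)⁻¹ * (wordEval e w' * e a)) := by
          rw [wordDist_one]; congr 1; group
        omega
      omega
    · -- past the end of α
      have hpα : pathAt e α m = wordEval e α := pathAt_of_le e (le_of_lt hcase)
      have hαd : wordDist e 1 (wordEval e α) = α.length := hα.symm
      have hp := hpat (h⁻¹ * pathAt e α m) hz
      rw [hhz, hpα, hαd] at hp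
      have hgz : g * (h⁻¹ * wordEval e α) = g * wordEval e w' * e a := by
        rw [hαe]; group
      rw [hgz, hwa'] at hp
      omega

include hsym hgen hδ in
lemma coneType_eq_of_pattern {g h : G}
    (hpat : ∀ z : G, wordDist e 1 z ≤ 2 * δ + 4 →
      (wordDist e 1 (g * z) : ℤ) - (wordDist e 1 g : ℤ)
        = (wordDist e 1 (h * z) : ℤ) - (wordDist e 1 h : ℤ)) :
    coneType e g = coneType e h :=
  le_antisymm (coneType_subset_of_pattern e hsym hgen hδ hpat)
    (coneType_subset_of_pattern e hsym hgen hδ (fun z hz => (hpat z hz).symm))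

lemma cone_wellDef {g h : G} (hgh : coneType e g = coneType e h) {a : S}
    (ha : [a] ∈ coneType e g) :
    coneType e (g * e a) = coneType e (h * e a) := by
  ext w
  rw [cone_extend e ha w, cone_extend e (hgh ▸ ha) w, hgh]

end Cone

section Finiteness

variable (e : S → G) (hsym : ∀ a : S, ∃ b : S, e b = (e a)⁻¹)
  (hgen : Subgroup.closure (Set.range e) = ⊤)
  {δ : ℕ}
  (hδ : ∀ u v w : List S,
    IsGeodesicWord e u → IsGeodesicWord e v → IsGeodesicWord e w →
    wordEval e u * wordEval e v * wordEval e w = 1 →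
    ∀ i : ℕ, ∃ j : ℕ,
      wordDist e (pathAt e u i) (wordEval e u * pathAt e v j) ≤ δ ∨
      wordDist e (pathAt e u i) (wordEval e u * wordEval e v * pathAt e w j) ≤ δ)

include hsym hgen in
lemma ball_finite [Fintype S] (K : ℕ) : {z : G | wordDist e 1 z ≤ K}.Finite := by
  have h1 : {z : G | wordDist e 1 z ≤ K} ⊆ wordEval e '' {w : List S | w.length ≤ K} := by
    intro z hz
    obtain ⟨w, hl, he⟩ := wordDist_spec e hsym hgen 1 z
    refine ⟨w, ?_, by simpa using he⟩
    simp only [Set.mem_setOf_eq] at hz ⊢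
    omega
  exact ((List.finite_length_le S K).image _).subset h1

include hsym hgen hδ in
lemma coneType_range_finite [Fintype S] : (Set.range (coneType e (G := G))).Finite := by
  classical
  set K := 2 * δ + 4 with hK
  set B := {z : G | wordDist e 1 z ≤ K} with hB
  have hBfin : B.Finite := ball_finite e hsym hgen K
  have hBsub : Finite B := hBfin.to_subtype
  let pat : G → (B → ℤ) := fun g z =>
    (wordDist e 1 (g * z.val) : ℤ) - (wordDist e 1 g : ℤ)
  have hpatfin : (Set.range pat).Finite := by
    have hsub : Set.range pat ⊆ Set.univ.pi (fun _ : B => Set.Icc (-(K : ℤ)) K) := by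
      rintro _ ⟨g, rfl⟩ z _
      have hz : wordDist e 1 z.val ≤ K := z.2
      have t1 := wordDist_triangle e hsym hgen 1 g (g * z.val)
      have t2 : wordDist e g (g * z.val) = wordDist e 1 z.val := by
        have := wordDist_left_inv e g 1 z.val; simpa using this
      have t3 := wordDist_triangle e hsym hgen 1 (g * z.val) g
      have t4 : wordDist e (g * z.val) g = wordDist e 1 z.val := by
        rw [wordDist_comm e hsym hgen, t2]
      simp only [Set.mem_Icc, pat]
      omega
    exact (Set.Finite.pi (fun _ => Set.finite_Icc _ _)).subset hsub
  have hfac : ∀ g h : G, pat g = pat h → coneType e g = coneType e h := by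
    intro g h hp
    refine coneType_eq_of_pattern e hsym hgen hδ (fun z hz => ?_)
    have := congrFun hp ⟨z, hz⟩
    simpa [pat] using this
  let F : (B → ℤ) → Set (List S) := fun p =>
    if hex : ∃ g, pat g = p then coneType e (Classical.choose hex) else ∅
  have hsub2 : Set.range (coneType e (G := G)) ⊆ F '' (Set.range pat) := by
    rintro _ ⟨g, rfl⟩
    refine ⟨pat g, ⟨g, rfl⟩, ?_⟩
    have hex : ∃ g', pat g' = pat g := ⟨g, rfl⟩
    simp only [F, dif_pos hex]
    exact hfac _ _ (Classical.choose_spec hex)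
  exact (hpatfin.image F).subset hsub2

end Finiteness

section Acceptor

attribute [local instance] Classical.propDecidable

variable (e : S → G) (hsym : ∀ a : S, ∃ b : S, e b = (e a)⁻¹)
  (hgen : Subgroup.closure (Set.range e) = ⊤)
  {δ : ℕ}
  (hδ : ∀ u v w : List S,
    IsGeodesicWord e u → IsGeodesicWord e v → IsGeodesicWord e w →
    wordEval e u * wordEval e v * wordEval e w = 1 →
    ∀ i : ℕ, ∃ j : ℕ,
      wordDist e (pathAt e u i) (wordEval e u * pathAt e v j) ≤ δ ∨
      wordDist e (pathAt e u i) (wordEval e u * wordEval e v * pathAt e w j) ≤ δ)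

/-- The state space of the geodesic-word acceptor: cone types plus a dead state. -/
abbrev ConeState := Option {C : Set (List S) // C ∈ Set.range (coneType e (G := G))}

noncomputable def acceptorStep : ConeState e → S → ConeState e
  | none, _ => none
  | some ⟨C, hC⟩, a =>
      if _ : [a] ∈ C then
        some ⟨coneType e (Classical.choose hC * e a), Set.mem_range_self _⟩
      else none

/-- The geodesic-word acceptor DFA. -/
noncomputable def acceptorDFA : DFA S (ConeState e) where
  step := acceptorStep e
  start := some ⟨coneType e 1, Set.mem_range_self 1⟩
  accept := {q | q.isSome}

lemma geodesic_nil : IsGeodesicWord e ([] : List S) := by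
  rw [IsGeodesicWord, wordEval_nil, wordDist_self]
  rfl

include hsym hgen hδ in
lemma acceptorStep_eq {C : Set (List S)} (hC : C ∈ Set.range (coneType e (G := G)))
    (g : G) (hCg : C = coneType e g) (a : S) :
    acceptorStep e (some ⟨C, hC⟩) a =
      if [a] ∈ C then some ⟨coneType e (g * e a), Set.mem_range_self _⟩ else none := by
  show (if _ : [a] ∈ C then
      (some ⟨coneType e (Classical.choose hC * e a), Set.mem_range_self _⟩ : ConeState e)
    else none) = _
  by_cases h : [a] ∈ C
  · rw [dif_pos h, if_pos h]
    congr 1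
    apply Subtype.ext
    have hcs : coneType e (Classical.choose hC) = C := Classical.choose_spec hC
    have hgh : coneType e (Classical.choose hC) = coneType e g := by rw [hcs, hCg]
    have ha : [a] ∈ coneType e (Classical.choose hC) := by rw [hcs]; exact h
    exact cone_wellDef e hgh ha
  · rw [dif_neg h, if_neg h]

include hsym hgen in
lemma geodesic_append_iff (u : List S) (a : S) :
    IsGeodesicWord e (u ++ [a]) ↔
      IsGeodesicWord e u ∧ [a] ∈ coneType e (wordEval e u) := by
  have hlen : (u ++ [a]).length = u.length + 1 := by simp
  have heva : wordEval e (u ++ [a]) = wordEval e u * e a := by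
    rw [wordEval_append, wordEval_singleton]
  constructor
  · intro hg
    have hpre : wordDist e 1 (wordEval e u) = u.length := by
      have h1 := geodesic_pathAt e hsym hgen hg u.length
      have h2 : pathAt e (u ++ [a]) u.length = wordEval e u := by
        rw [pathAt, List.take_left]
      rw [h2] at h1
      rw [h1, hlen]
      omega
    refine ⟨by rw [IsGeodesicWord, hpre], ?_⟩
    rw [coneType, Set.mem_setOf_eq, wordEval_singleton, List.length_singleton, hpre]
    rw [← heva, ← hg, hlen]
  · rintro ⟨hu, ha⟩
    rw [coneType, Set.mem_setOf_eq, wordEval_singleton, List.length_singleton] at ha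
    rw [IsGeodesicWord, heva, ha, ← hu, hlen]

include hsym hgen hδ in
lemma acceptor_eval (u : List S) :
    (IsGeodesicWord e u →
      (acceptorDFA e).eval u
        = some ⟨coneType e (wordEval e u), Set.mem_range_self _⟩) ∧
    (¬ IsGeodesicWord e u → (acceptorDFA e).eval u = none) := by
  induction u using List.reverseRecOn with
  | nil =>
    constructor
    · intro _
      rfl
    · intro hne
      exact absurd (geodesic_nil e) hne
  | append_singleton u a ih =>
    have heval : (acceptorDFA e).eval (u ++ [a])
        = acceptorStep e ((acceptorDFA e).eval u) a := by
      show ((u ++ [a]).foldl (acceptorDFA e).step (acceptorDFA e).start) = _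
      rw [List.foldl_append]
      rfl
    constructor
    · intro hg
      obtain ⟨hu, ha⟩ := (geodesic_append_iff e hsym hgen u a).mp hg
      rw [heval, ih.1 hu]
      rw [acceptorStep_eq e hsym hgen hδ _ (wordEval e u) rfl a, if_pos ha]
      congr 1
      apply Subtype.ext
      rw [wordEval_append, wordEval_singleton]
    · intro hng
      by_cases hu : IsGeodesicWord e u
      · have ha : [a] ∉ coneType e (wordEval e u) := by
          intro ha
          exact hng ((geodesic_append_iff e hsym hgen u a).mpr ⟨hu, ha⟩)
        rw [heval, ih.1 hu]
        rw [acceptorStep_eq e hsym hgen hδ _ (wordEval e u) rfl a, if_neg ha]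
      · rw [heval, ih.2 hu]
        rfl

include hsym hgen hδ in
lemma acceptor_accepts (u : List S) :
    u ∈ (acceptorDFA e).accepts ↔ IsGeodesicWord e u := by
  rw [DFA.mem_accepts]
  by_cases hg : IsGeodesicWord e u
  · rw [(acceptor_eval e hsym hgen hδ u).1 hg]
    simpa [acceptorDFA] using hg
  · rw [(acceptor_eval e hsym hgen hδ u).2 hg]
    simpa [acceptorDFA] using hg

end Acceptor

section Diff

attribute [local instance] Classical.propDecidable

variable (e : S → G)

/-- The word difference determined by a padded pair word, with initial offset `d₀`. -/
def pairDiff (d₀ : G) (l : List (Option S × Option S)) : G :=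
  (wordEval (padEval e) (l.map Prod.fst))⁻¹ * d₀ * wordEval (padEval e) (l.map Prod.snd)

lemma pairDiff_nil (d₀ : G) : pairDiff e d₀ [] = d₀ := by
  simp [pairDiff, wordEval]

lemma pairDiff_append (d₀ : G) (l : List (Option S × Option S)) (p : Option S × Option S) :
    pairDiff e d₀ (l ++ [p])
      = (padEval e p.1)⁻¹ * pairDiff e d₀ l * padEval e p.2 := by
  simp only [pairDiff, List.map_append, wordEval_append, List.map_cons, List.map_nil,
    wordEval_singleton]
  group

variable (K : ℕ)

/-- State space of the difference automata: the `K`-ball plus a dead state. -/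
abbrev DiffState := Option {z : G // wordDist e 1 z ≤ K}

noncomputable def diffStep : DiffState e K → (Option S × Option S) → DiffState e K
  | none, _ => none
  | some ⟨d, _⟩, p =>
      if h : wordDist e 1 ((padEval e p.1)⁻¹ * d * padEval e p.2) ≤ K then
        some ⟨(padEval e p.1)⁻¹ * d * padEval e p.2, h⟩
      else none

/-- The difference automaton with initial offset `d₀` and accepting difference `tgt`. -/
noncomputable def diffDFA (d₀ : G) (h₀ : wordDist e 1 d₀ ≤ K) (tgt : G) :
    DFA (Option S × Option S) (DiffState e K) where
  step := diffStep e K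
  start := some ⟨d₀, h₀⟩
  accept := {q | Option.map Subtype.val q = some tgt}

lemma diff_eval_append (d₀ : G) (h₀ : wordDist e 1 d₀ ≤ K) (tgt : G)
    (l : List (Option S × Option S)) (p : Option S × Option S) :
    (diffDFA e K d₀ h₀ tgt).eval (l ++ [p])
      = diffStep e K ((diffDFA e K d₀ h₀ tgt).eval l) p := by
  show ((l ++ [p]).foldl (diffDFA e K d₀ h₀ tgt).step (diffDFA e K d₀ h₀ tgt).start) = _
  rw [List.foldl_append]
  rfl

lemma diff_eval_sound (d₀ : G) (h₀ : wordDist e 1 d₀ ≤ K) (tgt : G)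
    (l : List (Option S × Option S)) :
    ∀ b, (diffDFA e K d₀ h₀ tgt).eval l = some b → b.val = pairDiff e d₀ l := by
  induction l using List.reverseRecOn with
  | nil =>
    intro b hb
    have hb' : (some ⟨d₀, h₀⟩ : DiffState e K) = some b := by exact hb
    rw [pairDiff_nil]
    cases hb'
    rfl
  | append_singleton l p ih =>
    intro b hb
    rw [diff_eval_append] at hb
    cases heq : (diffDFA e K d₀ h₀ tgt).eval l with
    | none => rw [heq] at hb; exact absurd hb (by simp [diffStep])
    | some b' =>
      rw [heq] at hb
      have hval := ih b' heq
      obtain ⟨d, hd⟩ := b'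
      simp only [diffStep] at hb
      split at hb
      · cases hb
        simp only at hval
        rw [pairDiff_append, ← hval]
      · exact absurd hb (by simp)

lemma diff_eval_some (d₀ : G) (h₀ : wordDist e 1 d₀ ≤ K) (tgt : G)
    (l : List (Option S × Option S))
    (h : ∀ j, wordDist e 1 (pairDiff e d₀ (l.take j)) ≤ K) :
    ∃ b, (diffDFA e K d₀ h₀ tgt).eval l = some b := by
  induction l using List.reverseRecOn with
  | nil => exact ⟨⟨d₀, h₀⟩, rfl⟩
  | append_singleton l p ih =>
    obtain ⟨b, hb⟩ := ih (fun j => by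
      rcases le_or_gt j l.length with hj | hj
      · have := h j
        rwa [List.take_append_of_le_length hj] at this
      · have := h l.length
        rw [List.take_append_of_le_length le_rfl, List.take_of_length_le le_rfl] at this
        rwa [List.take_of_length_le (by omega)])
    rw [diff_eval_append, hb]
    have hbv := diff_eval_sound e K d₀ h₀ tgt l b hb
    obtain ⟨d, hd⟩ := b
    simp only at hbv
    subst hbv
    have hcond : wordDist e 1 ((padEval e p.1)⁻¹ * pairDiff e d₀ l * padEval e p.2) ≤ K := by
      have := h (l.length + 1)
      rwa [List.take_of_length_le (by simp), pairDiff_append] at this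
    simp only [diffStep]
    rw [dif_pos hcond]
    exact ⟨_, rfl⟩

-- padWord bridging lemmas

lemma wordEval_map_some (w : List S) :
    wordEval (padEval e) (w.map some) = wordEval e w := by
  simp only [wordEval, List.map_map]
  rfl

lemma wordEval_replicate_none (m : ℕ) :
    wordEval (padEval e) (List.replicate m none) = 1 := by
  simp [wordEval, List.map_replicate, padEval]

lemma padList_take_eval (u : List S) (m j : ℕ) :
    wordEval (padEval e) ((u.map some ++ List.replicate m none).take j) = pathAt e u j := by
  rw [List.take_append, wordEval_append, ← List.map_take,
    wordEval_map_some, List.take_replicate, wordEval_replicate_none, mul_one]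
  rfl

lemma padWord_lengths (u v : List S) :
    (u.map some ++ List.replicate (max u.length v.length - u.length) none).length
      = max u.length v.length ∧
    (v.map some ++ List.replicate (max u.length v.length - v.length) none).length
      = max u.length v.length := by
  constructor <;> simp <;> omega

lemma padWord_fst (u v : List S) :
    (padWord u v).map Prod.fst
      = u.map some ++ List.replicate (max u.length v.length - u.length) none := by
  apply List.map_fst_zip
  rw [(padWord_lengths u v).1, (padWord_lengths u v).2]

lemma padWord_snd (u v : List S) :
    (padWord u v).map Prod.snd
      = v.map some ++ List.replicate (max u.length v.length - v.length) none := by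
  apply List.map_snd_zip
  rw [(padWord_lengths u v).1, (padWord_lengths u v).2]

lemma padWord_length (u v : List S) :
    (padWord u v).length = max u.length v.length := by
  have h1 := (padWord_lengths u v).1
  have h2 := (padWord_lengths u v).2
  simp only [padWord, List.length_zip, h1, h2, min_self]

lemma pairDiff_padWord_take (d₀ : G) (u v : List S) (j : ℕ) :
    pairDiff e d₀ ((padWord u v).take j)
      = (pathAt e u j)⁻¹ * d₀ * pathAt e v j := by
  unfold pairDiff
  rw [List.map_take, List.map_take, padWord_fst, padWord_snd,
    padList_take_eval, padList_take_eval]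

end Diff

section Diff2

variable (e : S → G) (K : ℕ)

lemma pairDiff_padWord (d₀ : G) (u v : List S) :
    pairDiff e d₀ (padWord u v) = (wordEval e u)⁻¹ * d₀ * wordEval e v := by
  conv_lhs => rw [← (List.take_length : List.take (padWord u v).length (padWord u v) = padWord u v)]
  rw [pairDiff_padWord_take, padWord_length, pathAt_of_le e (le_max_left _ _),
    pathAt_of_le e (le_max_right _ _)]

lemma diff_accepts_iff (d₀ : G) (h₀ : wordDist e 1 d₀ ≤ K) (tgt : G)
    (l : List (Option S × Option S)) :
    l ∈ (diffDFA e K d₀ h₀ tgt).accepts ↔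
      ∃ b, (diffDFA e K d₀ h₀ tgt).eval l = some b ∧ b.val = tgt := by
  rw [DFA.mem_accepts]
  show Option.map Subtype.val ((diffDFA e K d₀ h₀ tgt).eval l) = some tgt ↔ _
  cases heval : (diffDFA e K d₀ h₀ tgt).eval l with
  | none => simp
  | some b => simp

end Diff2

section Reindex

variable {α : Type*} {σ : Type*} {τ : Type*}

/-- Transport of a DFA along an equivalence of state spaces. -/
def reindexDFA (f : σ ≃ τ) (M : DFA α σ) : DFA α τ where
  step q a := f (M.step (f.symm q) a)
  start := f M.start
  accept := {q | f.symm q ∈ M.accept}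

lemma reindexDFA_evalFrom (f : σ ≃ τ) (M : DFA α σ) (s : σ) (l : List α) :
    (reindexDFA f M).evalFrom (f s) l = f (M.evalFrom s l) := by
  induction l generalizing s with
  | nil => rfl
  | cons a l ih =>
    show (reindexDFA f M).evalFrom ((reindexDFA f M).step (f s) a) l = _
    have hstep : (reindexDFA f M).step (f s) a = f (M.step s a) := by
      show f (M.step (f.symm (f s)) a) = _
      rw [Equiv.symm_apply_apply]
    rw [hstep, ih]
    rfl

lemma reindexDFA_accepts (f : σ ≃ τ) (M : DFA α σ) (l : List α) :
    l ∈ (reindexDFA f M).accepts ↔ l ∈ M.accepts := by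
  rw [DFA.mem_accepts, DFA.mem_accepts]
  show (reindexDFA f M).evalFrom (f M.start) l ∈ _ ↔ _
  rw [reindexDFA_evalFrom]
  show f.symm (f (M.evalFrom M.start l)) ∈ M.accept ↔ _
  rw [Equiv.symm_apply_apply]
  rfl

end Reindex

end WHB

/-- Every word-hyperbolic group is biautomatic; moreover the structure can be chosen
so that the language of normal forms consists of geodesic words. -/
theorem wordHyperbolic_biautomatic
    {G : Type*} [Group G] {S : Type*} [Fintype S] (e : S → G)
    (hsym : ∀ a : S, ∃ b : S, e b = (e a)⁻¹)
    (hgen : Subgroup.closure (Set.range e) = ⊤)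
    (hhyp : WordHyperbolic e) :
    ∃ BS : BiautomaticStructure G S e,
      ∀ u ∈ BS.toAutomaticStructure.L.accepts, IsGeodesicWord e u := by
  classical
  obtain ⟨δ, hδ⟩ := hhyp
  have h1K : wordDist e 1 (1 : G) ≤ 4 * δ + 8 := by
    rw [WHB.wordDist_self]; omega
  have hsK : ∀ s : Option S, wordDist e 1 (padEval e s) ≤ 4 * δ + 8 :=
    fun s => le_trans (WHB.dist_pad_letter e s) (by omega)
  haveI finC : Fintype {C : Set (List S) // C ∈ Set.range (WHB.coneType e (G := G))} :=
    (WHB.coneType_range_finite e hsym hgen hδ).fintype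
  haveI finB : Fintype {z : G // wordDist e 1 z ≤ 4 * δ + 8} :=
    (WHB.ball_finite e hsym hgen _).fintype
  haveI finCS : Fintype (WHB.ConeState e (G := G)) := inferInstance
  haveI finDS : Fintype (WHB.DiffState e (G := G) (4 * δ + 8)) := inferInstance
  have hLacc : ∀ u : List S,
      u ∈ (WHB.reindexDFA (Fintype.equivFin _) (WHB.acceptorDFA e)).accepts
        ↔ IsGeodesicWord e u :=
    fun u => (WHB.reindexDFA_accepts _ _ u).trans (WHB.acceptor_accepts e hsym hgen hδ u)
  refine ⟨{
    σL := Fin (Fintype.card (WHB.ConeState e (G := G)))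
    instFinL := inferInstance
    L := WHB.reindexDFA (Fintype.equivFin _) (WHB.acceptorDFA e)
    σM := fun _ => Fin (Fintype.card (WHB.DiffState e (G := G) (4 * δ + 8)))
    instFinM := fun _ => inferInstance
    M := fun s => WHB.reindexDFA (Fintype.equivFin _)
      (WHB.diffDFA e (4 * δ + 8) 1 h1K ((padEval e s)⁻¹))
    surjective := ?_
    mult := ?_
    σN := fun _ => Fin (Fintype.card (WHB.DiffState e (G := G) (4 * δ + 8)))
    instFinN := fun _ => inferInstance
    N := fun s => WHB.reindexDFA (Fintype.equivFin _)
      (WHB.diffDFA e (4 * δ + 8) (padEval e s) (hsK s) 1)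
    multLeft := ?_ }, ?_⟩
  · -- surjective
    intro g
    obtain ⟨u, hu, hue⟩ := WHB.exists_geodesic_word e hsym hgen g
    exact ⟨u, (hLacc u).mpr hu, hue⟩
  · -- mult
    intro s u v hu hv
    rw [hLacc] at hu hv
    rw [WHB.reindexDFA_accepts, WHB.diff_accepts_iff]
    constructor
    · rintro ⟨b, hb, hbt⟩
      have hbv := WHB.diff_eval_sound e _ _ _ _ _ b hb
      rw [WHB.pairDiff_padWord] at hbv
      have h1 : (wordEval e u)⁻¹ * 1 * wordEval e v = (padEval e s)⁻¹ := by
        rw [← hbv, hbt]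
      have h3 : wordEval e v * ((wordEval e u)⁻¹ * 1 * wordEval e v)⁻¹ = wordEval e u := by
        group
      rw [h1] at h3
      rw [← h3, inv_inv]
    · intro heq
      have hFT : ∀ j, wordDist e 1 (WHB.pairDiff e 1 ((padWord u v).take j)) ≤ 4 * δ + 8 := by
        intro j
        rw [WHB.pairDiff_padWord_take]
        have hft := WHB.fellowC e hsym hgen hδ hu hv (x := 1) (y := padEval e s)
          (by rw [WHB.wordDist_self]; omega) (WHB.dist_pad_letter e s)
          (by rw [one_mul]; exact heq) j
        rw [WHB.wordDist_one] at hft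
        rw [show (pathAt e u j)⁻¹ * 1 * pathAt e v j
            = (pathAt e u j)⁻¹ * (1 * pathAt e v j) by group]
        exact hft
      obtain ⟨b, hb⟩ := WHB.diff_eval_some e _ _ _ _ _ hFT
      refine ⟨b, hb, ?_⟩
      have hbv := WHB.diff_eval_sound e _ _ _ _ _ b hb
      rw [WHB.pairDiff_padWord] at hbv
      rw [hbv, heq]
      group
  · -- multLeft
    intro s u v hu hv
    rw [hLacc] at hu hv
    rw [WHB.reindexDFA_accepts, WHB.diff_accepts_iff]
    constructor
    · rintro ⟨b, hb, hbt⟩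
      have hbv := WHB.diff_eval_sound e _ _ _ _ _ b hb
      rw [WHB.pairDiff_padWord] at hbv
      have h1 : (wordEval e u)⁻¹ * padEval e s * wordEval e v = 1 := by
        rw [← hbv, hbt]
      have h3 : wordEval e u * ((wordEval e u)⁻¹ * padEval e s * wordEval e v)
          = padEval e s * wordEval e v := by group
      rw [h1, mul_one] at h3
      exact h3
    · intro heq
      have hFT : ∀ j, wordDist e 1 (WHB.pairDiff e (padEval e s) ((padWord u v).take j))
          ≤ 4 * δ + 8 := by
        intro j
        rw [WHB.pairDiff_padWord_take]
        have hft := WHB.fellowC e hsym hgen hδ hu hv (x := padEval e s) (y := 1)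
          (WHB.dist_pad_letter e s) (by rw [WHB.wordDist_self]; omega)
          (by rw [mul_one]; exact heq) j
        rw [WHB.wordDist_one] at hft
        rw [show (pathAt e u j)⁻¹ * padEval e s * pathAt e v j
            = (pathAt e u j)⁻¹ * (padEval e s * pathAt e v j) by group]
        exact hft
      obtain ⟨b, hb⟩ := WHB.diff_eval_some e _ _ _ _ _ hFT
      refine ⟨b, hb, ?_⟩
      have hbv := WHB.diff_eval_sound e _ _ _ _ _ b hb
      rw [WHB.pairDiff_padWord] at hbv
      rw [hbv, heq]
      group
  · -- geodesic language
    intro u hu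
    exact (hLacc u).mp hu
end

section
/- Brunner–Sidki: for every n ≥ 1, the affine group ℤⁿ ⋊ GLₙ(ℤ) is an automata group; that is, there exists an invertible Mealy automaton M over a finite alphabet such that the group G(M) generated by the permutations of A* computed by its states is isomorphic to ℤⁿ ⋊ GLₙ(ℤ). -/
/-- The transformation of `A*` computed by the state `q` of the Mealy automaton with
transition function `τ : Q × A → A × Q` (written `q·a = b·q'` when `τ (q,a) = (b,q')`). -/
def mealyRun {A Q : Type*} (τ : Q × A → A × Q) : Q → List A → List A
  | _, [] => []
  | q, a :: v => (τ (q, a)).1 :: mealyRun τ (τ (q, a)).2 v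

/-- A map `A* → A*` is automatic if it is computed by a state of some Mealy automaton
with finitely many states. -/
def IsAutomaticMap {A : Type*} (f : List A → List A) : Prop :=
  ∃ (Q : Type) (_ : Fintype Q) (τ : Q × A → A × Q) (q : Q), f = mealyRun τ q

/-- A Mealy automaton is invertible if at every state, the output-letter map
`a ↦ first component of τ (q, a)` is a permutation of the alphabet. -/
def MealyInvertible {A Q : Type*} (τ : Q × A → A × Q) : Prop :=
  ∀ q : Q, Function.Bijective (fun a => (τ (q, a)).1)

namespace BS

section Mealy
variable {A Q : Type*}

noncomputable def mealyInv (τ : Q × A → A × Q) (h : MealyInvertible τ) : Q → List A → List A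
  | _, [] => []
  | q, b :: v =>
    let a := (Equiv.ofBijective _ (h q)).symm b
    a :: mealyInv τ h (τ (q, a)).2 v

lemma mealyRun_mealyInv (τ : Q × A → A × Q) (h : MealyInvertible τ) :
    ∀ (w : List A) (q : Q), mealyRun τ q (mealyInv τ h q w) = w := by
  intro w
  induction w with
  | nil => intro q; rfl
  | cons b v ih =>
    intro q
    simp only [mealyInv, mealyRun, ih]
    congr 1
    exact (Equiv.ofBijective _ (h q)).apply_symm_apply b

lemma mealyInv_mealyRun (τ : Q × A → A × Q) (h : MealyInvertible τ) :
    ∀ (w : List A) (q : Q), mealyInv τ h q (mealyRun τ q w) = w := by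
  intro w
  induction w with
  | nil => intro q; rfl
  | cons a v ih =>
    intro q
    have ha : (Equiv.ofBijective _ (h q)).symm (τ (q, a)).1 = a :=
      (Equiv.ofBijective (fun a => (τ (q, a)).1) (h q)).symm_apply_apply a
    simp only [mealyRun, mealyInv, ha, ih]

noncomputable def mealyPerm (τ : Q × A → A × Q) (h : MealyInvertible τ) (q : Q) :
    Equiv.Perm (List A) :=
  ⟨mealyRun τ q, mealyInv τ h q, fun w => mealyInv_mealyRun τ h w q,
    fun w => mealyRun_mealyInv τ h w q⟩

@[simp] lemma mealyPerm_apply (τ : Q × A → A × Q) (h : MealyInvertible τ) (q : Q) (w : List A) :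
    mealyPerm τ h q w = mealyRun τ q w := rfl

end Mealy

variable {n : ℕ}
abbrev Alpha (n : ℕ) := Fin n → ZMod 2
def lift (d : Alpha n) : Fin n → ℤ := fun i => ((d i).val : ℤ)

lemma lift_nonneg (d : Alpha n) (i : Fin n) : 0 ≤ lift d i := Int.natCast_nonneg _

lemma lift_le_one (d : Alpha n) (i : Fin n) : lift d i ≤ 1 := by
  have : (d i).val < 2 := (d i).val_lt
  unfold lift; omega
def dig (z : Fin n → ℤ) : Alpha n := fun i => ((z i : ℤ) : ZMod 2)
def half (z : Fin n → ℤ) : Fin n → ℤ := fun i => z i / 2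
def digits : ℕ → (Fin n → ℤ) → List (Alpha n)
  | 0, _ => []
  | k + 1, z => dig z :: digits k (half z)
def num : List (Alpha n) → Fin n → ℤ
  | [] => fun _ => 0
  | d :: w => fun i => lift d i + 2 * num w i

@[simp] lemma length_digits (k : ℕ) (z : Fin n → ℤ) : (digits k z).length = k := by
  induction k generalizing z with
  | zero => rfl
  | succ k ih => simp [digits, ih]

lemma intCast_eq_iff (a b : ℤ) : ((a : ZMod 2) = (b : ZMod 2)) ↔ (2:ℤ) ∣ b - a := by
  rw [ZMod.intCast_eq_intCast_iff, Int.ModEq]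
  exact ⟨fun h => Int.ModEq.dvd h, fun h => Int.modEq_iff_dvd.mpr h⟩

lemma lift_dig (z : Fin n → ℤ) (i : Fin n) : lift (dig z) i = z i % 2 := by
  have h2 : z i % 2 = 0 ∨ z i % 2 = 1 := Int.emod_two_eq_zero_or_one (z i)
  have hcast : ((z i : ℤ) : ZMod 2) = ((z i % 2 : ℤ) : ZMod 2) := by
    rw [intCast_eq_iff]
    have := Int.emod_add_mul_ediv (z i) 2
    exact ⟨-(z i / 2), by linarith⟩
  rcases h2 with h | h <;> (simp only [lift, dig, hcast, h]; decide)

lemma two_mul_half (z : Fin n → ℤ) (i : Fin n) : 2 * half z i = z i - lift (dig z) i := by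
  rw [lift_dig]
  have := Int.emod_add_mul_ediv (z i) 2
  unfold half; linarith

lemma dig_congr {z z' : Fin n → ℤ} (h : ∀ i, (2:ℤ) ∣ z' i - z i) : dig z = dig z' := by
  funext i
  exact (intCast_eq_iff _ _).mpr (h i)

lemma half_congr {k : ℕ} {z z' : Fin n → ℤ} (h : ∀ i, (2 ^ (k+1) : ℤ) ∣ z' i - z i) :
    ∀ i, (2 ^ k : ℤ) ∣ half z' i - half z i := by
  intro i
  obtain ⟨u, hu⟩ := h i
  have hd : lift (dig z) i = lift (dig z') i := by
    have := dig_congr (z := z) (z' := z') (fun j => dvd_trans (dvd_pow_self 2 (Nat.succ_ne_zero k)) (h j))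
    rw [this]
  have h1 := two_mul_half z i
  have h2 := two_mul_half z' i
  refine ⟨u, ?_⟩
  have : 2 * (half z' i - half z i) = 2 * (2 ^ k * u) := by
    rw [mul_sub, h1, h2, ← hd]; push_cast; ring_nf; ring_nf at hu; linarith
  linarith

lemma digits_congr : ∀ (k : ℕ) {z z' : Fin n → ℤ}, (∀ i, (2 ^ k : ℤ) ∣ z' i - z i) →
    digits k z = digits k z'
  | 0, _, _, _ => rfl
  | k + 1, z, z', h => by
    simp only [digits]
    rw [dig_congr (fun i => dvd_trans (dvd_pow_self 2 (Nat.succ_ne_zero k)) (h i)),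
      digits_congr k (half_congr h)]

lemma num_digits : ∀ (k : ℕ) (z : Fin n → ℤ) (i : Fin n),
    (2 ^ k : ℤ) ∣ num (digits k z) i - z i
  | 0, z, i => by simpa [num, digits] using ⟨-z i, by ring⟩
  | k + 1, z, i => by
    obtain ⟨u, hu⟩ := num_digits k (half z) i
    refine ⟨u, ?_⟩
    simp only [digits, num]
    have := two_mul_half z i
    have h3 : (2:ℤ)^(k+1) * u = 2 * (2 ^ k * u) := by ring
    linarith [hu, this, h3]

lemma digits_num : ∀ (w : List (Alpha n)), digits w.length (num w) = w
  | [] => rfl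
  | d :: w => by
    have hdig : dig (num (d :: w)) = d := by
      funext i
      show ((lift d i + 2 * num w i : ℤ) : ZMod 2) = d i
      push_cast
      simp only [lift]
      push_cast
      rw [ZMod.natCast_val, ZMod.cast_id]
      simp
      exact Or.inl rfl
    have hhalf : half (num (d :: w)) = num w := by
      funext i
      show (lift d i + 2 * num w i) / 2 = num w i
      rw [Int.add_mul_ediv_left _ _ (by norm_num : (2:ℤ) ≠ 0)]
      have h0 : 0 ≤ lift d i := Int.natCast_nonneg _
      have h1 : lift d i < 2 := by
        have : (d i).val < 2 := (d i).val_lt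
        unfold lift; exact_mod_cast this
      rw [Int.ediv_eq_zero_of_lt h0 h1, zero_add]
    show dig (num (d::w)) :: digits w.length (half (num (d :: w))) = d :: w
    rw [hdig, hhalf, digits_num w]

section Phi
variable {n : ℕ}

abbrev Aff (n : ℕ) := (Fin n → ℤ) ≃ᵃ[ℤ] (Fin n → ℤ)

lemma aff_map_congr (f : Aff n) (k : ℕ) {z z' : Fin n → ℤ}
    (h : ∀ i, (2 ^ k : ℤ) ∣ z' i - z i) : ∀ i, (2 ^ k : ℤ) ∣ f z' i - f z i := by
  intro i
  have hz : z' = (z' - z) +ᵥ z := by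
    funext j; simp [vadd_eq_add]
  have hf : f z' = f.linear (z' - z) +ᵥ f z := by
    conv_lhs => rw [hz]
    exact f.map_vadd z (z' - z)
  set u : Fin n → ℤ := fun i => (z' i - z i) / 2 ^ k with hu
  have hzu : z' - z = (2 ^ k : ℤ) • u := by
    funext j
    simp only [Pi.sub_apply, Pi.smul_apply, smul_eq_mul, hu]
    exact (Int.mul_ediv_cancel' (h j)).symm
  have : f z' i - f z i = f.linear (z' - z) i := by
    rw [hf]; simp [vadd_eq_add]
  rw [this, hzu, map_smul]
  exact ⟨f.linear u i, by simp⟩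

/-- The word map induced by an affine equivalence of `ℤⁿ`. -/
def wordMap (f : Aff n) (w : List (Alpha n)) : List (Alpha n) :=
  digits w.length (f (num w))

lemma length_wordMap (f : Aff n) (w : List (Alpha n)) : (wordMap f w).length = w.length := by
  simp [wordMap]

lemma dvd_sub_comm' {a b c : ℤ} (h : a ∣ c - b) : a ∣ b - c := by
  simpa [neg_sub] using dvd_neg.mpr h

lemma wordMap_comp (f g : Aff n) (w : List (Alpha n)) :
    wordMap f (wordMap g w) = wordMap (g.trans f) w := by
  simp only [wordMap, length_digits]
  have h1 : ∀ i, (2 ^ w.length : ℤ) ∣ g (num w) i - num (digits w.length (g (num w))) i :=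
    fun i => dvd_sub_comm' (num_digits w.length (g (num w)) i)
  have h2 := aff_map_congr f w.length h1
  refine digits_congr _ (fun i => ?_)
  simpa [AffineEquiv.trans_apply] using h2 i

lemma wordMap_refl (w : List (Alpha n)) : wordMap (AffineEquiv.refl ℤ (Fin n → ℤ)) w = w := by
  simp [wordMap, digits_num]

/-- The permutation of words induced by an affine equivalence. -/
def affPerm (f : Aff n) : Equiv.Perm (List (Alpha n)) where
  toFun := wordMap f
  invFun := wordMap f.symm
  left_inv w := by
    rw [wordMap_comp, AffineEquiv.self_trans_symm, wordMap_refl]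
  right_inv w := by
    rw [wordMap_comp, AffineEquiv.symm_trans_self, wordMap_refl]

/-- `affPerm` as a group homomorphism. -/
def Phi : Aff n →* Equiv.Perm (List (Alpha n)) where
  toFun := affPerm
  map_one' := by
    refine Equiv.ext fun w => ?_
    exact wordMap_refl w
  map_mul' f g := by
    refine Equiv.ext fun w => ?_
    show wordMap (f * g) w = wordMap f (wordMap g w)
    rw [wordMap_comp, AffineEquiv.mul_def]

lemma Phi_key {f g : Aff n} (hfg : Phi f = Phi g) (k : ℕ) (z : Fin n → ℤ) (i : Fin n) :
    (2 ^ k : ℤ) ∣ f z i - g z i := by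
  set z' := num (digits k z) with hz'def
  have hz' : ∀ i, (2 ^ k : ℤ) ∣ z' i - z i := num_digits k z
  have hw : digits k (f z') = digits k (g z') := by
    have h0 := congrArg (fun (p : Equiv.Perm (List (Alpha n))) => p (digits k z)) hfg
    simpa [Phi, affPerm, wordMap, length_digits, hz'def] using h0
  set N := num (digits k (f z')) with hNdef
  have hN : N = num (digits k (g z')) := by rw [hNdef, hw]
  have d1 : (2 ^ k : ℤ) ∣ f z i - f z' i :=
    aff_map_congr f k (fun j => dvd_sub_comm' (hz' j)) i
  have d2 : (2 ^ k : ℤ) ∣ f z' i - N i := dvd_sub_comm' (num_digits k (f z') i)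
  have d3 : (2 ^ k : ℤ) ∣ N i - g z' i := by rw [hN]; exact num_digits k (g z') i
  have d4 : (2 ^ k : ℤ) ∣ g z' i - g z i := aff_map_congr g k hz' i
  have hsum := dvd_add (dvd_add (dvd_add d1 d2) d3) d4
  have heq : (f z i - f z' i) + (f z' i - N i) + (N i - g z' i) + (g z' i - g z i)
      = f z i - g z i := by ring
  rwa [heq] at hsum

lemma Phi_injective : Function.Injective (Phi (n := n)) := by
  intro f g hfg
  have hz : ∀ z, f z = g z := by
    intro z
    funext i
    have key := fun k => Phi_key hfg k z i
    set d := f z i - g z i with hd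
    have : d = 0 := by
      by_contra hne
      have habs : (0:ℤ) < |d| := abs_pos.mpr hne
      have hd1 : (2 ^ d.natAbs : ℤ) ∣ |d| := (dvd_abs _ _).mpr (key d.natAbs)
      have hle : (2 ^ d.natAbs : ℤ) ≤ |d| := Int.le_of_dvd habs hd1
      have hlt : (d.natAbs : ℤ) < 2 ^ d.natAbs := by
        exact_mod_cast (Nat.lt_two_pow_self : d.natAbs < 2 ^ d.natAbs)
      rw [Int.abs_eq_natAbs] at hle
      omega
    linarith [this]
  exact AffineEquiv.ext hz

end Phi

section Automaton
variable {n : ℕ}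

open Matrix

/-- Index type for the generator matrices. -/
abbrev Gen (n : ℕ) := (Fin n × Fin n) ⊕ Fin n

def gmat : Gen n → Matrix (Fin n) (Fin n) ℤ
  | .inl (i, j) => if i = j then 1 else Matrix.transvection i j 1
  | .inr i => Matrix.diagonal (fun j => if j = i then -1 else 1)

def ginv : Gen n → Matrix (Fin n) (Fin n) ℤ
  | .inl (i, j) => if i = j then 1 else Matrix.transvection i j (-1)
  | .inr i => Matrix.diagonal (fun j => if j = i then -1 else 1)

lemma gmat_mul_ginv (g : Gen n) : gmat g * ginv g = 1 := by
  rcases g with ⟨i, j⟩ | i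
  · by_cases h : i = j
    · simp [gmat, ginv, h]
    · simp only [gmat, ginv, h, if_false]
      rw [Matrix.transvection_mul_transvection_same i j h, add_neg_cancel,
        Matrix.transvection_zero]
  · simp only [gmat, ginv, Matrix.diagonal_mul_diagonal]
    have hfun : (fun j => (if j = i then (-1:ℤ) else 1) * (if j = i then -1 else 1))
        = fun _ => (1:ℤ) := by
      funext j; by_cases h : j = i <;> simp [h]
    rw [hfun, Matrix.diagonal_one]

lemma ginv_mul_gmat (g : Gen n) : ginv g * gmat g = 1 := by
  rcases g with ⟨i, j⟩ | i
  · by_cases h : i = j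
    · simp [gmat, ginv, h]
    · simp only [gmat, ginv, h, if_false]
      rw [Matrix.transvection_mul_transvection_same i j h, neg_add_cancel,
        Matrix.transvection_zero]
  · exact gmat_mul_ginv (.inr i)

/-- The output bound: `-1 ≤ (gmat g) *ᵥ (lift d) ≤ 2` componentwise. -/
lemma gmat_mulVec_bounds (g : Gen n) (d : Alpha n) (a : Fin n) :
    -1 ≤ (gmat g).mulVec (lift d) a ∧ (gmat g).mulVec (lift d) a ≤ 2 := by
  have h0 := lift_nonneg d
  have h1 := lift_le_one d
  rcases g with ⟨i, j⟩ | i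
  · by_cases h : i = j
    · simp only [gmat, h, if_true, Matrix.one_mulVec]
      constructor <;> [linarith [h0 a]; linarith [h1 a]]
    · simp only [gmat, h, if_false, Matrix.transvection, Matrix.add_mulVec,
        Matrix.one_mulVec, Matrix.single_mulVec, Pi.add_apply]
      by_cases ha : a = i
      · subst ha
        simp only [Function.update_self, one_mul]
        constructor <;> [linarith [h0 a, h0 j]; linarith [h1 a, h1 j]]
      · rw [Function.update_of_ne ha]
        simp only [Pi.zero_apply, add_zero]
        constructor <;> [linarith [h0 a]; linarith [h1 a]]
  · simp only [gmat, Matrix.mulVec_diagonal]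
    by_cases h : a = i
    · subst h
      rw [if_pos rfl]
      exact ⟨by linarith [h1 a], by linarith [h0 a]⟩
    · simp only [h, if_false, one_mul]
      exact ⟨by linarith [h0 a], by linarith [h1 a]⟩

/-- State space: generator matrix together with a translation vector in `[-3,3]ⁿ`. -/
abbrev StQ (n : ℕ) := Gen n × (Fin n → Set.Icc (-3 : ℤ) 3)

noncomputable instance : Fintype (StQ n) := by
  classical
  infer_instance

def stv (q : StQ n) : Fin n → ℤ := fun i => (q.2 i : ℤ)

lemma stv_bounds (q : StQ n) (i : Fin n) : -3 ≤ stv q i ∧ stv q i ≤ 3 :=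
  ⟨(q.2 i).2.1, (q.2 i).2.2⟩

lemma half_bound {v : ℤ} (h1 : -4 ≤ v) (h2 : v ≤ 5) : -3 ≤ v / 2 ∧ v / 2 ≤ 3 := by
  constructor
  · have : (-6 : ℤ) / 2 ≤ v / 2 := Int.ediv_le_ediv (by norm_num) (by linarith)
    simpa using this
  · have : v / 2 ≤ (5 : ℤ) / 2 := Int.ediv_le_ediv (by norm_num) h2
    omega

/-- Transition function of the Brunner–Sidki automaton. -/
def trans (p : StQ n × Alpha n) : Alpha n × StQ n :=
  let v := (gmat p.1.1).mulVec (lift p.2) + stv p.1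
  (dig v, (p.1.1, fun i => ⟨half v i, by
    have hb := gmat_mulVec_bounds p.1.1 p.2 i
    have hm := stv_bounds p.1 i
    have := half_bound (v := (gmat p.1.1).mulVec (lift p.2) i + stv p.1 i)
      (by linarith [hb.1, hm.1]) (by linarith [hb.2, hm.2])
    simp only [Set.mem_Icc, half]; exact this⟩))

lemma trans_out (q : StQ n) (d : Alpha n) :
    (trans (q, d)).1 = dig ((gmat q.1).mulVec (lift d) + stv q) := rfl

lemma trans_fst (q : StQ n) (d : Alpha n) : (trans (q, d)).2.1 = q.1 := rfl

lemma trans_stv (q : StQ n) (d : Alpha n) :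
    stv (trans (q, d)).2 = half ((gmat q.1).mulVec (lift d) + stv q) := rfl

/-- The fundamental run formula. -/
lemma run_formula : ∀ (w : List (Alpha n)) (q : StQ n),
    mealyRun trans q w = digits w.length ((gmat q.1).mulVec (num w) + stv q)
  | [], _ => rfl
  | d :: w, q => by
    set a := gmat q.1 with ha
    set m := stv q with hm
    have hnum : num (d :: w) = lift d + (2:ℤ) • num w := by
      funext i; show lift d i + 2 * num w i = _; simp [Pi.smul_apply]; try ring
    set v := a.mulVec (num (d :: w)) + m with hv
    have hv' : v = a.mulVec (lift d) + m + (2:ℤ) • a.mulVec (num w) := by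
      rw [hv, hnum, Matrix.mulVec_add, Matrix.mulVec_smul]
      abel
    have hdig : dig (a.mulVec (lift d) + m) = dig v := by
      refine dig_congr (fun i => ?_)
      rw [hv']
      exact ⟨a.mulVec (num w) i, by simp [Pi.smul_apply]; try ring⟩
    have hhalf : a.mulVec (num w) + half (a.mulVec (lift d) + m) = half v := by
      funext i
      refine mul_left_cancel₀ (two_ne_zero (α := ℤ)) ?_
      have e1 := two_mul_half v i
      have e2 := two_mul_half (a.mulVec (lift d) + m) i
      have e3 : lift (dig v) i = lift (dig (a.mulVec (lift d) + m)) i := by rw [hdig]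
      have e4 : v i = a.mulVec (lift d) i + m i + 2 * a.mulVec (num w) i := by
        rw [hv']; simp [Pi.smul_apply]; try ring
      simp only [Pi.add_apply] at e1 e2 ⊢
      rw [mul_add]
      rw [e1, e2, e3, e4] <;> ring
    show (trans (q, d)).1 :: mealyRun trans (trans (q,d)).2 w = dig v :: digits w.length (half v)
    rw [show (trans (q,d)).1 = dig (a.mulVec (lift d) + m) from rfl, hdig]
    congr 1
    rw [run_formula w (trans (q,d)).2, trans_fst q d, trans_stv q d, ← ha, ← hm, hhalf]

noncomputable def gInvertible (g : Gen n) : Invertible (gmat g) :=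
  ⟨ginv g, ginv_mul_gmat g, gmat_mul_ginv g⟩

/-- The affine map `z ↦ (gmat q.1) z + stv q` computed by state `q`. -/
noncomputable def affEquiv (q : StQ n) : Aff n :=
  ((gmat q.1).toLinearEquiv' (gInvertible q.1)).toAffineEquiv.trans
    (AffineEquiv.constVAdd ℤ (Fin n → ℤ) (stv q))

lemma affEquiv_apply (q : StQ n) (z : Fin n → ℤ) :
    affEquiv q z = (gmat q.1).mulVec z + stv q := by
  show AffineEquiv.constVAdd ℤ (Fin n → ℤ) (stv q)
      (((gmat q.1).toLinearEquiv' (gInvertible q.1)).toAffineEquiv z) = _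
  rw [AffineEquiv.constVAdd_apply]
  have h1 : ((gmat q.1).toLinearEquiv' (gInvertible q.1)).toAffineEquiv z
      = (gmat q.1).mulVec z := by
    show ((gmat q.1).toLinearEquiv' (gInvertible q.1)) z = _
    show Matrix.toLin' (gmat q.1) z = _
    exact Matrix.toLin'_apply _ _
  rw [h1, vadd_eq_add]
  abel

lemma num_single (d : Alpha n) : num [d] = lift d := by
  funext i; show lift d i + 2 * 0 = lift d i; ring

lemma Phi_affEquiv_eq_run (q : StQ n) (w : List (Alpha n)) :
    Phi (affEquiv q) w = mealyRun trans q w := by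
  show wordMap (affEquiv q) w = _
  rw [run_formula w q]
  unfold wordMap
  congr 1
  rw [affEquiv_apply]

lemma trans_invertible : MealyInvertible (trans (n := n)) := by
  intro q
  rw [← Finite.injective_iff_bijective]
  intro d d' h
  have h1 : Phi (affEquiv q) [d] = Phi (affEquiv q) [d'] := by
    rw [Phi_affEquiv_eq_run, Phi_affEquiv_eq_run]
    show (trans (q, d)).1 :: _ = (trans (q, d')).1 :: _
    rw [show (trans (q, d)).1 = (trans (q, d')).1 from h]
    show _ :: ([] : List (Alpha n)) = _ :: ([] : List (Alpha n))
    rfl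
  have h2 : ([d] : List (Alpha n)) = [d'] :=
    (Phi (affEquiv q)).injective h1
  exact (List.cons.injEq _ _ _ _ ▸ h2 : _ ∧ _).1

end Automaton

section Generation
variable {n : ℕ}

open Matrix

abbrev GLZ (n : ℕ) := (Matrix (Fin n) (Fin n) ℤ)ˣ

/-- Transvection as a unit. -/
def tunit (i j : Fin n) (h : i ≠ j) (c : ℤ) : GLZ n where
  val := Matrix.transvection i j c
  inv := Matrix.transvection i j (-c)
  val_inv := by
    rw [Matrix.transvection_mul_transvection_same i j h, add_neg_cancel,
      Matrix.transvection_zero]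
  inv_val := by
    rw [Matrix.transvection_mul_transvection_same i j h, neg_add_cancel,
      Matrix.transvection_zero]

def gunit (g : Gen n) : GLZ n where
  val := gmat g
  inv := ginv g
  val_inv := gmat_mul_ginv g
  inv_val := ginv_mul_gmat g

/-- The subgroup generated by the generator units. -/
def Hgl (n : ℕ) : Subgroup (GLZ n) := Subgroup.closure (Set.range (gunit (n := n)))

lemma tunit_one_mem (i j : Fin n) (h : i ≠ j) : tunit i j h 1 ∈ Hgl n := by
  have : tunit i j h 1 = gunit (.inl (i, j)) := by
    apply Units.ext
    show Matrix.transvection i j 1 = gmat (.inl (i, j))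
    simp [gmat, h]
  rw [this]
  exact Subgroup.subset_closure ⟨.inl (i, j), rfl⟩

lemma tunit_mul (i j : Fin n) (h : i ≠ j) (c d : ℤ) :
    tunit i j h c * tunit i j h d = tunit i j h (c + d) :=
  Units.ext (Matrix.transvection_mul_transvection_same i j h c d)

lemma tunit_zero (i j : Fin n) (h : i ≠ j) : tunit i j h 0 = 1 :=
  Units.ext (Matrix.transvection_zero i j)

lemma tunit_zpow (i j : Fin n) (h : i ≠ j) (c : ℤ) :
    tunit i j h c = (tunit i j h 1) ^ c := by
  induction c using Int.induction_on with
  | zero => rw [zpow_zero, tunit_zero]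
  | succ c ih =>
    rw [_root_.zpow_add_one, ← ih, tunit_mul]
  | pred c ih =>
    rw [_root_.zpow_sub_one, ← ih]
    have hinv : (tunit i j h 1)⁻¹ = tunit i j h (-1) := by
      apply Units.ext
      rfl
    rw [hinv, tunit_mul]
    congr 1
    try ring

lemma tunit_mem (i j : Fin n) (h : i ≠ j) (c : ℤ) : tunit i j h c ∈ Hgl n := by
  rw [tunit_zpow i j h c]
  exact zpow_mem (tunit_one_mem i j h) c

lemma dunit_mem (i : Fin n) : gunit (.inr i) ∈ Hgl n :=
  Subgroup.subset_closure ⟨.inr i, rfl⟩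

/-- `A` agrees with the identity on all rows and columns with index `< k`. -/
def blockFrom (k : ℕ) (A : Matrix (Fin n) (Fin n) ℤ) : Prop :=
  ∀ i j : Fin n, (i.val < k ∨ j.val < k) → A i j = if i = j then 1 else 0

lemma col_ne_zero (A : GLZ n) (κ : Fin n) : ∃ i, A.val i κ ≠ 0 := by
  by_contra hcon
  push_neg at hcon
  have h0 : A.val.mulVec (Pi.single κ 1) = 0 := by
    funext i
    rw [Matrix.mulVec_single]
    simp [hcon i]
  have h1 : (A⁻¹).val.mulVec (A.val.mulVec (Pi.single κ 1)) = Pi.single κ 1 := by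
    rw [Matrix.mulVec_mulVec, Units.inv_mul, Matrix.one_mulVec]
  rw [h0] at h1
  have h2 := congrFun h1 κ
  simp [Matrix.mulVec_zero, Pi.single_apply] at h2

lemma emod_natAbs_lt {a b : ℤ} (ha : a ≠ 0) (hb : b ≠ 0) (hba : b.natAbs ≤ a.natAbs) :
    (a % b).natAbs < a.natAbs := by
  have h1 : 0 ≤ a % b := Int.emod_nonneg a hb
  have h2 : a % b < |b| := by
    rcases lt_or_gt_of_ne hb with hneg | hpos
    · have := Int.emod_lt_of_pos a (show 0 < -b by linarith)
      rw [Int.emod_neg] at this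
      rw [abs_of_neg hneg]
      exact this
    · rw [abs_of_pos hpos]
      exact Int.emod_lt_of_pos a hpos
  have h3 : |b| ≤ |a| := by
    rw [Int.abs_eq_natAbs, Int.abs_eq_natAbs]
    exact_mod_cast hba
  have h4 : a % b < |a| := lt_of_lt_of_le h2 h3
  have := Int.natAbs_lt_natAbs_of_nonneg_of_lt h1 h4
  rwa [Int.natAbs_abs] at this

lemma emod_eq_sub (a b : ℤ) : a % b = a + (-(a / b)) * b := by
  have := Int.emod_add_mul_ediv a b
  linarith

/-- Clearing the row `κ` to the right, by column operations. -/
lemma clear_row (κ : Fin n) : ∀ (l : List (Fin n)), κ ∉ l → ∀ A : GLZ n,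
    (∀ i, A.val i κ = if i = κ then 1 else 0) →
    ∃ Q : GLZ n, Q ∈ Hgl n ∧
      ∀ i j, (A.val * Q.val) i j = if i = κ ∧ j ∈ l then 0 else A.val i j
  | [], _, A, _ => ⟨1, one_mem _, by simp⟩
  | j₀ :: l, hnotin, A, hcol => by
    have hκj₀ : κ ≠ j₀ := fun h => hnotin (h ▸ List.mem_cons_self)
    have hκl : κ ∉ l := fun h => hnotin (List.mem_cons_of_mem _ h)
    set c := -(A.val κ j₀) with hc
    set T := tunit κ j₀ hκj₀ c with hT
    set A1 := A * T with hA1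
    have hA1val : A1.val = A.val * Matrix.transvection κ j₀ c := rfl
    have hA1col : ∀ i, A1.val i κ = if i = κ then 1 else 0 := by
      intro i
      rw [hA1val, Matrix.mul_transvection_apply_of_ne κ j₀ i κ hκj₀ c A.val]
      exact hcol i
    obtain ⟨Q', hQ'H, hQ'⟩ := clear_row κ l hκl A1 hA1col
    refine ⟨T * Q', mul_mem (tunit_mem κ j₀ hκj₀ c) hQ'H, ?_⟩
    intro i j
    have hassoc : A.val * (T * Q').val = A1.val * Q'.val := by
      rw [Units.val_mul, ← mul_assoc, hA1val]
      rfl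
    rw [hassoc, hQ' i j]
    by_cases hil : i = κ ∧ j ∈ l
    · rw [if_pos hil, if_pos ⟨hil.1, List.mem_cons_of_mem _ hil.2⟩]
    · rw [if_neg hil]
      by_cases hij : i = κ ∧ j = j₀
      · obtain ⟨hi, hj⟩ := hij
        rw [if_pos ⟨hi, by simp [hj]⟩, hi, hj, hA1val,
          Matrix.mul_transvection_apply_same κ j₀ κ c A.val, hcol κ, if_pos rfl, hc]
        ring
      · have hcons : ¬(i = κ ∧ j ∈ j₀ :: l) := by
          rintro ⟨hi, hj⟩
          rcases List.mem_cons.mp hj with h0 | h0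
          · exact hij ⟨hi, h0⟩
          · exact hil ⟨hi, h0⟩
        rw [if_neg hcons]
        by_cases hjj : j = j₀
        · have hiκ : i ≠ κ := fun hi => hij ⟨hi, hjj⟩
          rw [hjj, hA1val, Matrix.mul_transvection_apply_same κ j₀ i c A.val, hcol i,
            if_neg hiκ]
          ring
        · rw [hA1val, Matrix.mul_transvection_apply_of_ne κ j₀ i j hjj c A.val]

lemma mem_lall {κ j : Fin n} : j ∈ (Finset.univ.erase κ).toList ↔ j ≠ κ := by
  rw [Finset.mem_toList, Finset.mem_erase]
  simp

/-- If the `κ`-th column of `A` is `± e_κ` (up to sign at `κ`) and `A` is block-identity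
before `κ`, then `A ∈ Hgl n`, assuming all block-identities from `κ+1` are in `Hgl n`. -/
lemma finish_col (κ : Fin n)
    (hnext : ∀ B : GLZ n, blockFrom (κ.val + 1) B.val → B ∈ Hgl n)
    (A : GLZ n) (hb : blockFrom κ.val A.val) (hcol : ∀ i, i ≠ κ → A.val i κ = 0) :
    A ∈ Hgl n := by
  -- the corner entry is ±1
  have h1 : ((A⁻¹).val * A.val) κ κ = (1 : Matrix (Fin n) (Fin n) ℤ) κ κ := by
    rw [Units.inv_mul]
  rw [Matrix.mul_apply, Matrix.one_apply_eq] at h1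
  rw [Finset.sum_eq_single κ (fun b _ hbκ => by rw [hcol b hbκ, mul_zero])
    (fun h => absurd (Finset.mem_univ κ) h)] at h1
  have h1' : A.val κ κ * (A⁻¹).val κ κ = 1 := by rw [mul_comm]; exact h1
  have hunit : IsUnit (A.val κ κ) := ⟨⟨_, _, h1', by rw [mul_comm]; exact h1'⟩, rfl⟩
  have hc : A.val κ κ = 1 ∨ A.val κ κ = -1 := Int.isUnit_iff.mp hunit
  suffices hS : ∀ B : GLZ n, blockFrom κ.val B.val →
      (∀ i, B.val i κ = if i = κ then 1 else 0) → B ∈ Hgl n by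
    rcases hc with hc1 | hc1
    · refine hS A hb (fun i => ?_)
      by_cases hi : i = κ
      · rw [if_pos hi, hi, hc1]
      · rw [if_neg hi]; exact hcol i hi
    · set D := gunit (n := n) (.inr κ) with hD
      have hDAval : ∀ i j, (D * A).val i j
          = (if i = κ then (-1 : ℤ) else 1) * A.val i j := by
        intro i j
        have hv : (D * A).val
            = Matrix.diagonal (fun j => if j = κ then (-1:ℤ) else 1) * A.val := rfl
        rw [hv, Matrix.diagonal_mul]
      have hmem : D * A ∈ Hgl n := by
        refine hS (D * A) (fun i j hij => ?_) (fun i => ?_)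
        · rw [hDAval]
          by_cases hi : i = κ
          · have : ¬ i.val < κ.val := by rw [hi]; omega
            have hj : j.val < κ.val := by tauto
            rw [hb i j (Or.inr hj), hi]
            have hjκ : ¬ κ = j := by rintro rfl; omega
            rw [if_neg (fun hh : (κ:Fin n) = j => hjκ hh)]
            simp
          · rw [if_neg hi, one_mul]
            exact hb i j hij
        · rw [hDAval]
          by_cases hi : i = κ
          · rw [if_pos hi, hi, hc1, if_pos rfl]; ring
          · rw [if_neg hi, if_neg hi, hcol i hi, mul_zero]
      have hAeq : A = D⁻¹ * (D * A) := by rw [← mul_assoc, inv_mul_cancel, one_mul]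
      rw [hAeq]
      exact mul_mem (inv_mem (dunit_mem κ)) hmem
  intro B hbB hcolB
  set l := (Finset.univ.erase κ).toList with hl
  have hκl : κ ∉ l := by rw [hl]; intro hin; exact (mem_lall.mp hin) rfl
  obtain ⟨Q, hQH, hQ⟩ := clear_row κ l hκl B hcolB
  have hblock3 : blockFrom (κ.val + 1) (B * Q).val := by
    intro i j hij
    rw [Units.val_mul, hQ i j]
    by_cases h1 : i = κ ∧ j ∈ l
    · rw [if_pos h1]
      have hne : i ≠ j := by
        rw [h1.1]; exact fun hh => (mem_lall.mp h1.2) hh.symm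
      rw [if_neg hne]
    · rw [if_neg h1]
      rcases hij with hi | hj
      · by_cases hik : i.val < κ.val
        · exact hbB i j (Or.inl hik)
        · have hiκ : i = κ := Fin.ext (by omega)
          have hjl : j ∉ l := fun hjl => h1 ⟨hiκ, hjl⟩
          have hjκ : j = κ := by
            by_contra hne
            exact hjl (mem_lall.mpr hne)
          rw [hiκ, hjκ]; exact hcolB κ
      · by_cases hjk : j.val < κ.val
        · exact hbB i j (Or.inr hjk)
        · have hjκ : j = κ := Fin.ext (by omega)
          rw [hjκ]
          exact hcolB i
  have hBQ : B * Q ∈ Hgl n := hnext _ hblock3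
  have hBeq : B = (B * Q) * Q⁻¹ := by rw [mul_inv_cancel_right]
  rw [hBeq]
  exact mul_mem hBQ (inv_mem hQH)

lemma row_ge {κ : Fin n} {A : GLZ n} (hbA : blockFrom κ.val A.val) {p : Fin n}
    (hp : A.val p κ ≠ 0) : κ.val ≤ p.val := by
  by_contra hlt
  push_neg at hlt
  have h := hbA p κ (Or.inl hlt)
  have hne : p ≠ κ := fun h' => by rw [h'] at hlt; omega
  rw [if_neg hne] at h
  exact hp h

/-- The single-nonzero-entry case (after possibly swapping two rows). -/
lemma single_case (κ : Fin n) (hnext : ∀ B : GLZ n, blockFrom (κ.val + 1) B.val → B ∈ Hgl n)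
    (A : GLZ n) (hbA : blockFrom κ.val A.val) (i₀ : Fin n) (hi₀ : A.val i₀ κ ≠ 0)
    (hsig : ∀ i, i ≠ i₀ → A.val i κ = 0) : A ∈ Hgl n := by
  by_cases hiκ : i₀ = κ
  · exact finish_col κ hnext A hbA (fun i hi => hsig i (by rw [hiκ]; exact hi))
  · have hκi₀ : κ ≠ i₀ := fun h => hiκ h.symm
    have hki₀ : κ.val ≤ i₀.val := row_ge hbA hi₀
    set W : GLZ n := tunit κ i₀ hκi₀ 1 * (tunit i₀ κ (Ne.symm hκi₀) (-1) * tunit κ i₀ hκi₀ 1)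
      with hW
    have hWH : W ∈ Hgl n :=
      mul_mem (tunit_mem _ _ _ _) (mul_mem (tunit_mem _ _ _ _) (tunit_mem _ _ _ _))
    have hWAval : (W * A).val = Matrix.transvection κ i₀ 1 *
        (Matrix.transvection i₀ κ (-1) * (Matrix.transvection κ i₀ 1 * A.val)) := by
      rw [hW]
      simp only [Units.val_mul, mul_assoc]
      rfl
    set B1 := Matrix.transvection κ i₀ 1 * A.val with hB1
    set B2 := Matrix.transvection i₀ κ (-1) * B1 with hB2
    have hB1κ : ∀ j, B1 κ j = A.val κ j + A.val i₀ j := fun j => by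
      rw [hB1, Matrix.transvection_mul_apply_same κ i₀ j 1 A.val]; ring
    have hB1o : ∀ i j, i ≠ κ → B1 i j = A.val i j := fun i j hi => by
      rw [hB1, Matrix.transvection_mul_apply_of_ne κ i₀ i j hi 1 A.val]
    have hB2i₀ : ∀ j, B2 i₀ j = -(A.val κ j) := fun j => by
      rw [hB2, Matrix.transvection_mul_apply_same i₀ κ j (-1) B1,
        hB1o i₀ j (Ne.symm hκi₀), hB1κ j]
      ring
    have hB2o : ∀ i j, i ≠ i₀ → B2 i j = B1 i j := fun i j hi => by
      rw [hB2, Matrix.transvection_mul_apply_of_ne i₀ κ i j hi (-1) B1]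
    have hWκ : ∀ j, (W * A).val κ j = A.val i₀ j := fun j => by
      rw [hWAval, Matrix.transvection_mul_apply_same κ i₀ j 1 B2,
        hB2o κ j hκi₀, hB1κ j, hB2i₀ j]
      ring
    have hWi₀ : ∀ j, (W * A).val i₀ j = -(A.val κ j) := fun j => by
      rw [hWAval, Matrix.transvection_mul_apply_of_ne κ i₀ i₀ j (Ne.symm hκi₀) 1 B2,
        hB2i₀ j]
    have hWo : ∀ i j, i ≠ κ → i ≠ i₀ → (W * A).val i j = A.val i j := fun i j h1 h2 => by
      rw [hWAval, Matrix.transvection_mul_apply_of_ne κ i₀ i j h1 1 B2,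
        hB2o i j h2, hB1o i j h1]
    have hblock : blockFrom κ.val (W * A).val := by
      intro i j hij
      by_cases h1 : i = κ
      · have hj : j.val < κ.val := by
          rcases hij with hi | hj
          · exact absurd hi (by rw [h1]; omega)
          · exact hj
        rw [h1, hWκ j]
        have hi₀j : i₀ ≠ j := fun h => by rw [← h] at hj; omega
        have hκj : ¬ (κ = j) := fun h => by rw [← h] at hj; omega
        rw [hbA i₀ j (Or.inr hj), if_neg hi₀j, if_neg hκj]
      · by_cases h2 : i = i₀
        · have hj : j.val < κ.val := by
            rcases hij with hi | hj
            · exact absurd hi (by rw [h2]; omega)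
            · exact hj
          rw [h2, hWi₀ j]
          have hκj : κ ≠ j := fun h => by rw [← h] at hj; omega
          have hi₀j : ¬ (i₀ = j) := fun h => by rw [← h] at hj; omega
          rw [hbA κ j (Or.inr hj), if_neg hκj, if_neg hi₀j]
          ring
        · rw [hWo i j h1 h2]
          exact hbA i j hij
    have hcol : ∀ i, i ≠ κ → (W * A).val i κ = 0 := by
      intro i hi
      by_cases h2 : i = i₀
      · rw [h2, hWi₀ κ, hsig κ hκi₀]
        ring
      · rw [hWo i κ hi h2]
        exact hsig i h2
    have hmem : W * A ∈ Hgl n := finish_col κ hnext (W * A) hblock hcol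
    have hAeq : A = W⁻¹ * (W * A) := by rw [← mul_assoc, inv_mul_cancel, one_mul]
    rw [hAeq]
    exact mul_mem (inv_mem hWH) hmem

lemma reduce (κ : Fin n) (hnext : ∀ B : GLZ n, blockFrom (κ.val + 1) B.val → B ∈ Hgl n) :
    ∀ (s : ℕ) (A : GLZ n), blockFrom κ.val A.val → (∑ i, (A.val i κ).natAbs) ≤ s →
    A ∈ Hgl n := by
  intro s
  induction s with
  | zero =>
    intro A hbA hs
    obtain ⟨i₀, hi₀⟩ := col_ne_zero A κ
    exfalso
    have h0 : (A.val i₀ κ).natAbs = 0 := by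
      have := Finset.sum_eq_zero_iff.mp (Nat.le_zero.mp hs)
      exact this i₀ (Finset.mem_univ i₀)
    exact hi₀ (Int.natAbs_eq_zero.mp h0)
  | succ s ih =>
    intro A hbA hs
    obtain ⟨i₀, hi₀⟩ := col_ne_zero A κ
    by_cases hsig : ∀ i, i ≠ i₀ → A.val i κ = 0
    · exact single_case κ hnext A hbA i₀ hi₀ hsig
    · push_neg at hsig
      obtain ⟨i₁, hi₁ne, hi₁nz⟩ := hsig
      have hstep : ∀ p q : Fin n, p ≠ q → A.val p κ ≠ 0 → A.val q κ ≠ 0 →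
          (A.val q κ).natAbs ≤ (A.val p κ).natAbs → A ∈ Hgl n := by
        intro p q hpq hp hq hle
        set a := A.val p κ with ha
        set b := A.val q κ with hb
        set co := -(a / b) with hco
        set T : GLZ n := tunit p q hpq co with hT
        have hTA : (T * A).val = Matrix.transvection p q co * A.val := rfl
        have hrowp : ∀ j, (T * A).val p j = A.val p j + co * A.val q j := fun j => by
          rw [hTA, Matrix.transvection_mul_apply_same p q j co A.val]
        have hrowo : ∀ i j, i ≠ p → (T * A).val i j = A.val i j := fun i j hi => by
          rw [hTA, Matrix.transvection_mul_apply_of_ne p q i j hi co A.val]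
        have hqk : κ.val ≤ q.val := row_ge hbA hq
        have hpk : κ.val ≤ p.val := row_ge hbA hp
        have hblock : blockFrom κ.val (T * A).val := by
          intro i j hij
          by_cases h1 : i = p
          · have hj : j.val < κ.val := by
              rcases hij with hi | hj
              · exact absurd hi (by rw [h1]; omega)
              · exact hj
            have hpj : ¬ (p = j) := fun h => by rw [← h] at hj; omega
            have hqj : q ≠ j := fun h => by rw [← h] at hj; omega
            rw [h1, hrowp j, hbA p j (Or.inr hj), hbA q j (Or.inr hj),
              if_neg hpj, if_neg hqj]
            ring
          · rw [hrowo i j h1]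
            exact hbA i j hij
        have hentry : (T * A).val p κ = a % b := by
          rw [hrowp κ, emod_eq_sub a b, hco, ha, hb]
        have hlt : ((T * A).val p κ).natAbs < a.natAbs := by
          rw [hentry]
          exact emod_natAbs_lt hp hq hle
        have hsum : (∑ i, ((T * A).val i κ).natAbs) ≤ s := by
          have e1 : ∑ i, ((T * A).val i κ).natAbs
              = ((T * A).val p κ).natAbs + ∑ i ∈ Finset.univ.erase p, ((T * A).val i κ).natAbs :=
            (Finset.add_sum_erase _ _ (Finset.mem_univ p)).symm
          have e2 : ∑ i, (A.val i κ).natAbs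
              = a.natAbs + ∑ i ∈ Finset.univ.erase p, (A.val i κ).natAbs :=
            (Finset.add_sum_erase _ _ (Finset.mem_univ p)).symm
          have e3 : ∑ i ∈ Finset.univ.erase p, ((T * A).val i κ).natAbs
              = ∑ i ∈ Finset.univ.erase p, (A.val i κ).natAbs :=
            Finset.sum_congr rfl (fun i hi => by
              rw [hrowo i κ (Finset.ne_of_mem_erase hi)])
          rw [e2] at hs
          omega
        have hTAH : T * A ∈ Hgl n := ih (T * A) hblock hsum
        have hAeq : A = T⁻¹ * (T * A) := by rw [← mul_assoc, inv_mul_cancel, one_mul]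
        rw [hAeq]
        exact mul_mem (inv_mem (tunit_mem p q hpq co)) hTAH
      rcases le_total (A.val i₀ κ).natAbs (A.val i₁ κ).natAbs with hle | hle
      · exact hstep i₁ i₀ hi₁ne hi₁nz hi₀ hle
      · exact hstep i₀ i₁ (Ne.symm hi₁ne) hi₀ hi₁nz hle

lemma block_one {k : ℕ} (hk : n ≤ k) (A : GLZ n) (hb : blockFrom k A.val) : A = 1 := by
  apply Units.ext
  show A.val = (1 : Matrix (Fin n) (Fin n) ℤ)
  ext i j
  rw [hb i j (Or.inl (lt_of_lt_of_le i.isLt hk)), Matrix.one_apply]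

lemma block_mem : ∀ (d k : ℕ), n ≤ k + d → ∀ A : GLZ n, blockFrom k A.val → A ∈ Hgl n
  | 0, k, hnk, A, hb => by
    rw [block_one (by omega) A hb]; exact one_mem _
  | d + 1, k, hnk, A, hb => by
    by_cases hk : n ≤ k
    · rw [block_one hk A hb]; exact one_mem _
    · push_neg at hk
      have hnext : ∀ B : GLZ n, blockFrom (k + 1) B.val → B ∈ Hgl n :=
        fun B hB => block_mem d (k + 1) (by omega) B hB
      exact reduce ⟨k, hk⟩ hnext (∑ i, (A.val i ⟨k, hk⟩).natAbs) A hb le_rfl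

/-- Every element of `GLₙ(ℤ)` is a product of the generators. -/
lemma hgl_top (A : GLZ n) : A ∈ Hgl n :=
  block_mem n 0 (by omega) A (fun i j h => absurd h (by omega))

end Generation

section Assembly
variable {n : ℕ}

open Matrix

noncomputable def unitInvertible (U : GLZ n) : Invertible U.val :=
  ⟨U.inv, U.inv_val, U.val_inv⟩

/-- Linear action of `GLₙ(ℤ)` by affine equivalences. -/
noncomputable def Psi0 (U : GLZ n) : Aff n :=
  (U.val.toLinearEquiv' (unitInvertible U)).toAffineEquiv

lemma Psi0_apply (U : GLZ n) (z : Fin n → ℤ) : Psi0 U z = U.val.mulVec z := by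
  show Matrix.toLin' U.val z = _
  exact Matrix.toLin'_apply _ _

lemma Psi0_mul (U V : GLZ n) : Psi0 (U * V) = Psi0 U * Psi0 V := by
  apply AffineEquiv.ext
  intro z
  have : (Psi0 U * Psi0 V) z = Psi0 U (Psi0 V z) := rfl
  rw [this, Psi0_apply, Psi0_apply, Psi0_apply, Matrix.mulVec_mulVec]
  rfl

noncomputable def Psi : GLZ n →* Aff n := MonoidHom.mk' Psi0 Psi0_mul

/-- Translation by `v` as an affine equivalence. -/
def tr (v : Fin n → ℤ) : Aff n := AffineEquiv.constVAdd ℤ (Fin n → ℤ) v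

lemma tr_apply (v z : Fin n → ℤ) : tr v z = v + z := rfl

lemma tr_add (v w : Fin n → ℤ) : tr (v + w) = tr v * tr w := by
  apply AffineEquiv.ext
  intro z
  show v + w + z = tr v (tr w z)
  rw [tr_apply, tr_apply]
  ring

lemma tr_zero : tr (0 : Fin n → ℤ) = 1 := by
  apply AffineEquiv.ext
  intro z
  show (0 : Fin n → ℤ) + z = z
  rw [zero_add]

lemma tr_inv (v : Fin n → ℤ) : (tr v)⁻¹ = tr (-v) := by
  symm
  apply eq_inv_of_mul_eq_one_left
  rw [← tr_add, neg_add_cancel, tr_zero]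

lemma tr_zsmul (c : ℤ) (v : Fin n → ℤ) : tr (c • v) = (tr v) ^ c := by
  induction c using Int.induction_on with
  | zero => rw [zpow_zero, zero_smul, tr_zero]
  | succ c ih =>
    rw [_root_.zpow_add_one, ← ih, ← tr_add]
    congr 1
    push_cast
    module
  | pred c ih =>
    rw [_root_.zpow_sub_one, ← ih, tr_inv, ← tr_add]
    congr 1
    push_cast
    module

/-- The subgroup of `Aff n` generated by the state maps. -/
def CA (n : ℕ) : Subgroup (Aff n) := Subgroup.closure (Set.range (affEquiv (n := n)))

def ebase (i : Fin n) : Fin n → ℤ := fun j => if i = j then 1 else 0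

def qtr (i : Fin n) : StQ n :=
  (.inl (i, i), fun j => ⟨ebase i j, by rw [Set.mem_Icc]; unfold ebase; split <;> omega⟩)

def q0 (g : Gen n) : StQ n := (g, fun _ => ⟨0, by rw [Set.mem_Icc]; omega⟩)

lemma affEquiv_qtr (i : Fin n) : affEquiv (qtr i) = tr (ebase i) := by
  apply AffineEquiv.ext
  intro z
  rw [affEquiv_apply, tr_apply]
  have h1 : gmat ((qtr i).1) = 1 := by simp [qtr, gmat]
  have h2 : stv (qtr i) = ebase i := rfl
  rw [h1, h2, Matrix.one_mulVec]
  ring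

lemma affEquiv_q0 (g : Gen n) : affEquiv (q0 g) = Psi (gunit g) := by
  apply AffineEquiv.ext
  intro z
  rw [affEquiv_apply]
  show _ = Psi0 (gunit g) z
  rw [Psi0_apply]
  have h2 : stv (q0 g) = 0 := rfl
  rw [h2]
  show gmat (q0 g).1 *ᵥ z + 0 = gmat g *ᵥ z
  rw [add_zero]
  rfl

lemma tr_mem (m : Fin n → ℤ) : tr m ∈ CA n := by
  have key : ∀ s : Finset (Fin n), ∀ m : Fin n → ℤ,
      tr (∑ i ∈ s, m i • ebase i) ∈ CA n := by
    intro s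
    induction s using Finset.induction with
    | empty => intro m; rw [Finset.sum_empty, tr_zero]; exact one_mem _
    | insert a s hnotin ih =>
      intro m
      rw [Finset.sum_insert hnotin, tr_add]
      refine mul_mem ?_ (ih m)
      rw [tr_zsmul]
      refine zpow_mem ?_ _
      rw [← affEquiv_qtr]
      exact Subgroup.subset_closure ⟨qtr _, rfl⟩
  have hm : m = ∑ i, m i • ebase i := by
    have := pi_eq_sum_univ m
    convert this using 2
    rfl
  rw [hm]
  exact key Finset.univ m

lemma Psi_mem (U : GLZ n) : Psi U ∈ CA n := by
  have h1 : (Hgl n).map (Psi (n := n)) ≤ CA n := by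
    rw [Hgl, MonoidHom.map_closure]
    refine (Subgroup.closure_le _).mpr ?_
    rintro x ⟨y, ⟨g, rfl⟩, rfl⟩
    rw [← affEquiv_q0]
    exact Subgroup.subset_closure ⟨q0 g, rfl⟩
  exact h1 ⟨U, hgl_top U, rfl⟩

/-- The matrix unit attached to the linear part of an affine equivalence. -/
noncomputable def linUnit (f : Aff n) : GLZ n where
  val := LinearMap.toMatrix' (f.linear : (Fin n → ℤ) →ₗ[ℤ] (Fin n → ℤ))
  inv := LinearMap.toMatrix' (f.linear.symm : (Fin n → ℤ) →ₗ[ℤ] (Fin n → ℤ))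
  val_inv := by
    rw [← LinearMap.toMatrix'_comp]
    have : (f.linear : (Fin n → ℤ) →ₗ[ℤ] (Fin n → ℤ)).comp
        (f.linear.symm : (Fin n → ℤ) →ₗ[ℤ] (Fin n → ℤ)) = LinearMap.id :=
      LinearMap.ext fun v => f.linear.apply_symm_apply v
    rw [this, LinearMap.toMatrix'_id]
  inv_val := by
    rw [← LinearMap.toMatrix'_comp]
    have : (f.linear.symm : (Fin n → ℤ) →ₗ[ℤ] (Fin n → ℤ)).comp
        (f.linear : (Fin n → ℤ) →ₗ[ℤ] (Fin n → ℤ)) = LinearMap.id :=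
      LinearMap.ext fun v => f.linear.symm_apply_apply v
    rw [this, LinearMap.toMatrix'_id]

lemma Psi_linUnit (f : Aff n) (z : Fin n → ℤ) : Psi (linUnit f) z = f.linear z := by
  show Psi0 (linUnit f) z = _
  rw [Psi0_apply]
  show (LinearMap.toMatrix' (f.linear : (Fin n → ℤ) →ₗ[ℤ] (Fin n → ℤ))).mulVec z = _
  rw [← Matrix.toLin'_apply, Matrix.toLin'_toMatrix']
  rfl

lemma aff_decomp (f : Aff n) : f = tr (f 0) * Psi (linUnit f) := by
  apply AffineEquiv.ext
  intro z
  have h1 : (tr (f 0) * Psi (linUnit f)) z = tr (f 0) (Psi (linUnit f) z) := rfl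
  rw [h1, Psi_linUnit, tr_apply]
  have h2 : f z = f.linear z +ᵥ f 0 := by
    have h3 : z +ᵥ (0 : Fin n → ℤ) = z := by rw [vadd_eq_add, add_zero]
    conv_lhs => rw [← h3]
    exact f.map_vadd 0 z
  rw [h2, vadd_eq_add]
  ring

lemma CA_top : CA n = ⊤ := by
  rw [Subgroup.eq_top_iff']
  intro f
  rw [aff_decomp f]
  exact mul_mem (tr_mem _) (Psi_mem _)

end Assembly
end BS

/-- Brunner–Sidki: for every `n ≥ 1`, the affine group `ℤⁿ ⋊ GLₙ(ℤ)` — realized as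
the group of affine self-equivalences `z ↦ a z + m` of `ℤⁿ` (`a ∈ GLₙ(ℤ)`,
`m ∈ ℤⁿ`) — is an automata group: there is an invertible Mealy automaton, over a
finite alphabet `A` and with finite state set `Q`, such that the subgroup of
`Sym(A*)` generated by the permutations computed by its states is isomorphic to
`ℤⁿ ⋊ GLₙ(ℤ)`. -/
theorem affine_group_is_automata_group (n : ℕ) (hn : 1 ≤ n) :
    ∃ (A Q : Type) (_ : Fintype A) (_ : Fintype Q)
      (τ : Q × A → A × Q) (ρ : Q → Equiv.Perm (List A)),
      MealyInvertible τ ∧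
      (∀ (q : Q) (w : List A), ρ q w = mealyRun τ q w) ∧
      Nonempty ((Subgroup.closure (Set.range ρ) : Subgroup (Equiv.Perm (List A))) ≃*
        ((Fin n → ℤ) ≃ᵃ[ℤ] (Fin n → ℤ))) := by
  classical
  refine ⟨BS.Alpha n, BS.StQ n, inferInstance, inferInstance, BS.trans,
    fun q => BS.Phi (BS.affEquiv q), BS.trans_invertible, ?_, ?_⟩
  · intro q w
    exact BS.Phi_affEquiv_eq_run q w
  · have hrange : Set.range (fun q => BS.Phi (n := n) (BS.affEquiv q))
        = BS.Phi '' Set.range BS.affEquiv := by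
      rw [← Set.range_comp]
      rfl
    have hclosure : Subgroup.closure (Set.range (fun q => BS.Phi (n := n) (BS.affEquiv q)))
        = (BS.Phi (n := n)).range := by
      rw [hrange, ← MonoidHom.map_closure]
      rw [show Subgroup.closure (Set.range (BS.affEquiv (n := n))) = ⊤ from BS.CA_top]
      exact (MonoidHom.range_eq_map _).symm
    exact ⟨(MulEquiv.subgroupCongr hclosure).trans
      (MonoidHom.ofInjective BS.Phi_injective).symm⟩
end

section
/- Abért: a weakly branch group satisfies no group identity; that is, if G ≤ Aut(A*) is a weakly branch group, then for every k and every nontrivial element w = w(x₁, …, x_k) of the free group F_k, there exist a₁, …, a_k ∈ G such that w(a₁, …, a_k) ≠ 1. -/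
/-- A permutation of `A*` is a tree automorphism if it preserves word length and
prefixes. -/
def IsTreeAut {A : Type*} (g : Equiv.Perm (List A)) : Prop :=
  (∀ w : List A, (g w).length = w.length) ∧
  ∀ u v : List A, (g u) <+: (g (u ++ v))

/-- The restriction (section/state) of a tree automorphism `g` at the vertex `u`, as
a map `A* → A*`: it satisfies `g (u ++ v) = g u ++ (restrictFun g u) v`. -/
def restrictFun {A : Type*} (g : Equiv.Perm (List A)) (u : List A) : List A → List A :=
  fun v => (g (u ++ v)).drop u.length

/-- A subgroup `G ≤ Aut(A*)` is weakly branch if it consists of tree automorphisms,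
acts transitively on each level `Aⁿ`, and contains, for some nontrivial subgroup
`K ≤ G`, all the permutations acting as some `k ∈ K` on the subtree `u A*` and
trivially elsewhere, for every vertex `u`. -/
def WeaklyBranch {A : Type*} (G : Subgroup (Equiv.Perm (List A))) : Prop :=
  (∀ g ∈ G, IsTreeAut g) ∧
  (∀ u v : List A, u.length = v.length → ∃ g ∈ G, (g : Equiv.Perm (List A)) u = v) ∧
  ∃ K : Subgroup (Equiv.Perm (List A)), K ≤ G ∧ K ≠ ⊥ ∧
    ∀ u : List A, ∀ k ∈ K, ∃ g ∈ G,
      (∀ v : List A, (g : Equiv.Perm (List A)) (u ++ v) = u ++ (k : Equiv.Perm (List A)) v) ∧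
      (∀ w : List A, ¬ u <+: w → (g : Equiv.Perm (List A)) w = w)

set_option linter.unusedSectionVars false
set_option maxHeartbeats 1000000

section Helpers
variable {A : Type*}

/-- takes of distinct lengths -/
lemma take_ne_mono {x y : List A} {d e : ℕ} (hde : d ≤ e) (h : x.take d ≠ y.take d) :
    x.take e ≠ y.take e := by
  intro hcon
  apply h
  have : (x.take e).take d = (y.take e).take d := by rw [hcon]
  simpa [List.take_take, Nat.min_eq_left hde] using this

lemma ta_take {g : Equiv.Perm (List A)} (hg : IsTreeAut g) (x : List A) (d : ℕ) :
    (g x).take d = g (x.take d) := by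
  obtain ⟨hlen, hpre⟩ := hg
  have h1 : g (x.take d) <+: g x := by
    conv_rhs => rw [← List.take_append_drop d x]
    exact hpre _ _
  have h2 : g (x.take d) = (g x).take ((g (x.take d)).length) := List.prefix_iff_eq_take.mp h1
  rw [h2, hlen, List.length_take, List.take_eq_take_iff]
  have := hlen x
  omega
end Helpers

section Rigid
variable {A : Type*} {G : Subgroup (Equiv.Perm (List A))}

lemma rigidMove
    (h1 : ∀ g ∈ G, IsTreeAut g)
    (htr : ∀ u v : List A, u.length = v.length → ∃ g ∈ G, (g : Equiv.Perm (List A)) u = v)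
    {σ : Equiv.Perm (List A)} (hσG : σ ∈ G)
    {v0 : List A} (hv0 : σ v0 ≠ v0)
    (hrig : ∀ u : List A, ∃ g ∈ G,
      (∀ v, (g : Equiv.Perm (List A)) (u ++ v) = u ++ σ v) ∧ (∀ w, ¬ u <+: w → g w = w))
    (q : List A) (ℓ : ℕ) (hq : ℓ + v0.length ≤ q.length) :
    ∃ h ∈ G, (∀ w : List A, ¬ q.take ℓ <+: w → h w = w) ∧
      h (q.take ℓ) = q.take ℓ ∧
      h (q.take (ℓ + v0.length)) ≠ q.take (ℓ + v0.length) := by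
  set m := v0.length with hm
  set u := q.take ℓ with hu
  have hulen : u.length = ℓ := by
    rw [hu, List.length_take]; omega
  set s : List A := (q.drop ℓ).take m with hs
  have hslen : s.length = m := by
    rw [hs, List.length_take, List.length_drop]; omega
  have hus : q.take (ℓ + m) = u ++ s := by
    rw [hu, hs, List.take_add]
  obtain ⟨g₂, hg₂G, hg₂⟩ := htr (u ++ v0) (u ++ s)
    (by simp [List.length_append, hslen, hm])
  obtain ⟨g₁, hg₁G, hg₁eq, hg₁fix⟩ := hrig u
  have Tσ := h1 σ hσG
  have T₂ := h1 g₂ hg₂G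
  have T₂' := h1 g₂⁻¹ (G.inv_mem hg₂G)
  -- g₂ u = u
  have g₂u : g₂ u = u := by
    have e1 : (g₂ (u ++ v0)).take ℓ = g₂ ((u ++ v0).take ℓ) := ta_take T₂ _ _
    rw [hg₂, List.take_left' hulen, List.take_left' hulen] at e1
    exact e1.symm
  have g₂u' : g₂⁻¹ u = u := by
    conv_lhs => rw [← g₂u]
    simp
  have σnil : σ ([] : List A) = [] := by
    have := Tσ.1 []
    simpa [List.length_eq_zero_iff] using this
  have g₁u : g₁ u = u := by
    have := hg₁eq []
    simpa [σnil] using this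
  refine ⟨g₂ * g₁ * g₂⁻¹, mul_mem (mul_mem hg₂G hg₁G) (G.inv_mem hg₂G), ?_, ?_, ?_⟩
  · intro w hw
    have hw' : ¬ u <+: g₂⁻¹ w := by
      intro hcon
      apply hw
      have e1 : u = (g₂⁻¹ w).take ℓ := by
        have := List.prefix_iff_eq_take.mp hcon
        rwa [hulen] at this
      have e2 : w.take ℓ = u := by
        have e3 : (g₂ (g₂⁻¹ w)).take ℓ = g₂ ((g₂⁻¹ w).take ℓ) := ta_take T₂ _ _
        simp only [← Equiv.Perm.mul_apply, mul_inv_cancel, Equiv.Perm.one_apply] at e3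
        rw [e3, ← e1, g₂u]
      rw [← e2]
      exact List.take_prefix ℓ w
    simp only [Equiv.Perm.mul_apply]
    rw [hg₁fix _ hw']
    simp
  · simp only [Equiv.Perm.mul_apply]
    rw [g₂u', g₁u, g₂u]
  · rw [hus]
    simp only [Equiv.Perm.mul_apply]
    have e1 : g₂⁻¹ (u ++ s) = u ++ v0 := by
      rw [← hg₂]; simp
    rw [e1, hg₁eq]
    intro hcon
    apply hv0
    have : g₂ (u ++ σ v0) = g₂ (u ++ v0) := by rw [hcon, hg₂]
    have := g₂.injective this
    exact List.append_cancel_left this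
end Rigid

section Key
variable {A : Type*} {ι : Type*} [DecidableEq ι] {G : Subgroup (Equiv.Perm (List A))}

/-- the permutation associated to a letter -/
def cnd (a : ι → Equiv.Perm (List A)) (x : ι × Bool) : Equiv.Perm (List A) :=
  cond x.2 (a x.1) (a x.1)⁻¹

lemma take_eq_mono {x y : List A} {d e : ℕ} (hde : d ≤ e) (h : x.take e = y.take e) :
    x.take d = y.take d := by
  have := congrArg (List.take d) h
  simpa [List.take_take, Nat.min_eq_left hde] using this

lemma ta_take_inj {g : Equiv.Perm (List A)} (hg : IsTreeAut g) {x y : List A} {d : ℕ} :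
    (g x).take d = (g y).take d ↔ x.take d = y.take d := by
  rw [ta_take hg, ta_take hg]
  exact ⟨fun h => g.injective h, fun h => by rw [h]⟩

lemma prod_eval (a : ι → Equiv.Perm (List A)) :
    ∀ (L : List (ι × Bool)) (p : ℕ → List A),
      (∀ j (hj : j < L.length), p (L.length - j) = cnd a (L.get ⟨j, hj⟩) (p (L.length - 1 - j))) →
      (List.prod (L.map fun x => cond x.2 (a x.1) (a x.1)⁻¹)) (p 0) = p L.length := by
  intro L
  induction L with
  | nil => intro p _; simp
  | cons x M ih =>
    intro p hp
    have hM : ∀ j (hj : j < M.length),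
        p (M.length - j) = cnd a (M.get ⟨j, hj⟩) (p (M.length - 1 - j)) := by
      intro j hj
      have h0 := hp (j+1) (by simp; omega)
      simp only [List.length_cons] at h0
      have e1 : M.length + 1 - (j+1) = M.length - j := by omega
      have e2 : M.length + 1 - 1 - (j+1) = M.length - 1 - j := by omega
      rw [e1, e2] at h0
      exact h0
    have h00 := hp 0 (by simp)
    simp only [List.length_cons, Nat.sub_zero, Nat.add_sub_cancel] at h00
    simp only [List.map_cons, List.prod_cons, List.length_cons, Equiv.Perm.mul_apply]
    rw [ih p hM]
    have : (x :: M).get ⟨0, by simp⟩ = x := rfl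
    rw [this] at h00
    rw [h00]
    rfl
end Key

section KeyMain
variable {A : Type*} {ι : Type*} [DecidableEq ι] {G : Subgroup (Equiv.Perm (List A))}

/-- step bound -/
def Cc (n m : ℕ) : ℕ := (n+2)*m + 1
/-- divergence bound at stage t -/
def Bb (n m t : ℕ) : ℕ := t * Cc n m
/-- the level -/
def Nn (n m : ℕ) : ℕ := n * Cc n m + Cc n m

lemma Bb_mono {n m s t : ℕ} (h : s ≤ t) : Bb n m s ≤ Bb n m t :=
  Nat.mul_le_mul_right _ h

lemma key
    (h1 : ∀ g ∈ G, IsTreeAut g)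
    (htr : ∀ u v : List A, u.length = v.length → ∃ g ∈ G, (g : Equiv.Perm (List A)) u = v)
    {σ : Equiv.Perm (List A)} (hσG : σ ∈ G)
    {v0 : List A} (hv0 : σ v0 ≠ v0)
    (hrig : ∀ u : List A, ∃ g ∈ G,
      (∀ v, (g : Equiv.Perm (List A)) (u ++ v) = u ++ σ v) ∧ (∀ w, ¬ u <+: w → g w = w))
    (x₀ : A) (n : ℕ) :
    ∀ L : List (ι × Bool), L.length ≤ n →
    (∀ (L₁ L₂ : List (ι × Bool)) (x : ι) (b : Bool), L ≠ L₁ ++ (x, b) :: (x, !b) :: L₂) →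
    ∃ (a : ι → Equiv.Perm (List A)) (p : ℕ → List A),
      (∀ i, a i ∈ G) ∧
      (∀ t, t ≤ L.length → (p t).length = Nn n v0.length) ∧
      (∀ j (hj : j < L.length),
        p (L.length - j) = cnd a (L.get ⟨j, hj⟩) (p (L.length - 1 - j))) ∧
      (∀ s t, s < t → t ≤ L.length →
        (p s).take (Bb n v0.length L.length) ≠ (p t).take (Bb n v0.length L.length)) := by
  set m := v0.length with hmdef
  intro L
  induction L with
  | nil =>
    intro _ _
    refine ⟨fun _ => 1, fun _ => List.replicate (Nn n m) x₀, fun _ => G.one_mem, ?_, ?_, ?_⟩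
    · intro t _; simp
    · intro j hj; simp at hj
    · intro s t hst ht
      exact absurd (hst.trans_le ht) (by simp)
  | cons x M ih =>
    intro hlen hred
    have hlenM : M.length ≤ n := by simp at hlen; omega
    have hn1 : M.length + 1 ≤ n := by simpa using hlen
    have hredM : ∀ (L₁ L₂ : List (ι × Bool)) (y : ι) (b : Bool),
        M ≠ L₁ ++ (y, b) :: (y, !b) :: L₂ := by
      intro L₁ L₂ y b hM
      exact hred (x :: L₁) L₂ y b (by rw [List.cons_append, hM])
    obtain ⟨a, p, ha, hplen, heq, hdiv⟩ := ih hlenM hredM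
    obtain ⟨i, e⟩ := x
    set A0 := a i with hA0
    have hA0G : A0 ∈ G := ha i
    have hA0' : A0⁻¹ ∈ G := G.inv_mem hA0G
    set Op : Equiv.Perm (List A) := cond e A0 A0⁻¹ with hOp
    have hOpG : Op ∈ G := by cases e <;> simp only [hOp, cond] <;> [exact hA0'; exact hA0G]
    have hOpG' : Op⁻¹ ∈ G := G.inv_mem hOpG
    set q : List A := Op (p M.length) with hqdef
    have hqlen : q.length = Nn n m := by
      rw [hqdef, (h1 _ hOpG).1 (p M.length), hplen M.length le_rfl]
    set B0 := Bb n m M.length with hB0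
    set c := B0 + 1 with hc
    -- choose a good window
    have window : ∃ t₀, t₀ < M.length + 2 ∧ ∀ s, s ≤ M.length →
        ¬ (q.take (c + t₀*m) = (p s).take (c + t₀*m) ∧
           q.take (c + t₀*m + m) ≠ (p s).take (c + t₀*m + m)) := by
      by_contra hcon
      push_neg at hcon
      have hcon' : ∀ t₀, t₀ < M.length + 2 → ∃ s, s ≤ M.length ∧
          (q.take (c + t₀*m) = (p s).take (c + t₀*m) ∧
           q.take (c + t₀*m + m) ≠ (p s).take (c + t₀*m + m)) := by
        intro t₀ ht₀
        obtain ⟨s, hs1, hs2, hs3⟩ := hcon t₀ ht₀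
        exact ⟨s, hs1, hs2, hs3⟩
      classical
      set f : ℕ → ℕ := fun t => if h : t < M.length + 2 then (hcon' t h).choose else 0 with hf
      have hfspec : ∀ t, t < M.length + 2 → f t ≤ M.length ∧
          (q.take (c + t*m) = (p (f t)).take (c + t*m) ∧
           q.take (c + t*m + m) ≠ (p (f t)).take (c + t*m + m)) := by
        intro t ht
        have := (hcon' t ht).choose_spec
        simp only [hf, dif_pos ht]
        exact this
      have hmaps : ∀ t ∈ Finset.range (M.length+2), f t ∈ Finset.range (M.length+1) := by
        intro t ht
        simp only [Finset.mem_range] at ht ⊢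
        have := (hfspec t ht).1
        omega
      obtain ⟨t₁, ht₁, t₂, ht₂, hne, hfeq⟩ :=
        Finset.exists_ne_map_eq_of_card_lt_of_maps_to
          (by simp : (Finset.range (M.length+1)).card < (Finset.range (M.length+2)).card) hmaps
      simp only [Finset.mem_range] at ht₁ ht₂
      have uniq : ∀ u₁ u₂, u₁ < u₂ → u₂ < M.length + 2 → f u₁ = f u₂ → False := by
        intro u₁ u₂ hu hu₂ hfu
        have hb₁ := (hfspec u₁ (by omega)).2
        have hb₂ := (hfspec u₂ hu₂).2
        rw [hfu] at hb₁
        have hle : c + u₁*m + m ≤ c + u₂*m := by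
          have : (u₁+1) * m ≤ u₂ * m := Nat.mul_le_mul_right m (by omega)
          rw [Nat.succ_mul] at this
          omega
        exact hb₁.2 (take_eq_mono hle hb₂.1)
      rcases hne.lt_or_gt with hlt | hlt
      · exact uniq t₁ t₂ hlt ht₂ hfeq
      · exact uniq t₂ t₁ hlt ht₁ hfeq.symm
    obtain ⟨t₀, ht₀, hwin⟩ := window
    set ℓ := c + t₀ * m with hℓ
    have hℓm : ℓ + m ≤ Bb n m (M.length+1) := by
      have h5 : t₀ * m + m ≤ (n+2) * m := by
        have := Nat.mul_le_mul_right m (show t₀ + 1 ≤ n + 2 by omega)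
        rwa [Nat.succ_mul] at this
      have hBs : Bb n m (M.length+1) = Bb n m M.length + ((n+2)*m + 1) := by
        simp only [Bb, Cc, Nat.succ_mul]
      rw [hBs]
      omega
    have hBB : Bb n m (M.length+1) ≤ Bb n m n := Bb_mono hn1
    have hBN : Bb n m n ≤ Nn n m := by
      simp only [Bb, Nn]
      exact Nat.le_add_right _ _
    have hℓN : ℓ + m ≤ Nn n m := by omega
    obtain ⟨h, hhG, hfixO, hufix, hmove⟩ :=
      rigidMove h1 htr hσG hv0 hrig q ℓ (by rw [hqlen]; exact hℓN)
    have Th := h1 h hhG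
    have hfixpt : ∀ y : List A, q.take B0 ≠ y.take B0 → h y = y := by
      intro y hy
      apply hfixO
      intro hpre
      have hlq : (q.take ℓ).length = ℓ := by
        rw [List.length_take]
        have := hqlen
        omega
      have e1 : q.take ℓ = y.take ℓ := by
        have := List.prefix_iff_eq_take.mp hpre
        rwa [hlq] at this
      exact take_ne_mono (show B0 ≤ ℓ by omega) hy e1
    have hnewpt : ∀ s, s ≤ M.length → (h q).take (Bb n m (M.length+1)) ≠ (p s).take (Bb n m (M.length+1)) := by
      intro s hs
      by_cases h3 : q.take (ℓ+m) = (p s).take (ℓ+m)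
      · apply take_ne_mono hℓm
        rw [ta_take Th, ← h3]
        exact hmove
      · by_cases h2 : q.take ℓ = (p s).take ℓ
        · exact absurd ⟨h2, h3⟩ (hwin s hs)
        · apply take_ne_mono (show ℓ ≤ Bb n m (M.length+1) by omega)
          rw [ta_take Th, hufix]
          exact h2
    refine ⟨Function.update a i (cond e (h * A0) (A0 * h⁻¹)),
            Function.update p (M.length+1) (h q), ?_, ?_, ?_, ?_⟩
    · -- membership
      intro j
      by_cases hj : j = i
      · subst hj
        rw [Function.update_self]
        cases e
        · exact mul_mem hA0G (G.inv_mem hhG)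
        · exact mul_mem hhG hA0G
      · rw [Function.update_of_ne hj]
        exact ha j
    · -- lengths
      intro t ht
      simp only [List.length_cons] at ht
      by_cases h4 : t = M.length + 1
      · subst h4
        rw [Function.update_self, Th.1 q, hqlen]
      · rw [Function.update_of_ne h4]
        exact hplen t (by omega)
    · -- equations
      intro j hj
      simp only [List.length_cons] at hj ⊢
      have pold : ∀ t, t ≤ M.length → Function.update p (M.length+1) (h q) t = p t := by
        intro t ht
        exact Function.update_of_ne (by omega) _ _
      cases j with
      | zero =>
        rw [show M.length + 1 - 0 = M.length + 1 from by omega,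
          show M.length + 1 - 1 - 0 = M.length from by omega]
        rw [Function.update_self, pold M.length le_rfl]
        have hget : ((i, e) :: M).get ⟨0, hj⟩ = (i, e) := rfl
        rw [hget]
        cases e
        · -- e = false : new a i = A0 * h⁻¹, cnd _ (i,false) = (A0*h⁻¹)⁻¹ = h * A0⁻¹
          simp only [cnd, cond_true, cond_false, Bool.not_true, Bool.not_false, Function.update_self, mul_inv_rev, inv_inv,
            Equiv.Perm.mul_apply]
          rw [hqdef]
          rfl
        · simp only [cnd, cond_true, cond_false, Bool.not_true, Bool.not_false, Function.update_self, Equiv.Perm.mul_apply]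
          rw [hqdef]
          rfl
      | succ j =>
        have hj' : j < M.length := by omega
        have e1 : M.length + 1 - (j+1) = M.length - j := by omega
        have e2 : M.length + 1 - 1 - (j+1) = M.length - 1 - j := by omega
        rw [e1, e2]
        have hget : ((i, e) :: M).get ⟨j+1, hj⟩ = M.get ⟨j, hj'⟩ := rfl
        rw [hget, pold (M.length-j) (by omega), pold (M.length-1-j) (by omega)]
        have Ej := heq j hj'
        by_cases hyi : (M.get ⟨j, hj'⟩).1 = i
        · by_cases he' : (M.get ⟨j, hj'⟩).2 = e
          · -- same sign letter (i, e)
            have hy3 : M.get ⟨j, hj'⟩ = (i, e) := Prod.ext hyi he'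
            rw [hy3] at Ej ⊢
            have hcndOp : cnd a (i, e) = Op := by cases e <;> rfl
            rw [hcndOp] at Ej
            have hQdiff : q.take B0 ≠ (p (M.length-j)).take B0 := by
              have hd := hdiv (M.length-1-j) M.length (by omega) le_rfl
              rw [hqdef, Ej, Ne, ta_take_inj (h1 _ hOpG)]
              exact fun hcc => hd hcc.symm
            have hfx := hfixpt _ hQdiff
            cases e
            · -- Op = A0⁻¹, new a i = A0 * h⁻¹, cnd _ (i,false) = h * A0⁻¹
              simp only [cnd, cond_true, cond_false, Bool.not_true, Bool.not_false, Function.update_self, mul_inv_rev, inv_inv,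
                Equiv.Perm.mul_apply]
              have : A0⁻¹ (p (M.length-1-j)) = p (M.length-j) := by
                rw [Ej]; rfl
              rw [this, hfx]
            · simp only [cnd, cond_true, cond_false, Bool.not_true, Bool.not_false, Function.update_self, Equiv.Perm.mul_apply]
              have : A0 (p (M.length-1-j)) = p (M.length-j) := by
                rw [Ej]; rfl
              rw [this, hfx]
          · -- opposite sign letter (i, !e)
            have he'' : (M.get ⟨j, hj'⟩).2 = !e := by
              rcases hb2 : (M.get ⟨j, hj'⟩).2 with _ | _ <;> rcases e with _ | _ <;>
                simp_all
            have hy3 : M.get ⟨j, hj'⟩ = (i, !e) := Prod.ext hyi he''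
            have hjne : j ≠ 0 := by
              intro hj0
              subst hj0
              rcases M with _ | ⟨y₀, M'⟩
              · simp at hj'
              · have hy0 : y₀ = (i, !e) := by rw [← hy3]; rfl
                exact hred [] M' i e (by simp [hy0])
            rw [hy3] at Ej ⊢
            have hcndOp : cnd a (i, !e) = Op⁻¹ := by cases e <;> simp [cnd, hOp, hA0]
            rw [hcndOp] at Ej
            have Ej' : p (M.length-1-j) = Op (p (M.length-j)) := by
              rw [Ej]
              simp
            have hQdiff : q.take B0 ≠ (p (M.length-1-j)).take B0 := by
              have hd := hdiv (M.length-j) M.length (by omega) le_rfl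
              rw [hqdef, Ej', Ne, ta_take_inj (h1 _ hOpG)]
              exact fun hcc => hd hcc.symm
            have hfx := hfixpt _ hQdiff
            have hfx' : h⁻¹ (p (M.length-1-j)) = p (M.length-1-j) := by
              conv_lhs => rw [← hfx]
              simp
            cases e
            · -- e = false, letter (i,true): cnd a' (i,true) = a' i = A0 * h⁻¹
              simp only [cnd, cond_true, cond_false, Bool.not_true, Bool.not_false, Function.update_self, Equiv.Perm.mul_apply]
              rw [hfx']
              rw [Ej]
              simp [hOp]
            · -- e = true, letter (i,false): cnd a' (i,false) = (h*A0)⁻¹ = A0⁻¹ * h⁻¹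
              simp only [cnd, cond_true, cond_false, Bool.not_true, Bool.not_false, Function.update_self, mul_inv_rev, inv_inv,
                Equiv.Perm.mul_apply]
              rw [hfx']
              rw [Ej]
              simp [hOp]
        · -- other generator
          have : cnd (Function.update a i (cond e (h * A0) (A0 * h⁻¹))) (M.get ⟨j, hj'⟩)
              = cnd a (M.get ⟨j, hj'⟩) := by
            simp only [cnd, Function.update_of_ne hyi]
          rw [this]
          exact Ej
    · -- divergence
      intro s t hst ht
      simp only [List.length_cons] at ht ⊢
      by_cases h4 : t = M.length + 1
      · subst h4
        rw [Function.update_self, Function.update_of_ne (show s ≠ M.length+1 by omega)]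
        exact fun hcon => hnewpt s (by omega) hcon.symm
      · rw [Function.update_of_ne h4, Function.update_of_ne (show s ≠ M.length+1 by omega)]
        exact take_ne_mono (Bb_mono (Nat.le_succ M.length)) (hdiv s t hst (by omega))
end KeyMain

/-- Abért: a weakly branch group satisfies no group identity. If `G ≤ Aut(A*)` is
weakly branch, then for every `k` and every nontrivial element `w` of the free group
`F_k` there are `a₁, …, a_k ∈ G` with `w(a₁, …, a_k) ≠ 1`. -/
theorem weaklyBranch_satisfies_no_identity {A : Type*} [Fintype A]
    (G : Subgroup (Equiv.Perm (List A))) (hwb : WeaklyBranch G) :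
    ∀ (k : ℕ) (w : FreeGroup (Fin k)), w ≠ 1 →
      ∃ a : Fin k → Equiv.Perm (List A),
        (∀ i : Fin k, a i ∈ G) ∧ FreeGroup.lift a w ≠ 1 := by
  intro k w hw
  obtain ⟨hta, htr, K, hKG, hKne, hrig0⟩ := hwb
  obtain ⟨σ', hσ'⟩ := Subgroup.ne_bot_iff_exists_ne_one.mp hKne
  have hσK : (σ' : Equiv.Perm (List A)) ∈ K := σ'.2
  have hσG : (σ' : Equiv.Perm (List A)) ∈ G := hKG hσK
  have hσ1 : (σ' : Equiv.Perm (List A)) ≠ 1 := by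
    intro hcon
    exact hσ' (Subtype.ext hcon)
  obtain ⟨v0, hv0⟩ : ∃ v, (σ' : Equiv.Perm (List A)) v ≠ v := by
    by_contra hc
    push_neg at hc
    exact hσ1 (Equiv.ext hc)
  have hrig : ∀ u : List A, ∃ g ∈ G,
      (∀ v, (g : Equiv.Perm (List A)) (u ++ v) = u ++ (σ' : Equiv.Perm (List A)) v) ∧
      (∀ w, ¬ u <+: w → g w = w) := fun u => hrig0 u _ hσK
  have hm1 : v0 ≠ [] := by
    intro hnil
    apply hv0
    rw [hnil]
    exact List.length_eq_zero_iff.mp ((hta _ hσG).1 [])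
  set L := FreeGroup.toWord w with hL
  have hLred : ∀ (L₁ L₂ : List (Fin k × Bool)) (x : Fin k) (b : Bool),
      L ≠ L₁ ++ (x, b) :: (x, !b) :: L₂ := by
    intro L₁ L₂ x b hcon
    exact FreeGroup.reduce.not (L₁ := L) (L₂ := L₁) (L₃ := L₂) (x := x) (b := b)
      (by rw [hL, FreeGroup.reduce_toWord]; rw [hL] at hcon; exact hcon)
  obtain ⟨a, p, ha, hplen, heqs, hdiv⟩ :=
    key hta htr hσG hv0 hrig (v0.head hm1) L.length L le_rfl hLred
  refine ⟨a, ha, ?_⟩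
  have hLne : L ≠ [] := fun hnil => hw (FreeGroup.toWord_eq_nil_iff.mp hnil)
  have hlen0 : 0 < L.length := List.length_pos_iff.mpr hLne
  have happ : FreeGroup.lift a w (p 0) = p L.length := by
    conv_lhs => rw [← FreeGroup.mk_toWord (x := w)]
    rw [FreeGroup.lift_mk]
    exact prod_eval a L p heqs
  have hne : p 0 ≠ p L.length := by
    intro hcon
    exact hdiv 0 L.length hlen0 le_rfl (by rw [hcon])
  intro hcon1
  rw [hcon1] at happ
  simp only [Equiv.Perm.one_apply] at happ
  exact hne happ
end
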